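/- arXiv:1801.08250 — 8 statements merged into one kernel-verified Lean document; each statement's English description precedes it below -/
import Mathlib

section
/- Let n ≥ 2, λ > 0, μ < 0, R₀ > 0, and let f ∈ C¹([0,R₀)) ∩ C²((0,R₀)) solve f'' + ((n-1)/r)(1+f'²)f' = (1/λ)(1+f'²)²/(r f' - f) on (0,R₀) with f(0) = μ, f'(0) = 0 and r f'(r) > f(r) on [0,R₀). Then lim_{r→0⁺} f''(r) = 1/(n λ |μ|). -/
open Set Filter intervalIntegral Real
open Topology

/-- `f` is a `C¹([0,R₀)) ∩ C²((0,R₀))` solution of the radially symmetric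
self-similar inverse mean curvature flow ODE
`f'' + ((n-1)/r)(1+f'²)f' = (1/λ)(1+f'²)²/(r f' - f)`
with `f(0) = μ`, `f'(0) = 0` and `r f'(r) - f(r) > 0` on `[0,R₀)`. -/
def IsIMCFSol (n : ℕ) (lam mu R₀ : ℝ) (f : ℝ → ℝ) : Prop :=
  ContinuousOn f (Set.Ico 0 R₀) ∧
  ContinuousOn (deriv f) (Set.Ico 0 R₀) ∧
  (∀ r ∈ Set.Ioo 0 R₀, DifferentiableAt ℝ f r) ∧
  (∀ r ∈ Set.Ioo 0 R₀, DifferentiableAt ℝ (deriv f) r) ∧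
  ContinuousOn (deriv (deriv f)) (Set.Ioo 0 R₀) ∧
  (∀ r ∈ Set.Ioo 0 R₀,
    deriv (deriv f) r + ((n : ℝ) - 1) / r * (1 + (deriv f r) ^ 2) * deriv f r
      = 1 / lam * (1 + (deriv f r) ^ 2) ^ 2 / (r * deriv f r - f r)) ∧
  f 0 = mu ∧ deriv f 0 = 0 ∧
  (∀ r ∈ Set.Ico 0 R₀, r * deriv f r - f r > 0)

private noncomputable def Qf (lam : ℝ) (f : ℝ → ℝ) (r : ℝ) : ℝ :=
  1 / lam * (1 + deriv f r ^ 2) ^ 2 / (r * deriv f r - f r)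

private noncomputable def rhof (lam : ℝ) (f : ℝ → ℝ) (r : ℝ) : ℝ :=
  Qf lam f r / Real.sqrt (1 + deriv f r ^ 2) ^ 3

private noncomputable def vf (k : ℕ) (f : ℝ → ℝ) (s : ℝ) : ℝ :=
  s ^ (k + 1) * (deriv f s / Real.sqrt (1 + deriv f s ^ 2))

/-- Comparison lemma: if `|F'| ≤ φ'` on `(0,r)` and `F 0 = 0 = φ 0`, then `|F r| ≤ φ r`. -/
private lemma abs_le_of_abs_deriv_le {F φ F' φ' : ℝ → ℝ} {r : ℝ} (hr : 0 < r)
    (hFc : ContinuousOn F (Set.Icc 0 r)) (hF0 : F 0 = 0)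
    (hφc : ContinuousOn φ (Set.Icc 0 r)) (hφ0 : φ 0 = 0)
    (hFd : ∀ s ∈ Set.Ioo 0 r, HasDerivAt F (F' s) s)
    (hφd : ∀ s ∈ Set.Ioo 0 r, HasDerivAt φ (φ' s) s)
    (hle : ∀ s ∈ Set.Ioo 0 r, |F' s| ≤ φ' s) : |F r| ≤ φ r := by
  have hmem0 : (0:ℝ) ∈ Set.Icc 0 r := ⟨le_refl _, hr.le⟩
  have hmemr : r ∈ Set.Icc (0:ℝ) r := ⟨hr.le, le_refl _⟩
  have mono1 : MonotoneOn (fun s => φ s - F s) (Set.Icc 0 r) := by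
    apply monotoneOn_of_deriv_nonneg (convex_Icc _ _) (hφc.sub hFc)
    · rw [interior_Icc]
      intro s hs
      exact ((hφd s hs).sub (hFd s hs)).differentiableAt.differentiableWithinAt
    · rw [interior_Icc]
      intro s hs
      rw [((hφd s hs).sub (hFd s hs)).deriv]
      have := hle s hs
      have := abs_le.mp this
      linarith [this.2]
  have mono2 : MonotoneOn (fun s => φ s + F s) (Set.Icc 0 r) := by
    apply monotoneOn_of_deriv_nonneg (convex_Icc _ _) (hφc.add hFc)
    · rw [interior_Icc]
      intro s hs
      exact ((hφd s hs).add (hFd s hs)).differentiableAt.differentiableWithinAt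
    · rw [interior_Icc]
      intro s hs
      rw [((hφd s hs).add (hFd s hs)).deriv]
      have := abs_le.mp (hle s hs)
      linarith [this.1]
  have h1 := mono1 hmem0 hmemr hr.le
  have h2 := mono2 hmem0 hmemr hr.le
  simp only [hF0, hφ0, add_zero, sub_zero] at h1 h2
  rw [abs_le]
  constructor <;> linarith

/-- The key derivative identity: `v(s) = s^(k+1) f'(s)/√(1+f'(s)²)` satisfies
`v'(s) = s^(k+1) ρ(s)` where `ρ = Q/(1+f'²)^(3/2)`. -/
private lemma vf_hasDerivAt {lam : ℝ} {f : ℝ → ℝ} {k : ℕ} {s : ℝ} (hs0 : 0 < s)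
    (hd : DifferentiableAt ℝ (deriv f) s)
    (hode : deriv (deriv f) s + ((k:ℝ) + 1) / s * (1 + deriv f s ^ 2) * deriv f s
      = Qf lam f s) :
    HasDerivAt (vf k f) (s ^ (k + 1) * rhof lam f s) s := by
  have hd1 : HasDerivAt (deriv f) (deriv (deriv f) s) s := hd.hasDerivAt
  set a := deriv f s with ha
  set a' := deriv (deriv f) s with ha'
  have hpos : (0:ℝ) < 1 + a ^ 2 := by positivity
  set S := Real.sqrt (1 + a ^ 2) with hS
  have hSpos : 0 < S := Real.sqrt_pos.mpr hpos
  have hS2 : S ^ 2 = 1 + a ^ 2 := Real.sq_sqrt hpos.le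
  have hg : HasDerivAt (fun x => 1 + deriv f x ^ 2) (2 * a * a') s := by
    have := (hd1.pow 2).const_add 1
    simpa using this
  have hsq : HasDerivAt (fun x => Real.sqrt (1 + deriv f x ^ 2)) (1 / (2 * S) * (2 * a * a')) s := by
    have := (Real.hasDerivAt_sqrt hpos.ne').comp s hg
    simpa [Function.comp_def, hS] using this
  have hdiv : HasDerivAt (fun x => deriv f x / Real.sqrt (1 + deriv f x ^ 2))
      ((a' * S - a * (1 / (2 * S) * (2 * a * a'))) / S ^ 2) s := by
    exact hd1.div hsq hSpos.ne'
  have hmul : HasDerivAt (vf k f)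
      ((↑(k + 1) * s ^ k) * (a / S)
        + s ^ (k + 1) * ((a' * S - a * (1 / (2 * S) * (2 * a * a'))) / S ^ 2)) s :=
    (hasDerivAt_pow (k + 1) s).mul hdiv
  convert hmul using 1
  have hQ : a' = Qf lam f s - ((k:ℝ) + 1) / s * S ^ 2 * a := by
    rw [hS2]; linarith [hode]
  rw [rhof, ← hS, hQ]
  have hsk : s ^ (k + 1) = s ^ k * s := pow_succ s k
  field_simp
  push_cast
  linear_combination (-(s^(k+1)*(Qf lam f s*s - S^2*a*((k:ℝ)+1)))) * hS2

/-- `lim_{r→0⁺} f''(r) = 1/(n λ |μ|)`. -/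
theorem imcf_second_deriv_limit_at_zero (n : ℕ) (hn : 2 ≤ n)
    (lam mu R₀ : ℝ) (hlam : 0 < lam) (hmu : mu < 0) (hR₀ : 0 < R₀)
    (f : ℝ → ℝ) (hf : IsIMCFSol n lam mu R₀ f) :
    Filter.Tendsto (deriv (deriv f)) (nhdsWithin 0 (Set.Ioi 0))
      (nhds (1 / ((n : ℝ) * lam * |mu|))) := by
  obtain ⟨hfc, hhc, hfd, hhd, hddc, hode, hf0, hh0, hposd⟩ := hf
  obtain ⟨k, rfl⟩ : ∃ k, n = k + 2 := ⟨n - 2, by omega⟩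
  set l := nhdsWithin (0:ℝ) (Set.Ioi 0) with hl
  have h0mem : (0:ℝ) ∈ Set.Ico 0 R₀ := ⟨le_refl _, hR₀⟩
  have hIco : Set.Ico (0:ℝ) R₀ ∈ l :=
    mem_of_superset (Ioo_mem_nhdsGT_of_mem h0mem) Set.Ioo_subset_Ico_self
  have hlle : l ≤ nhdsWithin 0 (Set.Ico 0 R₀) := nhdsWithin_le_iff.mpr hIco
  have htf : Tendsto f l (𝓝 mu) := by
    have h1 : Tendsto f (nhdsWithin 0 (Set.Ico 0 R₀)) (𝓝 (f 0)) := hfc 0 h0mem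
    rw [hf0] at h1
    exact h1.mono_left hlle
  have hth : Tendsto (deriv f) l (𝓝 0) := by
    have h1 : Tendsto (deriv f) (nhdsWithin 0 (Set.Ico 0 R₀)) (𝓝 (deriv f 0)) := hhc 0 h0mem
    rw [hh0] at h1
    exact h1.mono_left hlle
  have hid : Tendsto (fun r : ℝ => r) l (𝓝 0) := tendsto_id.mono_right nhdsWithin_le_nhds
  have hone : Tendsto (fun r => 1 + deriv f r ^ 2) l (𝓝 1) := by
    have := tendsto_const_nhds (x := (1:ℝ)) (f := l) |>.add (hth.pow 2)
    simpa using this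
  have hSs : Tendsto (fun r => Real.sqrt (1 + deriv f r ^ 2)) l (𝓝 1) := by
    have := (Real.continuous_sqrt.tendsto 1).comp hone
    simpa [Function.comp_def] using this
  have hmu' : (0:ℝ) < -mu := neg_pos.mpr hmu
  have hden : Tendsto (fun r => r * deriv f r - f r) l (𝓝 (-mu)) := by
    have := (hid.mul hth).sub htf
    simpa using this
  set c : ℝ := 1 / lam / (-mu) with hc
  have hQt : Tendsto (Qf lam f) l (𝓝 c) := by
    have h1 : Tendsto (fun r => 1 / lam * (1 + deriv f r ^ 2) ^ 2 / (r * deriv f r - f r)) l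
        (𝓝 (1 / lam * 1 ^ 2 / (-mu))) :=
      (tendsto_const_nhds (x := 1/lam) (f := l)|>.mul (hone.pow 2)).div hden hmu'.ne'
    have h2 : Qf lam f = fun r => 1 / lam * (1 + deriv f r ^ 2) ^ 2 / (r * deriv f r - f r) := rfl
    rw [h2, hc]
    convert h1 using 2
    norm_num
  have hrt : Tendsto (rhof lam f) l (𝓝 c) := by
    have := hQt.div (hSs.pow 3) (by norm_num : (1:ℝ)^3 ≠ 0)
    rw [one_pow, div_one] at this
    exact this
  -- the ODE in the form used by `vf_hasDerivAt`
  have hodeQ : ∀ s ∈ Set.Ioo 0 R₀,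
      deriv (deriv f) s + ((k:ℝ) + 1) / s * (1 + deriv f s ^ 2) * deriv f s = Qf lam f s := by
    intro s hs
    have := hode s hs
    push_cast at this
    rw [Qf]
    convert this using 3 <;> push_cast <;> ring
  -- main step : f'(r)/r → c/(k+2) via the auxiliary function vf
  have hvlim : Tendsto (fun r => vf k f r / r ^ (k + 2)) l (𝓝 (c / ((k:ℝ) + 2))) := by
    rw [hl, Metric.tendsto_nhdsWithin_nhds]
    intro ε hε
    obtain ⟨δ₁, hδ₁, hδ⟩ := Metric.tendsto_nhdsWithin_nhds.mp hrt (ε/2) (by positivity)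
    refine ⟨min δ₁ R₀, lt_min hδ₁ hR₀, ?_⟩
    intro r hrIoi hrd
    have hr0 : 0 < r := hrIoi
    rw [Real.dist_eq, sub_zero, abs_of_pos hr0] at hrd
    have hrδ₁ : r < δ₁ := lt_of_lt_of_le hrd (min_le_left _ _)
    have hrR : r < R₀ := lt_of_lt_of_le hrd (min_le_right _ _)
    have hsub : Set.Icc 0 r ⊆ Set.Ico 0 R₀ := fun x hx => ⟨hx.1, lt_of_le_of_lt hx.2 hrR⟩
    have hSne : ∀ x : ℝ, Real.sqrt (1 + deriv f x ^ 2) ≠ 0 :=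
      fun x => ne_of_gt (Real.sqrt_pos.mpr (by positivity))
    have hvcont : ContinuousOn (vf k f) (Set.Icc 0 r) := by
      show ContinuousOn (fun s => s ^ (k + 1) * (deriv f s / Real.sqrt (1 + deriv f s ^ 2)))
        (Set.Icc 0 r)
      exact (continuous_pow (k+1)).continuousOn.mul
        ((hhc.mono hsub).div
          (Real.continuous_sqrt.comp_continuousOn
            (continuousOn_const.add ((hhc.mono hsub).pow 2)))
          (fun x _ => hSne x))
    have key : |vf k f r - c * r ^ (k + 2) / ((k:ℝ) + 2)| ≤ ε/2 * r ^ (k + 2) / ((k:ℝ) + 2) := by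
      apply abs_le_of_abs_deriv_le (F' := fun s => s ^ (k+1) * (rhof lam f s - c))
          (φ' := fun s => ε/2 * s ^ (k+1)) hr0
      · exact hvcont.sub ((continuousOn_const.mul ((continuous_pow (k+2)).continuousOn)).div_const _)
      · norm_num [vf, zero_pow (by omega : k+1 ≠ 0), zero_pow (by omega : k+2 ≠ 0)]
      · exact (continuousOn_const.mul ((continuous_pow (k+2)).continuousOn)).div_const _
      · norm_num [zero_pow (by omega : k+2 ≠ 0)]
      · intro s hs
        have hsR : s ∈ Set.Ioo 0 R₀ := ⟨hs.1, hs.2.trans hrR⟩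
        have hv := vf_hasDerivAt hs.1 (hhd s hsR) (hodeQ s hsR)
        have := hv.sub (((hasDerivAt_pow (k+2) s).const_mul c).div_const ((k:ℝ)+2))
        refine this.congr_deriv ?_
        rw [show k + 2 - 1 = k + 1 by omega]
        push_cast
        have hk2 : ((k:ℝ) + 2) ≠ 0 := by positivity
        field_simp
      · intro s hs
        have := ((hasDerivAt_pow (k+2) s).const_mul (ε/2)).div_const ((k:ℝ)+2)
        refine this.congr_deriv ?_
        rw [show k + 2 - 1 = k + 1 by omega]
        push_cast
        have hk2 : ((k:ℝ) + 2) ≠ 0 := by positivity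
        field_simp
      · intro s hs
        have hsd : dist s 0 < δ₁ := by
          rw [Real.dist_eq, sub_zero, abs_of_pos hs.1]
          exact hs.2.trans hrδ₁
        have h1 := hδ hs.1 hsd
        rw [Real.dist_eq] at h1
        rw [abs_mul, abs_pow, abs_of_pos hs.1]
        calc s ^ (k+1) * |rhof lam f s - c| ≤ s ^ (k+1) * (ε/2) := by
              apply mul_le_mul_of_nonneg_left h1.le (pow_nonneg hs.1.le _)
          _ = ε/2 * s ^ (k+1) := by ring
    -- convert to the limit statement
    have hrpow : (0:ℝ) < r ^ (k + 2) := by positivity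
    have heq : vf k f r / r ^ (k + 2) - c / ((k:ℝ) + 2)
        = (vf k f r - c * r ^ (k + 2) / ((k:ℝ) + 2)) / r ^ (k + 2) := by
      field_simp
    rw [Real.dist_eq, heq, abs_div, abs_of_pos hrpow]
    have h2 : |vf k f r - c * r ^ (k + 2) / ((k:ℝ) + 2)| / r ^ (k + 2)
        ≤ (ε/2 * r ^ (k + 2) / ((k:ℝ) + 2)) / r ^ (k + 2) := by gcongr
    have h3 : (ε/2 * r ^ (k + 2) / ((k:ℝ) + 2)) / r ^ (k + 2) = ε/2/((k:ℝ)+2) := by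
      field_simp
    have h4 : ε/2/((k:ℝ)+2) ≤ ε/2 := by
      apply div_le_self (by positivity)
      have : (0:ℝ) ≤ (k:ℝ) := Nat.cast_nonneg k
      linarith
    calc |vf k f r - c * r ^ (k + 2) / ((k:ℝ) + 2)| / r ^ (k + 2)
        ≤ ε/2/((k:ℝ)+2) := h3 ▸ h2
      _ ≤ ε/2 := h4
      _ < ε := half_lt_self hε
  -- hence f'(r)/r → c/(k+2)
  have hhr : Tendsto (fun r => deriv f r / r) l (𝓝 (c / ((k:ℝ) + 2))) := by
    have h1 := hvlim.mul hSs
    rw [mul_one] at h1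
    apply h1.congr'
    filter_upwards [self_mem_nhdsWithin] with r hr
    have hr0 : (r:ℝ) ≠ 0 := ne_of_gt hr
    have hSne : Real.sqrt (1 + deriv f r ^ 2) ≠ 0 :=
      ne_of_gt (Real.sqrt_pos.mpr (by positivity))
    simp only [vf]
    field_simp
    ring
  -- conclude
  have hfinal : Tendsto (deriv (deriv f)) l
      (𝓝 (c - ((k:ℝ)+1) * 1 * (c / ((k:ℝ) + 2)))) := by
    have h1 : Tendsto (fun r => Qf lam f r - (((k:ℝ)+1) * (1 + deriv f r ^ 2)) * (deriv f r / r)) l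
        (𝓝 (c - (((k:ℝ)+1) * 1) * (c / ((k:ℝ) + 2)))) :=
      hQt.sub ((tendsto_const_nhds.mul hone).mul hhr)
    apply h1.congr'
    filter_upwards [Ioo_mem_nhdsGT_of_mem h0mem] with r hr
    have hr0 : (r:ℝ) ≠ 0 := ne_of_gt hr.1
    have h2 := hodeQ r hr
    have e : (((k:ℝ)+1) * (1 + deriv f r ^ 2)) * (deriv f r / r)
        = ((k:ℝ)+1) / r * (1 + deriv f r ^ 2) * deriv f r := by
      field_simp
    rw [e]
    linarith [h2]
  have e1 : c - ((k:ℝ)+1) * 1 * (c / ((k:ℝ)+2)) = c / ((k:ℝ)+2) := by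
    have hk2 : ((k:ℝ) + 2) ≠ 0 := by positivity
    field_simp
    ring
  convert hfinal using 2
  rw [e1, hc, abs_of_neg hmu]
  push_cast
  rw [div_div, div_div]
  congr 1
  ring
end

section
/- Let n ≥ 2, λ > 0, μ < 0, R₀ > 0, and let f ∈ C¹([0,R₀)) ∩ C²((0,R₀)) solve f'' + ((n-1)/r)(1+f'²)f' = (1/λ)(1+f'²)²/(r f' - f) on (0,R₀) with f(0) = μ, f'(0) = 0 and r f'(r) > f(r) on [0,R₀). Then lim_{r→0⁺} f'(r)/r = 1/(n λ |μ|). -/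
open Set Filter intervalIntegral Real

lemma hasDerivAt_div_sqrt (x : ℝ) :
    HasDerivAt (fun y : ℝ => y / Real.sqrt (1 + y ^ 2))
      (1 / ((1 + x ^ 2) * Real.sqrt (1 + x ^ 2))) x := by
  have h1 : (0:ℝ) < 1 + x ^ 2 := by positivity
  have hs : (0:ℝ) < Real.sqrt (1 + x ^ 2) := Real.sqrt_pos.2 h1
  have hinner : HasDerivAt (fun y : ℝ => 1 + y ^ 2) (2 * x) x := by
    simpa using ((hasDerivAt_pow 2 x).const_add 1)
  have hsq : HasDerivAt (fun y : ℝ => Real.sqrt (1 + y ^ 2))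
      (x / Real.sqrt (1 + x ^ 2)) x := by
    have := (Real.hasDerivAt_sqrt (ne_of_gt h1)).comp x hinner
    refine this.congr_deriv ?_
    symm
    field_simp
  have hdiv := (hasDerivAt_id x).div hsq (ne_of_gt hs)
  refine hdiv.congr_deriv ?_
  symm
  have hss : Real.sqrt (1 + x ^ 2) ^ 2 = 1 + x ^ 2 := Real.sq_sqrt h1.le
  field_simp
  rw [id, hss]
  ring


set_option maxHeartbeats 1000000 in
/-- `lim_{r→0⁺} f'(r)/r = 1/(n λ |μ|)`. -/
theorem imcf_deriv_over_r_limit_at_zero (n : ℕ) (hn : 2 ≤ n)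
    (lam mu R₀ : ℝ) (hlam : 0 < lam) (hmu : mu < 0) (hR₀ : 0 < R₀)
    (f : ℝ → ℝ) (hf : IsIMCFSol n lam mu R₀ f) :
    Filter.Tendsto (fun r => deriv f r / r) (nhdsWithin 0 (Set.Ioi 0))
      (nhds (1 / ((n : ℝ) * lam * |mu|))) := by
  obtain ⟨hfc, huc, hfd, hud, -, hode, hf0, hu0, hpos⟩ := hf
  set u := deriv f with hu_def
  have hnR : (0:ℝ) < n := by positivity
  -- the auxiliary function H
  set H : ℝ → ℝ := fun r => Real.sqrt (1 + (u r) ^ 2) / (lam * (r * u r - f r)) with hH_def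
  have hHcont : ContinuousOn H (Set.Ico 0 R₀) := by
    apply ContinuousOn.div
    · exact (continuousOn_const.add (huc.pow 2)).sqrt
    · exact continuousOn_const.mul ((continuousOn_id.mul huc).sub hfc)
    · intro r hr
      exact ne_of_gt (mul_pos hlam (hpos r hr))
  have hH0 : H 0 = 1 / (lam * (-mu)) := by
    simp [hH_def, hu0, hf0]
  -- derivative of G
  have hGderiv : ∀ r ∈ Set.Ioo 0 R₀,
      HasDerivAt (fun y => y ^ (n-1) * (u y / Real.sqrt (1 + (u y) ^ 2)))
        (r ^ (n-1) * H r) r := by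
    intro r hr
    have hr0 : 0 < r := hr.1
    have hrIco : r ∈ Set.Ico 0 R₀ := ⟨hr0.le, hr.2⟩
    have hd : 0 < r * u r - f r := hpos r hrIco
    have hx1 : (0:ℝ) < 1 + (u r)^2 := by positivity
    have hs : (0:ℝ) < Real.sqrt (1 + (u r)^2) := Real.sqrt_pos.2 hx1
    have hss : Real.sqrt (1 + (u r)^2) ^ 2 = 1 + (u r)^2 := Real.sq_sqrt hx1.le
    have hu' : HasDerivAt u (deriv u r) r := (hud r hr).hasDerivAt
    have hODE : deriv u r = 1 / lam * (1 + (u r)^2)^2 / (r * u r - f r)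
        - ((n:ℝ) - 1) / r * (1 + (u r)^2) * u r := by
      have := hode r hr; linarith
    have hφ : HasDerivAt (fun y => u y / Real.sqrt (1 + (u y)^2))
        (1 / ((1 + (u r)^2) * Real.sqrt (1 + (u r)^2)) * deriv u r) r :=
      (hasDerivAt_div_sqrt (u r)).comp r hu'
    have hpow : HasDerivAt (fun y : ℝ => y ^ (n-1)) (((n:ℝ)-1) * r ^ (n-2)) r := by
      have h := hasDerivAt_pow (n-1) r
      have e1 : n - 1 - 1 = n - 2 := by omega
      have e2 : ((n-1 : ℕ) : ℝ) = (n:ℝ) - 1 := by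
        have h1 : (1:ℕ) ≤ n := by omega
        push_cast [Nat.cast_sub h1]; ring
      rw [e1, e2] at h
      exact h
    have hprod := hpow.mul hφ
    refine hprod.congr_deriv ?_
    symm
    rw [hODE, hH_def]
    have hrn : r ^ (n-1) = r ^ (n-2) * r := by
      rw [← pow_succ]; congr 1; omega
    rw [hrn]
    have h1 : Real.sqrt (1 + (u r)^2) ≠ 0 := hs.ne'
    have h2 : lam ≠ 0 := hlam.ne'
    have h3 : r ≠ 0 := hr0.ne'
    have h4 : r * u r - f r ≠ 0 := hd.ne'
    field_simp
    linear_combination r * hss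
  -- continuity of G
  have hGcont : ContinuousOn (fun y => y ^ (n-1) * (u y / Real.sqrt (1 + (u y) ^ 2)))
      (Set.Ico 0 R₀) := by
    apply ContinuousOn.mul
    · exact (continuous_pow (n-1)).continuousOn
    · apply ContinuousOn.div huc ((continuousOn_const.add (huc.pow 2)).sqrt)
      intro r hr
      have : (0:ℝ) < 1 + (u r)^2 := by positivity
      exact (Real.sqrt_pos.2 this).ne'
  have hG0 : (0:ℝ) ^ (n-1) * (u 0 / Real.sqrt (1 + (u 0) ^ 2)) = 0 := by
    simp [hu0]
  -- FTC
  have hFTC : ∀ b ∈ Set.Ioo 0 R₀, (∫ s in (0:ℝ)..b, s ^ (n-1) * H s)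
      = b ^ (n-1) * (u b / Real.sqrt (1 + (u b) ^ 2)) := by
    intro b hb
    have hsub : Set.Icc (0:ℝ) b ⊆ Set.Ico 0 R₀ :=
      fun x hx => ⟨hx.1, lt_of_le_of_lt hx.2 hb.2⟩
    have hint : IntervalIntegrable (fun s => s ^ (n-1) * H s) MeasureTheory.volume 0 b := by
      apply ContinuousOn.intervalIntegrable
      rw [Set.uIcc_of_le hb.1.le]
      exact ((continuous_pow (n-1)).continuousOn).mul (hHcont.mono hsub)
    have h := intervalIntegral.integral_eq_sub_of_hasDeriv_right_of_le hb.1.le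
      (hGcont.mono hsub)
      (fun x hx => ((hGderiv x ⟨hx.1, lt_trans hx.2 hb.2⟩).hasDerivWithinAt)) hint
    rw [h, hG0, sub_zero]
  -- limit of the averaged integral
  have hTlim : Tendsto (fun r => (∫ s in (0:ℝ)..r, s ^ (n-1) * H s) / r ^ n)
      (nhdsWithin 0 (Set.Ioi 0)) (nhds (H 0 / n)) := by
    rw [Metric.tendsto_nhdsWithin_nhds]
    intro ε hε
    have hHc0 : ContinuousWithinAt H (Set.Ico 0 R₀) 0 := hHcont 0 ⟨le_refl 0, hR₀⟩
    rw [Metric.continuousWithinAt_iff] at hHc0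
    obtain ⟨δ₁, hδ₁, hδ⟩ := hHc0 (ε/2) (by positivity)
    refine ⟨min δ₁ R₀, by positivity, ?_⟩
    intro r hrI hrd
    have hrpos : 0 < r := hrI
    rw [Real.dist_eq, sub_zero, abs_of_pos hrpos] at hrd
    have hrR : r < R₀ := lt_of_lt_of_le hrd (min_le_right _ _)
    have hrδ : r < δ₁ := lt_of_lt_of_le hrd (min_le_left _ _)
    have hsubr : Set.Icc (0:ℝ) r ⊆ Set.Ico 0 R₀ :=
      fun x hx => ⟨hx.1, lt_of_le_of_lt hx.2 hrR⟩
    have hint1 : IntervalIntegrable (fun s => s ^ (n-1) * H s) MeasureTheory.volume 0 r := by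
      apply ContinuousOn.intervalIntegrable
      rw [Set.uIcc_of_le hrpos.le]
      exact ((continuous_pow (n-1)).continuousOn).mul (hHcont.mono hsubr)
    have hint2 : IntervalIntegrable (fun s => s ^ (n-1) * H 0) MeasureTheory.volume 0 r :=
      (Continuous.intervalIntegrable (by continuity) 0 r)
    have h2 : (∫ s in (0:ℝ)..r, s ^ (n-1) * H 0) = H 0 * r ^ n / n := by
      rw [intervalIntegral.integral_mul_const, integral_pow]
      have e1 : n - 1 + 1 = n := by omega
      rw [e1]
      have hz : (0:ℝ) ^ n = 0 := zero_pow (by omega)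
      have e2 : ((n - 1 : ℕ) : ℝ) = (n:ℝ) - 1 := by
        have h1 : (1:ℕ) ≤ n := by omega
        push_cast [Nat.cast_sub h1]; ring
      rw [hz, e2]
      ring
    have h1 : (∫ s in (0:ℝ)..r, s ^ (n-1) * (H s - H 0))
        = (∫ s in (0:ℝ)..r, s ^ (n-1) * H s) - (∫ s in (0:ℝ)..r, s ^ (n-1) * H 0) := by
      rw [← intervalIntegral.integral_sub hint1 hint2]
      congr 1; ext s; ring
    have hbound : ‖∫ s in (0:ℝ)..r, s ^ (n-1) * (H s - H 0)‖ ≤ (r ^ (n-1) * (ε/2)) * |r - 0| := by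
      apply intervalIntegral.norm_integral_le_of_norm_le_const
      intro s hs
      rw [Set.uIoc_of_le hrpos.le] at hs
      have hs0 : 0 < s := hs.1
      have hsr : s ≤ r := hs.2
      have hb1 : |s ^ (n-1)| ≤ r ^ (n-1) := by
        rw [abs_of_nonneg (by positivity)]
        exact pow_le_pow_left₀ hs0.le hsr _
      have hb2 : |H s - H 0| ≤ ε/2 := by
        have := hδ ⟨hs0.le, lt_of_le_of_lt hsr hrR⟩
          (by rw [Real.dist_eq, sub_zero, abs_of_pos hs0]; exact lt_of_le_of_lt hsr hrδ)
        rw [Real.dist_eq] at this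
        exact this.le
      calc ‖s ^ (n-1) * (H s - H 0)‖ = |s ^ (n-1)| * |H s - H 0| := abs_mul _ _
        _ ≤ r ^ (n-1) * (ε/2) := mul_le_mul hb1 hb2 (abs_nonneg _) (by positivity)
    have hrn : (0:ℝ) < r ^ n := by positivity
    rw [Real.dist_eq]
    have heq : (∫ s in (0:ℝ)..r, s ^ (n-1) * H s) / r ^ n - H 0 / n
        = (∫ s in (0:ℝ)..r, s ^ (n-1) * (H s - H 0)) / r ^ n := by
      rw [h1, h2]
      field_simp
    rw [heq, abs_div, abs_of_pos hrn]
    rw [Real.norm_eq_abs, sub_zero, abs_of_pos hrpos] at hbound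
    have hrnn : r ^ (n-1) * r = r ^ n := by
      rw [← pow_succ]; congr 1; omega
    have : |∫ s in (0:ℝ)..r, s ^ (n-1) * (H s - H 0)| ≤ (ε/2) * r ^ n := by
      calc |∫ s in (0:ℝ)..r, s ^ (n-1) * (H s - H 0)| ≤ r ^ (n-1) * (ε/2) * r := hbound
        _ = (ε/2) * r ^ n := by rw [← hrnn]; ring
    calc |∫ s in (0:ℝ)..r, s ^ (n-1) * (H s - H 0)| / r ^ n ≤ (ε/2) * r ^ n / r ^ n := by
          gcongr
        _ = ε/2 := by field_simp
        _ < ε := by linarith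
  -- final assembly
  have hIooMem : Set.Ioo (0:ℝ) R₀ ∈ nhdsWithin 0 (Set.Ioi 0) :=
    Ioo_mem_nhdsGT (hR₀) --⟨le_refl 0, hR₀⟩
  have huten : Tendsto u (nhdsWithin 0 (Set.Ioi 0)) (nhds 0) := by
    have h := (huc 0 ⟨le_refl 0, hR₀⟩).tendsto
    rw [hu0] at h
    exact h.mono_left (nhdsWithin_le_of_mem
      (Filter.mem_of_superset hIooMem Set.Ioo_subset_Ico_self))
  have hsqrtlim : Tendsto (fun r => Real.sqrt (1 + (u r)^2))
      (nhdsWithin 0 (Set.Ioi 0)) (nhds 1) := by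
    have h : Tendsto (fun r => 1 + (u r)^2) (nhdsWithin 0 (Set.Ioi 0)) (nhds 1) := by
      have h2 := huten.pow 2
      simpa using tendsto_const_nhds.add h2
    have := (Real.continuous_sqrt.tendsto 1).comp h
    rw [Real.sqrt_one] at this
    exact this
  have hmain := hTlim.mul hsqrtlim
  have hval : H 0 / n * 1 = 1 / ((n:ℝ) * lam * |mu|) := by
    rw [hH0, abs_of_neg hmu]
    rw [mul_one, div_div]
    ring
  rw [hval] at hmain
  refine Tendsto.congr' ?_ hmain
  filter_upwards [hIooMem] with r hr
  rw [hFTC r hr]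
  have hr0 : (0:ℝ) < r := hr.1
  have hx1 : (0:ℝ) < 1 + (u r)^2 := by positivity
  have hs : (0:ℝ) < Real.sqrt (1 + (u r)^2) := Real.sqrt_pos.2 hx1
  have hrnn : r ^ (n-1) * r = r ^ n := by rw [← pow_succ]; congr 1; omega
  have h3 : r ≠ 0 := hr0.ne'
  have h1 : Real.sqrt (1 + (u r)^2) ≠ 0 := hs.ne'
  field_simp
  rw [← hrnn]
  ring
end

section
/- Let n ≥ 2, λ > 0, μ < 0, R₀ > 0, and let f ∈ C¹([0,R₀)) ∩ C²((0,R₀)) solve f'' + ((n-1)/r)(1+f'²)f' = (1/λ)(1+f'²)²/(r f' - f) on (0,R₀) with f(0) = μ, f'(0) = 0 and r f'(r) > f(r) on [0,R₀). Then there exists a constant δ > 0 such that r f'(r) − f(r) ≥ δ for all r ∈ [0,R₀). -/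
open Set Filter intervalIntegral Real

/-- Positivity of the numerator in the differential inequality for the gap
function: a purely algebraic fact. -/
lemma imcf_num_pos (nn t lam G p R₀ : ℝ) (hn1 : 1 ≤ nn) (hlam : 0 < lam)
    (ht : R₀ / 2 < t) (hR : 0 < R₀) (hG : 0 < G) (hGc : nn * lam * G < R₀) :
    0 < t * (1 + p ^ 2) ^ 2 - nn * (1 + p ^ 2) * p * lam * G := by
  have ht0 : 0 < t := by linarith
  rcases le_or_gt p 0 with hple | hpgt
  · have h1 : nn * (1 + p ^ 2) * p * lam * G ≤ 0 := by
      have h0 : 0 ≤ nn * (1 + p ^ 2) * lam * G := by positivity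
      nlinarith
    nlinarith [mul_pos ht0 (by positivity : (0:ℝ) < (1 + p ^ 2) ^ 2)]
  · have h2 : 0 < t * (1 + p ^ 2) - nn * p * lam * G := by
      nlinarith [mul_nonneg ht0.le (sq_nonneg (1 - p)),
        mul_pos hpgt (show (0:ℝ) < 2 * t - nn * lam * G by linarith)]
    nlinarith [mul_pos (by positivity : (0:ℝ) < 1 + p ^ 2) h2]

/-- `r f'(r) − f(r)` is uniformly bounded away from zero on `[0,R₀)`. -/
theorem imcf_structural_gap_uniform (n : ℕ) (hn : 2 ≤ n)
    (lam mu R₀ : ℝ) (hlam : 0 < lam) (hmu : mu < 0) (hR₀ : 0 < R₀)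
    (f : ℝ → ℝ) (hf : IsIMCFSol n lam mu R₀ f) :
    ∃ δ > (0 : ℝ), ∀ r ∈ Set.Ico 0 R₀, δ ≤ r * deriv f r - f r := by
  obtain ⟨hfc, hf'c, hfd, hf'd, hf''c, hode, hf0, hdf0, hpos⟩ := hf
  have hn1 : (1:ℝ) ≤ (n:ℝ) - 1 := by
    have : (2:ℝ) ≤ (n:ℝ) := by exact_mod_cast hn
    linarith
  have hgc : ContinuousOn (fun r => r * deriv f r - f r) (Set.Ico 0 R₀) :=
    (continuousOn_id.mul hf'c).sub hfc
  -- derivative of the gap function on the interior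
  have hgd : ∀ t ∈ Set.Ioo (0:ℝ) R₀,
      HasDerivAt (fun r => r * deriv f r - f r) (t * deriv (deriv f) t) t := by
    intro t ht
    have h1 : HasDerivAt f (deriv f t) t := (hfd t ht).hasDerivAt
    have h2 : HasDerivAt (deriv f) (deriv (deriv f) t) t := (hf'd t ht).hasDerivAt
    have h3 := ((hasDerivAt_id t).mul h2).sub h1
    convert h3 using 1
    · rfl
    · rfl
    · rfl
    · simp [id]
  -- the critical constant
  have hnlam : (0:ℝ) < ((n:ℝ) - 1) * lam := by positivity
  have hcpos : 0 < R₀ / (((n:ℝ) - 1) * lam) := div_pos hR₀ hnlam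
  -- key differential inequality: if the gap is small past R₀/2, its derivative
  -- is positive
  have hkey : ∀ t ∈ Set.Ioo (R₀/2) R₀,
      t * deriv f t - f t < R₀ / (((n:ℝ) - 1) * lam) →
      0 < t * deriv (deriv f) t := by
    intro t ht hgt
    have ht0 : 0 < t := lt_trans (by linarith) ht.1
    have htI : t ∈ Set.Ioo (0:ℝ) R₀ := ⟨ht0, ht.2⟩
    have hG : 0 < t * deriv f t - f t := hpos t ⟨le_of_lt ht0, ht.2⟩
    have hode' := hode t htI
    have hf'' : deriv (deriv f) t
        = 1 / lam * (1 + deriv f t ^ 2) ^ 2 / (t * deriv f t - f t)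
          - ((n:ℝ) - 1) / t * (1 + deriv f t ^ 2) * deriv f t := by
      linarith [hode']
    rw [hf'']
    generalize hGe : t * deriv f t - f t = G at *
    generalize hpe : deriv f t = p at *
    have hrw : t * (1 / lam * (1 + p ^ 2) ^ 2 / G - ((n:ℝ) - 1) / t * (1 + p ^ 2) * p)
        = (t * (1 + p ^ 2) ^ 2 - ((n:ℝ) - 1) * (1 + p ^ 2) * p * lam * G) / (lam * G) := by
      field_simp
    rw [hrw]
    apply div_pos _ (by positivity)
    have hGc : ((n:ℝ) - 1) * lam * G < R₀ := by
      have h4 := (lt_div_iff₀ hnlam).mp hgt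
      have h5 : ((n:ℝ) - 1) * lam * G = G * (((n:ℝ) - 1) * lam) := by ring
      linarith
    exact imcf_num_pos ((n:ℝ) - 1) t lam G p R₀ hn1 hlam ht.1 hR₀ hG hGc
  -- minimum on the compact left half
  have hsub : Set.Icc (0:ℝ) (R₀/2) ⊆ Set.Ico 0 R₀ := by
    intro x hx
    exact ⟨hx.1, lt_of_le_of_lt hx.2 (by linarith)⟩
  obtain ⟨r₀, hr₀, hmin'⟩ := IsCompact.exists_isMinOn isCompact_Icc
    (⟨0, by constructor <;> linarith⟩ : (Set.Icc (0:ℝ) (R₀/2)).Nonempty) (hgc.mono hsub)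
  have hmin := isMinOn_iff.mp hmin'
  have hKpos : 0 < r₀ * deriv f r₀ - f r₀ := hpos r₀ (hsub hr₀)
  refine ⟨min (r₀ * deriv f r₀ - f r₀) (R₀ / (((n:ℝ) - 1) * lam)),
    lt_min hKpos hcpos, ?_⟩
  set m := min (r₀ * deriv f r₀ - f r₀) (R₀ / (((n:ℝ) - 1) * lam)) with hm
  intro r hr
  rcases le_or_gt r (R₀/2) with hle | hgt2
  · exact le_trans (min_le_left _ _) (hmin r ⟨hr.1, hle⟩)
  -- right half: contradiction argument
  by_contra hcon
  push_neg at hcon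
  have ha0 : (0:ℝ) < R₀/2 := by positivity
  have hga : m ≤ (R₀/2) * deriv f (R₀/2) - f (R₀/2) :=
    le_trans (min_le_left _ _) (hmin (R₀/2) ⟨ha0.le, le_refl _⟩)
  -- last crossing point
  set S : Set ℝ := Set.Icc (R₀/2) r ∩ {x | m ≤ x * deriv f x - f x} with hS
  have hIccsub : Set.Icc (R₀/2) r ⊆ Set.Ico 0 R₀ := fun x hx =>
    ⟨le_trans ha0.le hx.1, lt_of_le_of_lt hx.2 hr.2⟩
  have hSclosed : IsClosed S :=
    (hgc.mono hIccsub).preimage_isClosed_of_isClosed isClosed_Icc isClosed_Ici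
  have hSne : S.Nonempty := ⟨R₀/2, ⟨le_refl _, hgt2.le⟩, hga⟩
  have hSbdd : BddAbove S := ⟨r, fun x hx => hx.1.2⟩
  have hScpt : IsCompact S := isCompact_Icc.of_isClosed_subset hSclosed
    Set.inter_subset_left
  have huS : sSup S ∈ S := hScpt.sSup_mem hSne
  set u := sSup S with hu
  have hur : u < r := by
    rcases lt_or_eq_of_le huS.1.2 with h | h
    · exact h
    · exfalso
      have h2 := huS.2
      rw [h] at h2
      exact absurd hcon (not_lt.mpr h2)
  -- beyond u, the gap is below m
  have hbeyond : ∀ x ∈ Set.Ioc u r, x * deriv f x - f x < m := by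
    intro x hx
    by_contra hxc
    push_neg at hxc
    have hxS : x ∈ S := ⟨⟨le_trans huS.1.1 hx.1.le, hx.2⟩, hxc⟩
    exact absurd (le_csSup hSbdd hxS) (not_le.mpr hx.1)
  -- MVT on [u, r]
  have hIccsub2 : Set.Icc u r ⊆ Set.Ico 0 R₀ := fun x hx =>
    ⟨le_trans (le_trans ha0.le huS.1.1) hx.1, lt_of_le_of_lt hx.2 hr.2⟩
  obtain ⟨t, htI, htd⟩ := exists_hasDerivAt_eq_slope
    (fun r => r * deriv f r - f r) (fun x => x * deriv (deriv f) x)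
    hur (hgc.mono hIccsub2) (fun x hx => hgd x
      ⟨lt_of_lt_of_le ha0 (le_trans huS.1.1 hx.1.le), lt_trans hx.2 hr.2⟩)
  have hum : m ≤ u * deriv f u - f u := huS.2
  have hslope_neg : ((r * deriv f r - f r) - (u * deriv f u - f u)) / (r - u) < 0 :=
    div_neg_of_neg_of_pos (by linarith) (by linarith)
  have htIoo : t ∈ Set.Ioo (R₀/2) R₀ :=
    ⟨lt_of_le_of_lt huS.1.1 htI.1, lt_trans htI.2 hr.2⟩
  have hgtm : t * deriv f t - f t < R₀ / (((n:ℝ) - 1) * lam) :=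
    lt_of_lt_of_le (hbeyond t ⟨htI.1, htI.2.le⟩) (min_le_right _ _)
  have hfinal := hkey t htIoo hgtm
  rw [htd] at hfinal
  linarith
end

section
/- Let n ≥ 2, λ > 0, μ < 0, R₀ > 0, and let f ∈ C¹([0,R₀)) ∩ C²((0,R₀)) solve f'' + ((n-1)/r)(1+f'²)f' = (1/λ)(1+f'²)²/(r f' - f) on (0,R₀) with f(0) = μ, f'(0) = 0 and r f'(r) > f(r) on [0,R₀). Then f''(r) > 0 for all 0 < r < R₀, i.e. f is strictly convex on (0,R₀). -/
open Set Filter intervalIntegral Real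

/-- At a critical point of `f''` (i.e. `f''(a) = 0`), the third derivative
exists and equals `((n-1)/a²)(1+f'(a)²) f'(a)`. -/
lemma imcf_deriv_at_crit (n : ℕ) (lam R₀ : ℝ) (hlam : 0 < lam) (f : ℝ → ℝ)
    (a : ℝ) (ha : 0 < a) (hR : a < R₀)
    (hdiff : ∀ r ∈ Set.Ioo 0 R₀, DifferentiableAt ℝ f r)
    (hdiff2 : ∀ r ∈ Set.Ioo 0 R₀, DifferentiableAt ℝ (deriv f) r)
    (hode : ∀ r ∈ Set.Ioo 0 R₀,
      deriv (deriv f) r + ((n : ℝ) - 1) / r * (1 + (deriv f r) ^ 2) * deriv f r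
        = 1 / lam * (1 + (deriv f r) ^ 2) ^ 2 / (r * deriv f r - f r))
    (hpos : ∀ r ∈ Set.Ico 0 R₀, r * deriv f r - f r > 0)
    (hcrit : deriv (deriv f) a = 0) :
    HasDerivAt (deriv (deriv f))
      (((n:ℝ) - 1) * (1 + (deriv f a) ^ 2) * deriv f a / a ^ 2) a := by
  have haIoo : a ∈ Set.Ioo 0 R₀ := ⟨ha, hR⟩
  have ha0 : a ≠ 0 := ne_of_gt ha
  have hh : 0 < a * deriv f a - f a := hpos a ⟨ha.le, hR⟩
  have hhne : a * deriv f a - f a ≠ 0 := ne_of_gt hh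
  have hf' : HasDerivAt f (deriv f a) a := (hdiff a haIoo).hasDerivAt
  have hφ' : HasDerivAt (deriv f) 0 a := by
    have := (hdiff2 a haIoo).hasDerivAt
    rwa [hcrit] at this
  have hq : HasDerivAt (fun x => 1 + deriv f x ^ 2)
      (2 * deriv f a ^ 1 * 0) a := (hφ'.pow 2).const_add 1
  have hnum : HasDerivAt (fun x => 1 / lam * (1 + deriv f x ^ 2) ^ 2)
      (1 / lam * (2 * (1 + deriv f a ^ 2) ^ 1 * (2 * deriv f a ^ 1 * 0))) a :=
    (hq.pow 2).const_mul (1 / lam)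
  have hden : HasDerivAt (fun x => x * deriv f x - f x)
      (1 * deriv f a + a * 0 - deriv f a) a :=
    ((hasDerivAt_id a).mul hφ').sub hf'
  have hq1 := hnum.div hden hhne
  have hinv : HasDerivAt (fun x => ((n:ℝ) - 1) * x⁻¹)
      (((n:ℝ) - 1) * (-(a ^ 2)⁻¹)) a := (hasDerivAt_inv ha0).const_mul ((n:ℝ) - 1)
  have hterm := (hinv.mul hq).mul hφ'
  have hG := hq1.sub hterm
  have hev : deriv (deriv f) =ᶠ[nhds a] fun x =>
      1 / lam * (1 + deriv f x ^ 2) ^ 2 / (x * deriv f x - f x)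
        - ((n:ℝ) - 1) * x⁻¹ * (1 + deriv f x ^ 2) * deriv f x := by
    filter_upwards [isOpen_Ioo.mem_nhds haIoo] with x hx
    have h2 : deriv (deriv f) x
        = 1 / lam * (1 + deriv f x ^ 2) ^ 2 / (x * deriv f x - f x)
          - ((n:ℝ) - 1) / x * (1 + deriv f x ^ 2) * deriv f x := by
      linarith [hode x hx]
    rw [h2, div_eq_mul_inv ((n:ℝ) - 1) x]
  have hfinal := hG.congr_of_eventuallyEq hev
  convert hfinal using 1
  · rfl
  · rfl
  field_simp
  ring

/-- strict convexity: `f''(r) > 0` on `(0,R₀)`. -/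
theorem imcf_strict_convexity (n : ℕ) (hn : 2 ≤ n)
    (lam mu R₀ : ℝ) (hlam : 0 < lam) (hmu : mu < 0) (hR₀ : 0 < R₀)
    (f : ℝ → ℝ) (hf : IsIMCFSol n lam mu R₀ f) :
    ∀ r ∈ Set.Ioo 0 R₀, 0 < deriv (deriv f) r := by
  obtain ⟨hfc, hφc, hdiff, hdiff2, hgc, hode, hf0, hφ0, hpos⟩ := hf
  have hn' : (2:ℝ) ≤ (n:ℝ) := by exact_mod_cast hn
  -- wherever f'' ≤ 0, necessarily f' > 0
  have key : ∀ s ∈ Set.Ioo 0 R₀, deriv (deriv f) s ≤ 0 → 0 < deriv f s := by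
    intro s hs hgs
    by_contra hpc
    push_neg at hpc
    have h1 : 0 < s * deriv f s - f s := hpos s ⟨hs.1.le, hs.2⟩
    have hode' := hode s hs
    have hrhs : 0 < 1 / lam * (1 + deriv f s ^ 2) ^ 2 / (s * deriv f s - f s) := by
      positivity
    have hco : 0 ≤ ((n:ℝ) - 1) / s * (1 + deriv f s ^ 2) := by
      apply mul_nonneg
      · apply div_nonneg (by linarith) hs.1.le
      · positivity
    have hterm := mul_nonpos_of_nonneg_of_nonpos hco hpc
    linarith
  intro r hr
  by_contra hcon
  push_neg at hcon
  -- U: set of left endpoints t such that f'' ≤ 0 on [t, r]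
  set U : Set ℝ := {t | t ∈ Set.Ioc 0 r ∧
      ∀ x ∈ Set.Icc t r, deriv (deriv f) x ≤ 0} with hU
  have hsU : r ∈ U := by
    refine ⟨⟨hr.1, le_refl r⟩, ?_⟩
    intro x hx
    have : x = r := le_antisymm hx.2 hx.1
    rw [this]; exact hcon
  have hUne : U.Nonempty := ⟨r, hsU⟩
  have hUbdd : BddBelow U := ⟨0, fun t ht => ht.1.1.le⟩
  set a := sInf U with ha
  have ha0 : 0 ≤ a := le_csInf hUne (fun t ht => ht.1.1.le)
  have has : a ≤ r := csInf_le hUbdd hsU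
  have hIoc : ∀ x, a < x → x ≤ r → deriv (deriv f) x ≤ 0 := by
    intro x hax hxr
    obtain ⟨t, htU, htx⟩ := exists_lt_of_csInf_lt hUne hax
    exact htU.2 x ⟨htx.le, hxr⟩
  have hps : 0 < deriv f r := key r hr hcon
  -- f' is ≥ f'(r) on (a, r]
  have hmono : ∀ x, a < x → x ≤ r → deriv f r ≤ deriv f x := by
    intro x hax hxr
    have hx0 : 0 < x := lt_of_le_of_lt ha0 hax
    have anti : AntitoneOn (deriv f) (Set.Icc x r) := by
      apply antitoneOn_of_deriv_nonpos (convex_Icc x r)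
      · exact hφc.mono (fun y hy => ⟨le_trans hx0.le hy.1, lt_of_le_of_lt hy.2 hr.2⟩)
      · intro y hy
        rw [interior_Icc] at hy
        exact (hdiff2 y ⟨hx0.trans hy.1, hy.2.trans hr.2⟩).differentiableWithinAt
      · intro y hy
        rw [interior_Icc] at hy
        exact hIoc y (hax.trans hy.1) hy.2.le
    exact anti ⟨le_refl x, hxr⟩ ⟨hxr, le_refl r⟩ hxr
  rcases eq_or_lt_of_le ha0 with h0 | hapos
  · -- case a = 0 : contradiction with f'(0) = 0
    have hlim : Filter.Tendsto (deriv f) (nhdsWithin 0 (Set.Ioi 0)) (nhds (deriv f 0)) := by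
      have h1 : ContinuousWithinAt (deriv f) (Set.Ico 0 R₀) 0 := hφc 0 ⟨le_refl 0, hR₀⟩
      have h2 : nhdsWithin (0:ℝ) (Set.Ioi 0) ≤ nhdsWithin 0 (Set.Ico 0 R₀) := by
        rw [← nhdsWithin_Ioo_eq_nhdsGT hR₀]
        exact nhdsWithin_mono 0 Set.Ioo_subset_Ico_self
      exact h1.tendsto.mono_left h2
    rw [hφ0] at hlim
    have hev : ∀ᶠ x in nhdsWithin (0:ℝ) (Set.Ioi 0), deriv f r ≤ deriv f x := by
      filter_upwards [Ioo_mem_nhdsGT_of_mem ⟨le_refl (0:ℝ), hr.1⟩] with x hx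
      exact hmono x (h0 ▸ hx.1) hx.2.le
    have : deriv f r ≤ 0 := ge_of_tendsto hlim hev
    linarith
  · -- case a > 0
    have haIoo : a ∈ Set.Ioo 0 R₀ := ⟨hapos, lt_of_le_of_lt has hr.2⟩
    have hgconta : ContinuousAt (deriv (deriv f)) a :=
      hgc.continuousAt (isOpen_Ioo.mem_nhds haIoo)
    have hφconta : ContinuousAt (deriv f) a :=
      (hφc.mono Set.Ioo_subset_Ico_self).continuousAt (isOpen_Ioo.mem_nhds haIoo)
    have hga_le : deriv (deriv f) a ≤ 0 := by
      rcases eq_or_lt_of_le has with he | hlt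
      · rw [he]; exact hcon
      · have hev : ∀ᶠ x in nhdsWithin a (Set.Ioi a), deriv (deriv f) x ≤ 0 := by
          filter_upwards [Ioo_mem_nhdsGT_of_mem ⟨le_refl a, hlt⟩] with x hx
          exact hIoc x hx.1 hx.2.le
        exact le_of_tendsto (hgconta.tendsto.mono_left nhdsWithin_le_nhds) hev
    -- frequently f'' > 0 just to the left of a
    have hfreq : ∃ᶠ x in nhdsWithin a (Set.Iio a), 0 < deriv (deriv f) x := by
      by_contra hevc
      rw [Filter.not_frequently] at hevc
      obtain ⟨l, hl, hsub⟩ := mem_nhdsLT_iff_exists_Ioo_subset.mp hevc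
      set t := max (a / 2) ((l + a) / 2) with ht
      have hla : l < a := hl
      have htl : l < t := lt_max_of_lt_right (by linarith)
      have hta : t < a := max_lt (by linarith) (by linarith)
      have ht0 : 0 < t := lt_of_lt_of_le (half_pos hapos) (le_max_left _ _)
      have htU : t ∈ U := by
        refine ⟨⟨ht0, le_trans hta.le has⟩, ?_⟩
        intro x hx
        rcases lt_trichotomy x a with h | h | h
        · have hxm : x ∈ Set.Ioo l a := ⟨lt_of_lt_of_le htl hx.1, h⟩
          have := hsub hxm
          exact not_lt.mp this
        · rw [h]; exact hga_le
        · exact hIoc x h hx.2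
      have := csInf_le hUbdd htU
      rw [← ha] at this
      linarith
    -- f'(a) > 0
    have hpa : 0 < deriv f a := by
      rcases eq_or_lt_of_le has with he | hlt
      · rw [he]; exact hps
      · have hev : ∀ᶠ x in nhdsWithin a (Set.Ioi a), deriv f r ≤ deriv f x := by
          filter_upwards [Ioo_mem_nhdsGT_of_mem ⟨le_refl a, hlt⟩] with x hx
          exact hmono x hx.1 hx.2.le
        have := ge_of_tendsto (hφconta.tendsto.mono_left nhdsWithin_le_nhds) hev
        linarith
    -- f''(a) = 0
    have hga : deriv (deriv f) a = 0 := by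
      rcases lt_or_eq_of_le hga_le with hlt | he
      · exfalso
        have hev : ∀ᶠ x in nhds a, deriv (deriv f) x < 0 :=
          hgconta.tendsto.eventually_lt_const hlt
        have hev' : ∀ᶠ x in nhdsWithin a (Set.Iio a), deriv (deriv f) x < 0 :=
          hev.filter_mono nhdsWithin_le_nhds
        obtain ⟨x, hx1, hx2⟩ := (hfreq.and_eventually hev').exists
        linarith
      · exact he
    -- derivative of f'' at a is positive
    have hd := imcf_deriv_at_crit n lam R₀ hlam f a hapos haIoo.2 hdiff hdiff2 hode hpos hga
    set e := ((n:ℝ) - 1) * (1 + (deriv f a) ^ 2) * deriv f a / a ^ 2 with he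
    have hepos : 0 < e := by
      apply div_pos
      · apply mul_pos (mul_pos (by linarith) (by positivity)) hpa
      · positivity
    have hslope : Filter.Tendsto (slope (deriv (deriv f)) a)
        (nhdsWithin a (Set.Iio a)) (nhds e) := by
      have h1 := hasDerivAt_iff_tendsto_slope.mp hd
      exact h1.mono_left (nhdsWithin_mono a
        (fun x hx => Set.mem_compl_singleton_iff.mpr (ne_of_lt hx)))
    have hev2 : ∀ᶠ x in nhdsWithin a (Set.Iio a),
        0 < slope (deriv (deriv f)) a x := hslope.eventually_const_lt hepos
    have hev3 : ∀ᶠ x in nhdsWithin a (Set.Iio a), deriv (deriv f) x < 0 := by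
      filter_upwards [hev2, self_mem_nhdsWithin] with x hx1 hx2
      have hxa : x - a < 0 := sub_neg.mpr hx2
      rw [slope_def_field] at hx1
      by_contra hge
      push_neg at hge
      have : (deriv (deriv f) x - deriv (deriv f) a) / (x - a) ≤ 0 := by
        apply div_nonpos_of_nonneg_of_nonpos
        · rw [hga]; simpa using hge
        · exact hxa.le
      linarith
    obtain ⟨x, hx1, hx2⟩ := (hfreq.and_eventually hev3).exists
    linarith
end

section
/- Let n ≥ 2, λ > 1/(n−1), μ < 0, R₀ > 0, and let f ∈ C¹([0,R₀)) ∩ C²((0,R₀)) solve f'' + ((n-1)/r)(1+f'²)f' = (1/λ)(1+f'²)²/(r f' - f) on (0,R₀) with f(0) = μ, f'(0) = 0 and r f'(r) > f(r) on [0,R₀). Then there exists a constant M₁ > 0 such that 0 ≤ f'(r) ≤ M₁ for all 0 ≤ r < R₀. -/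
open Set Filter intervalIntegral Real

set_option maxHeartbeats 2000000 in
/-- a priori bound on `f'` when `λ > 1/(n−1)`. -/
theorem imcf_deriv_bounded (n : ℕ) (hn : 2 ≤ n)
    (lam mu R₀ : ℝ) (hlam : 1 / ((n : ℝ) - 1) < lam) (hmu : mu < 0) (hR₀ : 0 < R₀)
    (f : ℝ → ℝ) (hf : IsIMCFSol n lam mu R₀ f) :
    ∃ M₁ > (0 : ℝ), ∀ r ∈ Set.Ico 0 R₀, 0 ≤ deriv f r ∧ deriv f r ≤ M₁ := by
  obtain ⟨hfC, hgC, hfD, hgD, hgdC, hODE, hf0, hg0, hpos⟩ := hf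
  set g := deriv f with hg_def
  set gd := deriv g with hgd_def
  -- numeric facts
  have hn1 : (1:ℝ) ≤ (n:ℝ) - 1 := by
    have : (2:ℝ) ≤ (n:ℝ) := by exact_mod_cast hn
    linarith
  have hn0 : (0:ℝ) < (n:ℝ) - 1 := by linarith
  have hlam0 : 0 < lam := lt_trans (by positivity) hlam
  set c : ℝ := lam * ((n:ℝ) - 1) with hc_def
  have hc1 : 1 < c := by
    rw [div_lt_iff₀ hn0] at hlam
    calc (1:ℝ) < lam * ((n:ℝ)-1) := hlam
    _ = c := rfl
  have hIooIco : Ioo (0:ℝ) R₀ ⊆ Ico 0 R₀ := Ioo_subset_Ico_self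
  -- rearranged ODE
  have hODE' : ∀ r ∈ Ioo (0:ℝ) R₀,
      gd r = 1 / lam * (1 + g r ^ 2) ^ 2 / (r * g r - f r)
        - ((n:ℝ) - 1) / r * (1 + g r ^ 2) * g r := by
    intro r hr
    have := hODE r hr
    linarith
  -- Step 1 : g ≥ 0 on Ico 0 R₀
  have hg_nonneg : ∀ r ∈ Ico (0:ℝ) R₀, 0 ≤ g r := by
    intro r₁ hr₁
    by_contra hneg
    push_neg at hneg
    have hr₁0 : 0 < r₁ := by
      rcases eq_or_lt_of_le hr₁.1 with h | h
      · rw [← h] at hneg; rw [hg0] at hneg; exact absurd hneg (lt_irrefl 0)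
      · exact h
    set S : Set ℝ := Icc 0 r₁ ∩ {r | 0 ≤ g r} with hS_def
    have hIccsub : Icc (0:ℝ) r₁ ⊆ Ico 0 R₀ := fun x hx => ⟨hx.1, lt_of_le_of_lt hx.2 hr₁.2⟩
    have hS0 : (0:ℝ) ∈ S := ⟨⟨le_refl 0, hr₁0.le⟩, by simp [hg0]⟩
    have hScl : IsClosed S := by
      have : S = Icc 0 r₁ ∩ g ⁻¹' (Ici 0) := by
        ext x; simp [hS_def, mem_preimage]
      rw [this]
      exact (hgC.mono hIccsub).preimage_isClosed_of_isClosed isClosed_Icc isClosed_Ici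
    have hSbdd : BddAbove S := ⟨r₁, fun x hx => hx.1.2⟩
    set r₀ := sSup S with hr₀_def
    have hr₀S : r₀ ∈ S := hScl.csSup_mem ⟨0, hS0⟩ hSbdd
    have hr₀r₁ : r₀ < r₁ := by
      rcases eq_or_lt_of_le hr₀S.1.2 with h | h
      · exfalso; have := hr₀S.2; rw [h] at this; exact absurd hneg (not_lt.2 this)
      · exact h
    have hafter : ∀ r ∈ Ioc r₀ r₁, g r < 0 := by
      intro r hr
      by_contra hge
      push_neg at hge
      have : r ∈ S := ⟨⟨le_trans hr₀S.1.1 hr.1.le, hr.2⟩, hge⟩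
      exact absurd (le_csSup hSbdd this) (not_le.2 hr.1)
    have hmono : StrictMonoOn g (Icc r₀ r₁) := by
      apply strictMonoOn_of_deriv_pos (convex_Icc _ _)
      · exact hgC.mono (fun x hx => hIccsub ⟨le_trans hr₀S.1.1 hx.1, hx.2⟩)
      · intro x hx
        rw [interior_Icc] at hx
        have hxI : x ∈ Ioo (0:ℝ) R₀ :=
          ⟨lt_of_le_of_lt hr₀S.1.1 hx.1, lt_trans hx.2 hr₁.2⟩
        have hx0 : 0 < x := hxI.1
        have hgx : g x < 0 := hafter x ⟨hx.1, hx.2.le⟩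
        have hh : 0 < x * g x - f x := hpos x (hIooIco hxI)
        rw [← hgd_def]
        rw [hODE' x hxI]
        have hA : 0 < 1 / lam * (1 + g x ^ 2) ^ 2 / (x * g x - f x) := by positivity
        have hB : ((n:ℝ) - 1) / x * (1 + g x ^ 2) * g x < 0 := by
          apply mul_neg_of_pos_of_neg _ hgx
          positivity
        linarith
    have := hmono (left_mem_Icc.2 hr₀r₁.le) (right_mem_Icc.2 hr₀r₁.le) hr₀r₁
    have h0 := hr₀S.2
    simp only [mem_setOf_eq] at h0
    linarith
  -- the quantity Q
  set Q : ℝ → ℝ := fun r => c * g r * (r * g r - f r) - r * (1 + g r ^ 2) with hQ_def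
  have hQg : ∀ r ∈ Ioo (0:ℝ) R₀,
      gd r * (lam * r * (r * g r - f r)) = -((1 + g r ^ 2) * Q r) := by
    intro r hr
    have hh : 0 < r * g r - f r := hpos r (hIooIco hr)
    have hr0 : r ≠ 0 := ne_of_gt hr.1
    have hl0 : lam ≠ 0 := ne_of_gt hlam0
    have hh0 : r * g r - f r ≠ 0 := ne_of_gt hh
    have e1 : 1 / lam * (1 + g r ^ 2) ^ 2 / (r * g r - f r) * (lam * r * (r * g r - f r))
        = r * (1 + g r ^ 2) ^ 2 := by
      field_simp
      exact div_self (by rw [mul_comm]; exact hh0)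
    have e2 : ((n:ℝ) - 1) / r * (1 + g r ^ 2) * g r * (lam * r * (r * g r - f r))
        = ((n:ℝ) - 1) * lam * (1 + g r ^ 2) * g r * (r * g r - f r) := by field_simp
    rw [hODE' r hr, sub_mul, e1, e2, hQ_def, hc_def]
    ring
  have hD_pos : ∀ r ∈ Ioo (0:ℝ) R₀, 0 < lam * r * (r * g r - f r) := by
    intro r hr
    have hh : 0 < r * g r - f r := hpos r (hIooIco hr)
    have : 0 < r := hr.1
    positivity
  have hgd_pos : ∀ r ∈ Ioo (0:ℝ) R₀, Q r < 0 → 0 < gd r := by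
    intro r hr hQ
    have h1 := hQg r hr
    have h2 := hD_pos r hr
    nlinarith [sq_nonneg (g r)]
  have hgd_nonpos : ∀ r ∈ Ioo (0:ℝ) R₀, 0 ≤ Q r → gd r ≤ 0 := by
    intro r hr hQ
    have h1 := hQg r hr
    have h2 := hD_pos r hr
    nlinarith [sq_nonneg (g r)]
  have hgd_zero : ∀ r ∈ Ioo (0:ℝ) R₀, Q r = 0 → gd r = 0 := by
    intro r hr hQ
    have h1 := hQg r hr
    rw [hQ] at h1
    have h2 := hD_pos r hr
    simp only [mul_zero, neg_zero] at h1
    exact (mul_eq_zero.1 h1).resolve_right (ne_of_gt h2)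
  -- derivative of Q
  set QD : ℝ → ℝ := fun r => c * gd r * (r * g r - f r) + c * g r * (r * gd r)
      - (1 + g r ^ 2) - 2 * r * g r * gd r with hQD_def
  have hQhd : ∀ r ∈ Ioo (0:ℝ) R₀, HasDerivAt Q (QD r) r := by
    intro r hr
    have hfd : HasDerivAt f (g r) r := (hfD r hr).hasDerivAt
    have hgd' : HasDerivAt g (gd r) r := (hgD r hr).hasDerivAt
    have h1 : HasDerivAt (fun x => x * g x - f x) (1 * g r + r * gd r - g r) r :=
      ((hasDerivAt_id r).mul hgd').sub hfd
    have h2 : HasDerivAt (fun x => c * g x) (c * gd r) r := hgd'.const_mul c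
    have h3 := h2.mul h1
    have h4 : HasDerivAt (fun x => 1 + g x ^ 2) ((2:ℕ) * g r ^ (2-1) * gd r) r :=
      ((hgd'.pow 2).const_add 1)
    have h5 := (hasDerivAt_id r).mul h4
    have h6 := h3.sub h5
    rw [hQ_def]
    refine h6.congr_deriv ?_
    simp only [hQD_def, id_eq]
    push_cast
    ring
  have hgI := hgC.mono hIooIco
  have hfI := hfC.mono hIooIco
  have hQDc : ContinuousOn QD (Ioo (0:ℝ) R₀) := by
    rw [hQD_def]
    apply ContinuousOn.sub
    apply ContinuousOn.sub
    apply ContinuousOn.add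
    · exact (continuousOn_const.mul hgdC).mul ((continuousOn_id.mul hgI).sub hfI)
    · exact (continuousOn_const.mul hgI).mul (continuousOn_id.mul hgdC)
    · exact continuousOn_const.add (hgI.pow 2)
    · exact ((continuousOn_const.mul continuousOn_id).mul hgI).mul hgdC
  have hQc : ContinuousOn Q (Ico (0:ℝ) R₀) := by
    rw [hQ_def]
    apply ContinuousOn.sub
    · exact (continuousOn_const.mul hgC).mul ((continuousOn_id.mul hgC).sub hfC)
    · exact continuousOn_id.mul (continuousOn_const.add (hgC.pow 2))
  -- forward invariance of Q < 0
  have hQneg : ∀ a₀ ∈ Ioo (0:ℝ) R₀, Q a₀ < 0 → ∀ b ∈ Ico a₀ R₀, Q b < 0 := by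
    intro a₀ ha₀ hQa₀ b hb
    rcases eq_or_lt_of_le hb.1 with h | hab
    · rw [← h]; exact hQa₀
    by_contra hQb
    push_neg at hQb
    have hbI : b ∈ Ioo (0:ℝ) R₀ := ⟨lt_trans ha₀.1 hab, hb.2⟩
    have hIccsub : Icc a₀ b ⊆ Ioo (0:ℝ) R₀ :=
      fun x hx => ⟨lt_of_lt_of_le ha₀.1 hx.1, lt_of_le_of_lt hx.2 hbI.2⟩
    set S : Set ℝ := Icc a₀ b ∩ {r | 0 ≤ Q r} with hS_def
    have hSb : b ∈ S := ⟨right_mem_Icc.2 hab.le, hQb⟩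
    have hScl : IsClosed S := by
      have hSeq : S = Icc a₀ b ∩ Q ⁻¹' (Ici 0) := by
        ext x; simp [hS_def]
      rw [hSeq]
      exact (hQc.mono (fun x hx => hIooIco (hIccsub hx))).preimage_isClosed_of_isClosed
        isClosed_Icc isClosed_Ici
    have hSbdd : BddBelow S := ⟨a₀, fun x hx => hx.1.1⟩
    set rs := sInf S with hrs_def
    have hrsS : rs ∈ S := hScl.csInf_mem ⟨b, hSb⟩ hSbdd
    have hrsI : rs ∈ Ioo (0:ℝ) R₀ := hIccsub hrsS.1
    have ha₀rs : a₀ < rs := by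
      rcases eq_or_lt_of_le hrsS.1.1 with h | h
      · exfalso; have h2 := hrsS.2; rw [← h] at h2; exact absurd hQa₀ (not_lt.2 h2)
      · exact h
    have hbefore : ∀ r ∈ Ico a₀ rs, Q r < 0 := by
      intro r hr
      by_contra hge
      push_neg at hge
      have hrS : r ∈ S := ⟨⟨hr.1, le_trans hr.2.le hrsS.1.2⟩, hge⟩
      exact absurd (csInf_le hSbdd hrS) (not_le.2 hr.2)
    have hQrs_le : Q rs ≤ 0 := by
      have hcw : ContinuousWithinAt Q (Ico a₀ rs) rs := by
        apply (hQc rs (hIooIco hrsI)).mono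
        intro x hx
        exact hIooIco (hIccsub ⟨hx.1, le_trans hx.2.le hrsS.1.2⟩)
      have hne : (nhdsWithin rs (Ico a₀ rs)).NeBot := by
        apply mem_closure_iff_nhdsWithin_neBot.1
        rw [closure_Ico (ne_of_lt ha₀rs)]
        exact right_mem_Icc.2 ha₀rs.le
      exact le_of_tendsto hcw (eventually_nhdsWithin_of_forall (fun x hx => (hbefore x hx).le))
    have hQrs : Q rs = 0 := le_antisymm hQrs_le hrsS.2
    have hgdrs : gd rs = 0 := hgd_zero rs hrsI hQrs
    have hQDrs : QD rs = -(1 + g rs ^ 2) := by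
      simp only [hQD_def, hgdrs]; ring
    have hQDneg : QD rs < 0 := by rw [hQDrs]; nlinarith [sq_nonneg (g rs)]
    have hcQD : ContinuousAt QD rs := hQDc.continuousAt (Ioo_mem_nhds hrsI.1 hrsI.2)
    have hev : ∀ᶠ x in nhds rs, QD x < 0 := hcQD (Iio_mem_nhds hQDneg)
    obtain ⟨δ, hδ0, hδ⟩ := Metric.eventually_nhds_iff.1 hev
    set s := max a₀ (rs - δ/2) with hs_def
    have hs_lt : s < rs := max_lt ha₀rs (by linarith)
    have hs_ge : a₀ ≤ s := le_max_left _ _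
    have hQs_neg : Q s < 0 := hbefore s ⟨hs_ge, hs_lt⟩
    have hanti : StrictAntiOn Q (Icc s rs) := by
      apply strictAntiOn_of_deriv_neg (convex_Icc _ _)
      · apply hQc.mono
        intro x hx
        constructor
        · exact le_trans (le_trans ha₀.1.le hs_ge) hx.1
        · exact lt_of_le_of_lt hx.2 hrsI.2
      · intro x hx
        rw [interior_Icc] at hx
        have hxI : x ∈ Ioo (0:ℝ) R₀ :=
          ⟨lt_of_lt_of_le ha₀.1 (le_trans hs_ge hx.1.le), lt_trans hx.2 hrsI.2⟩
        rw [(hQhd x hxI).deriv]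
        apply hδ
        rw [Real.dist_eq, abs_lt]
        have h1 : rs - δ/2 ≤ s := le_max_right _ _
        constructor <;> [linarith [hx.1, hx.2]; linarith [hx.2]]
    have hlt := hanti (left_mem_Icc.2 hs_lt.le) (right_mem_Icc.2 hs_lt.le) hs_lt
    rw [hQrs] at hlt
    linarith
  -- main case split
  by_cases hcase : ∀ r ∈ Ioo (0:ℝ) R₀, 0 ≤ Q r
  · -- g is nonincreasing, hence g ≤ g 0 = 0
    refine ⟨1, one_pos, fun r hr => ⟨hg_nonneg r hr, ?_⟩⟩
    have hanti : AntitoneOn g (Ico 0 R₀) := by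
      apply antitoneOn_of_deriv_nonpos (convex_Ico _ _) hgC
      · rw [interior_Ico]
        exact fun x hx => (hgD x hx).differentiableWithinAt
      · rw [interior_Ico]
        exact fun x hx => hgd_nonpos x hx (hcase x hx)
    have hle := hanti (show (0:ℝ) ∈ Ico (0:ℝ) R₀ from ⟨le_refl 0, hR₀⟩) hr hr.1
    rw [hg0] at hle
    linarith
  · push_neg at hcase
    obtain ⟨a₀, ha₀, hQa₀⟩ := hcase
    have hQn := hQneg a₀ ha₀ hQa₀
    have hmono : MonotoneOn g (Ico a₀ R₀) := by
      apply monotoneOn_of_deriv_nonneg (convex_Ico _ _)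
      · exact hgC.mono (fun x hx => ⟨le_trans ha₀.1.le hx.1, hx.2⟩)
      · rw [interior_Ico]
        exact fun x hx => (hgD x ⟨lt_trans ha₀.1 hx.1, hx.2⟩).differentiableWithinAt
      · rw [interior_Ico]
        intro x hx
        have hxI : x ∈ Ioo (0:ℝ) R₀ := ⟨lt_trans ha₀.1 hx.1, hx.2⟩
        exact (hgd_pos x hxI (hQn x ⟨hx.1.le, hx.2⟩)).le
    by_cases hsmall : ∀ r ∈ Ico a₀ R₀, g r < 1
    · obtain ⟨C₀, hC₀⟩ := (isCompact_Icc : IsCompact (Icc (0:ℝ) a₀)).exists_bound_of_continuousOn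
        (hgC.mono (fun x hx => ⟨hx.1, lt_of_le_of_lt hx.2 ha₀.2⟩))
      have h1 : (1:ℝ) ≤ max C₀ 1 := le_max_right _ _
      refine ⟨max C₀ 1 + 1, by linarith, fun r hr => ⟨hg_nonneg r hr, ?_⟩⟩
      rcases le_total r a₀ with h | h
      · have h2 := hC₀ r ⟨hr.1, h⟩
        rw [Real.norm_eq_abs] at h2
        have h3 := le_trans (le_abs_self (g r)) h2
        have h4 := le_max_left C₀ 1
        linarith
      · have h2 := hsmall r ⟨h, hr.2⟩
        linarith
    · push_neg at hsmall
      obtain ⟨a, ha, hga⟩ := hsmall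
      have ha0 : 0 < a := lt_of_lt_of_le ha₀.1 ha.1
      have haR : a < R₀ := ha.2
      have hg1 : ∀ r ∈ Ico a R₀, 1 ≤ g r :=
        fun r hr => le_trans hga (hmono ha ⟨le_trans ha.1 hr.1, hr.2⟩ hr.1)
      set C₂ : ℝ := R₀ / c with hC₂_def
      set C₃ : ℝ := c / ((c - 1) * a) with hC₃_def
      have hc1a : (0:ℝ) < (c - 1) * a := mul_pos (by linarith) ha0
      have hC₃0 : 0 < C₃ := div_pos (by linarith) hc1a
      have hkey : ∀ r ∈ Ico a R₀, g r < C₃ * (f r + C₂) := by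
        intro r hr
        have hrI : r ∈ Ico a₀ R₀ := ⟨le_trans ha.1 hr.1, hr.2⟩
        have hQ := hQn r hrI
        simp only [hQ_def] at hQ
        have hg1r := hg1 r hr
        have har : a ≤ r := hr.1
        have hrR : r < R₀ := hr.2
        rw [hC₃_def, hC₂_def, div_mul_eq_mul_div, lt_div_iff₀ hc1a]
        have hexp : c * (f r + R₀ / c) = c * f r + R₀ := by
          field_simp
        rw [hexp]
        have hgr0 : 0 < g r := lt_of_lt_of_le one_pos hg1r
        have key1 : (c - 1) * r * g r ^ 2 - r < c * f r * g r := by nlinarith [hQ]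
        have key2 : (c - 1) * a * g r ^ 2 ≤ (c - 1) * r * g r ^ 2 := by
          have h9 : (c - 1) * a ≤ (c - 1) * r := by nlinarith
          exact mul_le_mul_of_nonneg_right h9 (sq_nonneg _)
        have key3 : r ≤ R₀ * g r := by nlinarith
        have key4 : (c - 1) * a * g r ^ 2 < (c * f r + R₀) * g r := by nlinarith
        nlinarith [key4, hgr0]
      have hfpos : ∀ r ∈ Ico a R₀, 0 < f r + C₂ := by
        intro r hr
        have h1 := hg1 r hr
        have h2 := hkey r hr
        nlinarith
      set W : ℝ → ℝ := fun r => Real.log (f r + C₂) - C₃ * r with hW_def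
      have hWd : ∀ r ∈ Ioo a R₀, HasDerivAt W (g r / (f r + C₂) - C₃) r := by
        intro r hr
        have hrI : r ∈ Ioo (0:ℝ) R₀ := ⟨lt_trans ha0 hr.1, hr.2⟩
        have hfd : HasDerivAt (fun x => f x + C₂) (g r) r := ((hfD r hrI).hasDerivAt).add_const C₂
        have hlog := hfd.log (ne_of_gt (hfpos r ⟨hr.1.le, hr.2⟩))
        have hlin : HasDerivAt (fun x => C₃ * x) (C₃ * 1) r := (hasDerivAt_id r).const_mul C₃
        have h6 := hlog.sub hlin
        rw [hW_def]
        refine h6.congr_deriv ?_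
        ring
      have hWc : ContinuousOn W (Ico a R₀) := by
        rw [hW_def]
        apply ContinuousOn.sub
        · apply ContinuousOn.log
          · exact (hfC.mono (fun x hx => ⟨le_trans ha0.le hx.1, hx.2⟩)).add continuousOn_const
          · exact fun x hx => ne_of_gt (hfpos x hx)
        · exact continuousOn_const.mul continuousOn_id
      have hWanti : AntitoneOn W (Ico a R₀) := by
        apply antitoneOn_of_deriv_nonpos (convex_Ico _ _) hWc
        · rw [interior_Ico]
          exact fun x hx => (hWd x hx).differentiableAt.differentiableWithinAt
        · rw [interior_Ico]
          intro x hx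
          rw [(hWd x hx).deriv]
          have h1 := hkey x ⟨hx.1.le, hx.2⟩
          have h2 := hfpos x ⟨hx.1.le, hx.2⟩
          rw [sub_nonpos, div_le_iff₀ h2]
          linarith
      set K₁ : ℝ := C₃ * ((f a + C₂) * Real.exp (C₃ * R₀)) with hK₁_def
      have hbound2 : ∀ r ∈ Ico a R₀, g r < K₁ := by
        intro r hr
        have hW := hWanti (left_mem_Ico.2 haR) hr hr.1
        have hfr := hfpos r hr
        have hfa := hfpos a (left_mem_Ico.2 haR)
        simp only [hW_def] at hW
        have hlog : Real.log (f r + C₂) ≤ Real.log (f a + C₂) + C₃ * R₀ := by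
          have h3 : C₃ * (r - a) ≤ C₃ * R₀ := by
            apply mul_le_mul_of_nonneg_left _ hC₃0.le
            have := hr.2
            linarith
          linarith
        have hexp : f r + C₂ ≤ (f a + C₂) * Real.exp (C₃ * R₀) := by
          rw [← Real.exp_log hfa, ← Real.exp_add]
          exact (Real.log_le_iff_le_exp hfr).1 hlog
        calc g r < C₃ * (f r + C₂) := hkey r hr
        _ ≤ K₁ := by rw [hK₁_def]; exact mul_le_mul_of_nonneg_left hexp hC₃0.le
      obtain ⟨C₀, hC₀⟩ := (isCompact_Icc : IsCompact (Icc (0:ℝ) a)).exists_bound_of_continuousOn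
        (hgC.mono (fun x hx => ⟨hx.1, lt_of_le_of_lt hx.2 haR⟩))
      have hC₀0 : 0 ≤ C₀ := le_trans (norm_nonneg _) (hC₀ 0 ⟨le_refl 0, ha0.le⟩)
      have hM : 0 ≤ max C₀ K₁ := le_trans hC₀0 (le_max_left _ _)
      refine ⟨max C₀ K₁ + 1, by linarith, fun r hr => ⟨hg_nonneg r hr, ?_⟩⟩
      rcases le_total r a with h | h
      · have h1 := hC₀ r ⟨hr.1, h⟩
        rw [Real.norm_eq_abs] at h1
        have h2 := le_trans (le_abs_self (g r)) h1
        have h3 := le_max_left C₀ K₁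
        linarith
      · have h1 := hbound2 r ⟨h, hr.2⟩
        have h2 := le_max_right C₀ K₁
        linarith
end

section
/- Let n ≥ 2, λ > 1/(n−1), μ < 0, and let f be the unique global solution on [0,∞) of f'' + ((n-1)/r)(1+f'²)f' = (1/λ)(1+f'²)²/(r f' − f) with f(0) = μ, f'(0) = 0 and r f'(r) > f(r) for all r ≥ 0. Then f''(r) > 0 for all r > 0 and lim_{r→∞} f(r) = ∞. -/
open Set Filter intervalIntegral Real


noncomputable def phi (x : ℝ) : ℝ := x / Real.sqrt (1 + x ^ 2)

lemma sq_add_pos (x : ℝ) : (0:ℝ) < 1 + x ^ 2 := by positivity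

lemma hasDerivAt_phi (x : ℝ) :
    HasDerivAt phi (((1 + x ^ 2) * Real.sqrt (1 + x ^ 2))⁻¹) x := by
  have h0 : (0:ℝ) < 1 + x ^ 2 := sq_add_pos x
  have hs : HasDerivAt (fun y : ℝ => Real.sqrt (1 + y ^ 2))
      (x / Real.sqrt (1 + x ^ 2)) x := by
    have h1 : HasDerivAt (fun y : ℝ => 1 + y ^ 2) (2 * x) x := by
      simpa using (hasDerivAt_pow 2 x).const_add 1
    have := (Real.hasDerivAt_sqrt h0.ne').comp x h1
    refine this.congr_deriv ?_
    field_simp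
  have hsq : Real.sqrt (1 + x ^ 2) > 0 := Real.sqrt_pos.mpr h0
  have := (hasDerivAt_id x).div hs hsq.ne'
  refine this.congr_deriv ?_
  have hss : Real.sqrt (1 + x ^ 2) * Real.sqrt (1 + x ^ 2) = 1 + x ^ 2 :=
    Real.mul_self_sqrt h0.le
  rw [Real.sq_sqrt h0.le]
  field_simp
  simp only [id_eq]
  nlinarith [hsq, hss, Real.sq_sqrt h0.le]

lemma phi_deriv_pos (x : ℝ) : 0 < ((1 + x ^ 2) * Real.sqrt (1 + x ^ 2))⁻¹ := by
  have h0 : (0:ℝ) < 1 + x ^ 2 := sq_add_pos x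
  have := Real.sqrt_pos.mpr h0
  positivity

lemma phi_pos_iff (x : ℝ) : 0 < phi x ↔ 0 < x := by
  unfold phi
  constructor
  · intro h
    by_contra hx
    push_neg at hx
    have : x / Real.sqrt (1 + x ^ 2) ≤ 0 :=
      div_nonpos_of_nonpos_of_nonneg hx (Real.sqrt_nonneg _)
    linarith
  · intro h
    exact div_pos h (Real.sqrt_pos.mpr (sq_add_pos x))

lemma phi_key (x : ℝ) : ((1 + x ^ 2) * Real.sqrt (1 + x ^ 2))⁻¹ * ((1 + x ^ 2) * x) = phi x := by
  have h0 : (0:ℝ) < 1 + x ^ 2 := sq_add_pos x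
  have hsq : Real.sqrt (1 + x ^ 2) > 0 := Real.sqrt_pos.mpr h0
  unfold phi
  field_simp

lemma phi_deriv_le_one (x : ℝ) : ((1 + x ^ 2) * Real.sqrt (1 + x ^ 2))⁻¹ ≤ 1 := by
  have h0 : (0:ℝ) < 1 + x ^ 2 := sq_add_pos x
  have h1 : (1:ℝ) ≤ Real.sqrt (1 + x ^ 2) := by
    have hss := Real.sq_sqrt h0.le
    nlinarith [Real.sqrt_nonneg (1 + x ^ 2)]
  have : (1:ℝ) ≤ (1 + x ^ 2) * Real.sqrt (1 + x ^ 2) := by nlinarith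
  exact inv_le_one_of_one_le₀ this

lemma phi_le (x : ℝ) (e : ℝ) (he : 0 ≤ e) (hx : 0 ≤ x) (hxe : x ^ 2 ≤ e) :
    x ≤ phi x * (1 + e) := by
  unfold phi
  have h0 : (0:ℝ) < 1 + x ^ 2 := sq_add_pos x
  have hsq : Real.sqrt (1 + x ^ 2) > 0 := Real.sqrt_pos.mpr h0
  rw [div_mul_eq_mul_div, le_div_iff₀ hsq]
  have : Real.sqrt (1 + x ^ 2) ≤ 1 + e := by
    rw [show (1:ℝ) + e = Real.sqrt ((1+e)^2) by rw [Real.sqrt_sq (by linarith)]]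
    apply Real.sqrt_le_sqrt; nlinarith
  nlinarith

lemma continuous_phi : Continuous phi := by
  apply Continuous.div continuous_id
  · exact Real.continuous_sqrt.comp (by continuity)
  · exact fun x => (Real.sqrt_pos.mpr (sq_add_pos x)).ne'

lemma phi_zero : phi 0 = 0 := by simp [phi]

lemma eps_ineq (N : ℝ) (hN : 2 ≤ N) : (N - 1) * (1 + 1/(8*N))^3 < N * (1 - 1/(8*N)) := by
  have h8 : (0:ℝ) < 8*N := by linarith
  have key : (N-1) * (8*N + 1)^3 < N * (8*N - 1) * (8*N)^2 := by nlinarith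
  have e1 : (1 + 1/(8*N)) = (8*N+1)/(8*N) := by field_simp
  have e2 : (1 - 1/(8*N)) = (8*N-1)/(8*N) := by field_simp
  rw [e1, e2, div_pow, ← mul_div_assoc, ← mul_div_assoc,
    div_lt_div_iff₀ (by positivity) h8]
  nlinarith [key]

section Main

/-- `f` is a global `C¹([0,∞)) ∩ C²((0,∞))` solution of the radially symmetric
self-similar inverse mean curvature flow ODE
`f'' + ((n-1)/r)(1+f'²)f' = (1/λ)(1+f'²)²/(r f' - f)`
with `f(0) = μ`, `f'(0) = 0` and `r f'(r) - f(r) > 0` on `[0,∞)`. -/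
def IsIMCFSolGlobal (n : ℕ) (lam mu : ℝ) (f : ℝ → ℝ) : Prop :=
  ContinuousOn f (Set.Ici 0) ∧
  ContinuousOn (deriv f) (Set.Ici 0) ∧
  (∀ r ∈ Set.Ioi (0 : ℝ), DifferentiableAt ℝ f r) ∧
  (∀ r ∈ Set.Ioi (0 : ℝ), DifferentiableAt ℝ (deriv f) r) ∧
  ContinuousOn (deriv (deriv f)) (Set.Ioi 0) ∧
  (∀ r ∈ Set.Ioi (0 : ℝ),
    deriv (deriv f) r + ((n : ℝ) - 1) / r * (1 + (deriv f r) ^ 2) * deriv f r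
      = 1 / lam * (1 + (deriv f r) ^ 2) ^ 2 / (r * deriv f r - f r)) ∧
  f 0 = mu ∧ deriv f 0 = 0 ∧
  (∀ r ∈ Set.Ici (0 : ℝ), r * deriv f r - f r > 0)

set_option maxHeartbeats 2000000 in
/-- global convexity and divergence of `f`. -/
theorem imcf_global_convexity_and_divergence (n : ℕ) (hn : 2 ≤ n)
    (lam mu : ℝ) (hlam : 1 / ((n : ℝ) - 1) < lam) (hmu : mu < 0)
    (f : ℝ → ℝ) (hf : IsIMCFSolGlobal n lam mu f) :
    (∀ r ∈ Set.Ioi (0 : ℝ), 0 < deriv (deriv f) r) ∧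
      Filter.Tendsto f Filter.atTop Filter.atTop := by
  obtain ⟨hc, hc', hd, hd', hc'', hode, h0, h0', hw⟩ := hf
  have hn1 : (1:ℝ) ≤ (n:ℝ) - 1 := by
    have : (2:ℝ) ≤ (n:ℝ) := by exact_mod_cast hn
    linarith
  have hlam0 : 0 < lam := lt_trans (by positivity) hlam
  set m : ℕ := n - 1 with hm_def
  have hm1 : 1 ≤ m := by omega
  have hmn : m + 1 = n := by omega
  have hmcast : (m:ℝ) = (n:ℝ) - 1 := by
    have : ((n - 1 : ℕ) : ℝ) = (n:ℝ) - 1 := by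
      push_cast [Nat.cast_sub (by omega : 1 ≤ n)]; ring
    simpa [hm_def] using this
  set Q : ℝ → ℝ := fun r => 1 / lam * (1 + (deriv f r) ^ 2) ^ 2 / (r * deriv f r - f r)
    with hQ_def
  have hQpos : ∀ r ∈ Set.Ici (0:ℝ), 0 < Q r := by
    intro r hr
    have hwr := hw r hr
    have : (0:ℝ) < (1 + (deriv f r)^2)^2 := by positivity
    exact div_pos (by positivity) hwr
  have hode' : ∀ r ∈ Set.Ioi (0:ℝ),
      deriv (deriv f) r = Q r - ((n:ℝ) - 1) / r * (1 + (deriv f r) ^ 2) * deriv f r := by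
    intro r hr
    have := hode r hr
    rw [hQ_def]
    linarith
  -- derivative of v = r^m * phi (deriv f r)
  have hvd : ∀ r ∈ Set.Ioi (0:ℝ), HasDerivAt (fun s => s ^ m * phi (deriv f s))
      (r ^ m * (((1 + (deriv f r) ^ 2) * Real.sqrt (1 + (deriv f r) ^ 2))⁻¹ * Q r)) r := by
    intro r hr
    have hr0 : (0:ℝ) < r := hr
    have hp' := (hd' r hr).hasDerivAt
    have hphi := (hasDerivAt_phi (deriv f r)).comp r hp'
    have hpow := hasDerivAt_pow m r
    have hmul := hpow.mul hphi
    refine hmul.congr_deriv ?_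
    simp only [Function.comp_apply]
    rw [hode' r hr, ← phi_key (deriv f r), hmcast]
    have hmr : r ^ m = r * r ^ (m - 1) := by
      conv_lhs => rw [show m = (m - 1) + 1 by omega, pow_succ']
    rw [hmr]
    field_simp
    ring
  -- v is continuous on Ici 0
  have hvc : ContinuousOn (fun s => s ^ m * phi (deriv f s)) (Set.Ici 0) :=
    (continuousOn_pow m).mul (continuous_phi.comp_continuousOn hc')
  -- v strict mono on Ici 0
  have hvmono : StrictMonoOn (fun s => s ^ m * phi (deriv f s)) (Set.Ici 0) := by
    apply strictMonoOn_of_deriv_pos (convex_Ici 0) hvc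
    intro x hx
    rw [interior_Ici] at hx
    rw [(hvd x hx).deriv]
    have hx0 : (0:ℝ) < x := hx
    have := hQpos x (le_of_lt hx0)
    have := phi_deriv_pos (deriv f x)
    positivity
  have hv0 : (fun s : ℝ => s ^ m * phi (deriv f s)) 0 = 0 := by
    simp [zero_pow (by omega : m ≠ 0)]
  have hppos : ∀ r ∈ Set.Ioi (0:ℝ), 0 < deriv f r := by
    intro r hr
    have hr0 : (0:ℝ) < r := hr
    have hv := hvmono (self_mem_Ici) (le_of_lt hr0) hr0
    rw [hv0] at hv
    have h2 : (0:ℝ) < r ^ m * phi (deriv f r) := hv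
    have hrm : (0:ℝ) < r ^ m := by positivity
    have hphi : 0 < phi (deriv f r) := by
      by_contra hcon
      push_neg at hcon
      nlinarith [h2, hrm, hcon]
    exact (phi_pos_iff _).mp hphi
  -- Step B: setup near 0
  set c : ℝ := Q 0 with hc_def
  have hcpos : 0 < c := hQpos 0 self_mem_Ici
  set ε : ℝ := 1 / (8 * (n:ℝ)) with hε_def
  have hn0 : (0:ℝ) < (n:ℝ) := by positivity
  have hεpos : 0 < ε := by positivity
  have hwc : ContinuousOn (fun r => r * deriv f r - f r) (Set.Ici 0) :=
    (continuousOn_id.mul hc').sub hc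
  have hQc : ContinuousOn Q (Set.Ici 0) := by
    rw [hQ_def]
    exact (continuousOn_const.mul ((continuousOn_const.add (hc'.pow 2)).pow 2)).div
      hwc (fun r hr => (hw r hr).ne')
  have tQ : Filter.Tendsto Q (nhdsWithin 0 (Set.Ici 0)) (nhds c) := hQc 0 self_mem_Ici
  have tp : Filter.Tendsto (fun r => (deriv f r)^2) (nhdsWithin 0 (Set.Ici 0)) (nhds 0) := by
    have h1 := (hc' 0 self_mem_Ici).pow 2
    have h00 : (deriv f 0)^2 = 0 := by rw [h0']; ring
    exact (by simpa [ContinuousWithinAt, h00] using h1 : Tendsto (deriv f ^ 2) _ _)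
  have hUmem : {r : ℝ | Q r < c * (1 + ε) ∧ c * (1 - ε) < Q r ∧ (deriv f r)^2 < ε}
      ∈ nhdsWithin (0:ℝ) (Set.Ici 0) := by
    have e1 : ∀ᶠ r in nhdsWithin (0:ℝ) (Set.Ici 0), Q r < c * (1 + ε) :=
      tQ.eventually_lt_const (by nlinarith)
    have e2 : ∀ᶠ r in nhdsWithin (0:ℝ) (Set.Ici 0), c * (1 - ε) < Q r :=
      tQ.eventually_const_lt (by nlinarith)
    have e3 : ∀ᶠ r in nhdsWithin (0:ℝ) (Set.Ici 0), (deriv f r)^2 < ε :=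
      tp.eventually_lt_const hεpos
    filter_upwards [e1, e2, e3] with r h1 h2 h3
    exact ⟨h1, h2, h3⟩
  obtain ⟨u, hu, hIco⟩ := mem_nhdsGE_iff_exists_Ico_subset.mp hUmem
  have hu0 : (0:ℝ) < u := hu
  set δ : ℝ := u / 2 with hδ_def
  have hδ0 : 0 < δ := by positivity
  have hδu : δ < u := by rw [hδ_def]; linarith
  have hcond : ∀ r ∈ Set.Icc (0:ℝ) δ,
      Q r < c * (1 + ε) ∧ c * (1 - ε) < Q r ∧ (deriv f r)^2 < ε := by
    intro r hr
    exact hIco ⟨hr.1, lt_of_le_of_lt hr.2 hδu⟩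
  -- comparison function V
  set V : ℝ → ℝ := fun r => c * (1 + ε) / (n:ℝ) * r ^ n - r ^ m * phi (deriv f r)
    with hV_def
  have hVd : ∀ x ∈ Set.Ioi (0:ℝ), HasDerivAt V
      (c * (1 + ε) * x ^ m
        - x ^ m * (((1 + (deriv f x) ^ 2) * Real.sqrt (1 + (deriv f x) ^ 2))⁻¹ * Q x)) x := by
    intro x hx
    have h1 := (hasDerivAt_pow n x).const_mul (c * (1 + ε) / (n:ℝ))
    have h2 := hvd x hx
    have := h1.sub h2
    refine this.congr_deriv ?_
    have : n - 1 = m := rfl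
    rw [this]
    field_simp
  have hVmono : MonotoneOn V (Set.Icc 0 δ) := by
    apply monotoneOn_of_deriv_nonneg (convex_Icc 0 δ)
    · apply ContinuousOn.sub
      · exact (continuousOn_const.mul (continuousOn_pow n)).mono
          (fun x hx => hx.1)
      · exact hvc.mono (fun x hx => hx.1)
    · intro x hx
      rw [interior_Icc] at hx
      exact ((hVd x hx.1).differentiableAt).differentiableWithinAt
    · intro x hx
      rw [interior_Icc] at hx
      rw [(hVd x hx.1).deriv]
      have hx0 : (0:ℝ) < x := hx.1
      obtain ⟨hq1, hq2, hq3⟩ := hcond x ⟨hx0.le, hx.2.le⟩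
      have hqp := hQpos x hx0.le
      have hφ1 := phi_deriv_le_one (deriv f x)
      have hφ0 := phi_deriv_pos (deriv f x)
      have hxm : (0:ℝ) < x ^ m := by positivity
      have : ((1 + (deriv f x) ^ 2) * Real.sqrt (1 + (deriv f x) ^ 2))⁻¹ * Q x
          ≤ c * (1 + ε) := by nlinarith
      nlinarith
  have hvle : ∀ r ∈ Set.Icc (0:ℝ) δ, r ^ m * phi (deriv f r) ≤ c * (1 + ε) / (n:ℝ) * r ^ n := by
    intro r hr
    have := hVmono (left_mem_Icc.mpr hδ0.le) hr hr.1
    have hV0 : V 0 = 0 := by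
      rw [hV_def]
      simp [zero_pow (by omega : n ≠ 0), zero_pow (by omega : m ≠ 0)]
    rw [hV0] at this
    have : (0:ℝ) ≤ c * (1 + ε) / (n:ℝ) * r ^ n - r ^ m * phi (deriv f r) := this
    linarith
  -- Step B conclusion: convexity on (0, δ]
  have hB : ∀ r ∈ Set.Ioc (0:ℝ) δ, 0 < deriv (deriv f) r := by
    intro r hr
    by_contra hcon
    push_neg at hcon
    have hr0 : (0:ℝ) < r := hr.1
    have hp := hppos r hr0
    obtain ⟨hq1, hq2, hq3⟩ := hcond r ⟨hr0.le, hr.2⟩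
    -- lower bound on p from the ODE
    have hlb : c * (1 - ε) * r ≤ ((n:ℝ) - 1) * (1 + (deriv f r)^2) * deriv f r := by
      have := hode' r hr0
      have h1 : Q r ≤ ((n:ℝ) - 1) / r * (1 + (deriv f r) ^ 2) * deriv f r := by linarith
      have h2 : c * (1 - ε) * r ≤ (((n:ℝ) - 1) / r * (1 + (deriv f r) ^ 2) * deriv f r) * r := by
        nlinarith
      calc c * (1 - ε) * r ≤ (((n:ℝ) - 1) / r * (1 + (deriv f r) ^ 2) * deriv f r) * r := h2
        _ = ((n:ℝ) - 1) * (1 + (deriv f r)^2) * deriv f r := by field_simp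
    -- upper bound on p from the integral bound
    have hub : deriv f r ≤ c * (1 + ε)^2 / (n:ℝ) * r := by
      have h1 := hvle r ⟨hr0.le, hr.2⟩
      have hrm : (0:ℝ) < r ^ m := by positivity
      have hrn : r ^ n = r ^ m * r := by rw [← hmn, pow_succ]
      have h2 : phi (deriv f r) ≤ c * (1 + ε) / (n:ℝ) * r := by
        rw [hrn] at h1
        have := mul_le_mul_of_nonneg_left h1 (le_of_lt (inv_pos.mpr hrm))
        rw [← mul_assoc, inv_mul_cancel₀ hrm.ne', one_mul] at this
        calc phi (deriv f r) = r ^ m * phi (deriv f r) / r ^ m * 1 := by field_simp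
          _ ≤ c * (1 + ε) / (n:ℝ) * r := by
            rw [mul_one]
            rw [div_le_iff₀ hrm]
            nlinarith
      have h3 := phi_le (deriv f r) ε hεpos.le hp.le hq3.le
      calc deriv f r ≤ phi (deriv f r) * (1 + ε) := h3
        _ ≤ c * (1 + ε) / (n:ℝ) * r * (1 + ε) := by nlinarith [phi_pos_iff (deriv f r)]
        _ = c * (1 + ε)^2 / (n:ℝ) * r := by ring
    -- combine to contradict eps_ineq
    have hei := eps_ineq (n:ℝ) (by exact_mod_cast hn)
    have hp2 : (deriv f r)^2 ≤ ε := hq3.le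
    have key1 : c * (1 - ε) * r ≤ ((n:ℝ) - 1) * (1 + ε) * deriv f r := by
      nlinarith [mul_nonneg (mul_nonneg (by linarith : (0:ℝ) ≤ (n:ℝ)-1) hp.le)
        (by linarith : (0:ℝ) ≤ ε - (deriv f r)^2)]
    have key2 : ((n:ℝ) - 1) * (1 + ε) * deriv f r
        ≤ ((n:ℝ) - 1) * (1 + ε) * (c * (1 + ε)^2 / (n:ℝ) * r) := by
      have hnn : (0:ℝ) ≤ ((n:ℝ) - 1) * (1 + ε) :=
        mul_nonneg (by linarith) (by linarith)
      have := mul_le_mul_of_nonneg_left hub hnn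
      linarith
    rw [← hε_def] at hei
    have hfinal : (n:ℝ) * (c * (1 - ε) * r) ≤ ((n:ℝ) - 1) * (1 + ε)^3 * (c * r) := by
      have h12 := le_trans key1 key2
      have hne : (n:ℝ) ≠ 0 := hn0.ne'
      calc (n:ℝ) * (c * (1 - ε) * r) ≤ (n:ℝ) * (((n:ℝ)-1) * (1 + ε) * (c * (1 + ε)^2 / (n:ℝ) * r)) := by
            have := mul_le_mul_of_nonneg_left h12 hn0.le
            linarith
        _ = ((n:ℝ) - 1) * (1 + ε)^3 * (c * r) := by field_simp
    have hcr : (0:ℝ) < c * r := by positivity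
    have hmul := mul_lt_mul_of_pos_right hei hcr
    nlinarith [hfinal, hmul]
  -- Step C: convexity everywhere
  have part1 : ∀ r ∈ Set.Ioi (0:ℝ), 0 < deriv (deriv f) r := by
    by_contra hcon
    push_neg at hcon
    obtain ⟨r₁, hr₁, hr₁le⟩ := hcon
    set S : Set ℝ := {r | δ ≤ r ∧ deriv (deriv f) r ≤ 0} with hS_def
    have hr₁S : r₁ ∈ S := by
      refine ⟨?_, hr₁le⟩
      by_contra hle
      push_neg at hle
      exact absurd hr₁le (not_le.mpr (hB r₁ ⟨hr₁, hle.le⟩))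
    have hSclosed : IsClosed S := by
      have h1 : ContinuousOn (deriv (deriv f)) (Set.Ici δ) :=
        hc''.mono (fun x hx => lt_of_lt_of_le hδ0 hx)
      have h2 := h1.preimage_isClosed_of_isClosed isClosed_Ici
        (isClosed_Iic (a := (0:ℝ)))
      convert h2 using 1
      rfl
    have hSne : S.Nonempty := ⟨r₁, hr₁S⟩
    have hSbdd : BddBelow S := ⟨δ, fun x hx => hx.1⟩
    set r₀ := sInf S with hr0_def
    have hr₀S : r₀ ∈ S := hSclosed.csInf_mem hSne hSbdd
    have hr₀δ : δ ≤ r₀ := hr₀S.1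
    have hr₀pos : 0 < r₀ := lt_of_lt_of_le hδ0 hr₀δ
    have hleft : ∀ x, 0 < x → x < r₀ → 0 < deriv (deriv f) x := by
      intro x hx0 hxr
      rcases le_or_gt x δ with h | h
      · exact hB x ⟨hx0, h⟩
      · by_contra hcc
        push_neg at hcc
        have hxS : x ∈ S := ⟨h.le, hcc⟩
        exact absurd (csInf_le hSbdd hxS) (not_le.mpr hxr)
    have hzero : deriv (deriv f) r₀ = 0 := by
      refine le_antisymm hr₀S.2 ?_
      have hct : ContinuousAt (deriv (deriv f)) r₀ :=
        hc''.continuousAt (Ioi_mem_nhds hr₀pos)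
      have hev : ∀ᶠ x in nhdsWithin r₀ (Set.Iio r₀), 0 ≤ deriv (deriv f) x := by
        filter_upwards [self_mem_nhdsWithin,
          mem_nhdsWithin_of_mem_nhds (Ioi_mem_nhds hr₀pos)] with x hx1 hx2
        exact (hleft x hx2 hx1).le
      exact ge_of_tendsto (hct.tendsto.mono_left nhdsWithin_le_nhds) hev
    have hp₀ : 0 < deriv f r₀ := hppos r₀ hr₀pos
    have hfd : HasDerivAt f (deriv f r₀) r₀ := (hd r₀ hr₀pos).hasDerivAt
    have hpd : HasDerivAt (deriv f) 0 r₀ := by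
      have h := (hd' r₀ hr₀pos).hasDerivAt
      rwa [hzero] at h
    have hsq : HasDerivAt (fun r => 1 + deriv f r ^ 2) (2 * deriv f r₀ ^ 1 * 0) r₀ :=
      (hpd.pow 2).const_add 1
    have hnum : HasDerivAt (fun r => 1/lam * (1 + deriv f r ^ 2) ^ 2)
        (1/lam * (2 * (1 + deriv f r₀ ^ 2) ^ 1 * (2 * deriv f r₀ ^ 1 * 0))) r₀ :=
      (hsq.pow 2).const_mul (1/lam)
    have hw₀ : r₀ * deriv f r₀ - f r₀ > 0 := hw r₀ hr₀pos.le
    have hden : HasDerivAt (fun r => r * deriv f r - f r)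
        ((1 * deriv f r₀ + r₀ * 0) - deriv f r₀) r₀ :=
      ((hasDerivAt_id r₀).mul hpd).sub hfd
    have hquot := hnum.div hden hw₀.ne'
    have ha : HasDerivAt (fun r => ((n:ℝ) - 1)/r)
        ((0 * r₀ - ((n:ℝ) - 1) * 1)/r₀^2) r₀ :=
      (hasDerivAt_const r₀ ((n:ℝ) - 1)).div (hasDerivAt_id r₀) hr₀pos.ne'
    have hterm2 := (ha.mul hsq).mul hpd
    have htot := hquot.sub hterm2
    set A : ℝ := ((n:ℝ) - 1)/r₀^2 * (1 + deriv f r₀ ^ 2) * deriv f r₀ with hA_def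
    have hA : HasDerivAt (fun r =>
        1 / lam * (1 + deriv f r ^ 2) ^ 2 / (r * deriv f r - f r)
          - ((n:ℝ) - 1) / r * (1 + deriv f r ^ 2) * deriv f r) A r₀ := by
      refine htot.congr_deriv ?_
      rw [hA_def]
      field_simp
      ring
    have hApos : 0 < A := by
      rw [hA_def]
      have hng : (0:ℝ) < (n:ℝ) - 1 := by linarith
      have := sq_add_pos (deriv f r₀)
      positivity
    have heq : deriv (deriv f) =ᶠ[nhds r₀] (fun r =>
        1 / lam * (1 + deriv f r ^ 2) ^ 2 / (r * deriv f r - f r)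
          - ((n:ℝ) - 1) / r * (1 + deriv f r ^ 2) * deriv f r) := by
      filter_upwards [Ioi_mem_nhds hr₀pos] with x hx
      exact hode' x hx
    have H : HasDerivAt (deriv (deriv f)) A r₀ := hA.congr_of_eventuallyEq heq
    have hslope := hasDerivAt_iff_tendsto_slope.mp H
    have hslope' : Filter.Tendsto (slope (deriv (deriv f)) r₀)
        (nhdsWithin r₀ (Set.Iio r₀)) (nhds A) :=
      hslope.mono_left (nhdsWithin_mono _ (fun x hx => ne_of_lt hx))
    have hev : ∀ᶠ x in nhdsWithin r₀ (Set.Iio r₀), slope (deriv (deriv f)) r₀ x ≤ 0 := by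
      filter_upwards [self_mem_nhdsWithin,
        mem_nhdsWithin_of_mem_nhds (Ioi_mem_nhds hr₀pos)] with x hx1 hx2
      have h1 : 0 < deriv (deriv f) x := hleft x hx2 hx1
      have hxlt : x < r₀ := hx1
      rw [slope_def_field, hzero]
      apply div_nonpos_of_nonneg_of_nonpos
      · linarith
      · linarith
    have : A ≤ 0 := le_of_tendsto hslope' hev
    linarith
  -- Part 2: divergence
  refine ⟨part1, ?_⟩
  have hmono' : StrictMonoOn (deriv f) (Set.Ici 0) := by
    apply strictMonoOn_of_deriv_pos (convex_Ici 0) hc'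
    intro x hx
    rw [interior_Ici] at hx
    exact part1 x hx
  have hp1 : 0 < deriv f 1 := hppos 1 (by norm_num)
  have hg : MonotoneOn (fun r => f r - deriv f 1 * r) (Set.Ici 1) := by
    apply monotoneOn_of_deriv_nonneg (convex_Ici 1)
    · exact (hc.mono (Set.Ici_subset_Ici.mpr zero_le_one)).sub
        ((continuous_const.mul continuous_id).continuousOn)
    · intro x hx
      rw [interior_Ici] at hx
      have hx1 : (1:ℝ) < x := hx
      have hdx := hd x (by norm_num; linarith : x ∈ Set.Ioi (0:ℝ))
      exact ((hdx.hasDerivAt.sub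
        ((hasDerivAt_id x).const_mul (deriv f 1))).differentiableAt).differentiableWithinAt
    · intro x hx
      rw [interior_Ici] at hx
      have hx1 : (1:ℝ) < x := hx
      have hdx := hd x (by norm_num; linarith : x ∈ Set.Ioi (0:ℝ))
      have hder : deriv (fun r => f r - deriv f 1 * r) x = deriv f x - deriv f 1 := by
        have h1 : HasDerivAt (fun r : ℝ => f r - deriv f 1 * r)
            (deriv f x - deriv f 1 * 1) x :=
          hdx.hasDerivAt.sub ((hasDerivAt_id x).const_mul (deriv f 1))
        simpa using h1.deriv
      rw [hder]
      have := hmono' (by norm_num : (1:ℝ) ∈ Set.Ici (0:ℝ))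
        (by norm_num; linarith : x ∈ Set.Ici (0:ℝ)) hx1
      linarith
  have hlin : ∀ r ∈ Set.Ici (1:ℝ), f 1 + deriv f 1 * (r - 1) ≤ f r := by
    intro r hr
    have h := hg self_mem_Ici hr hr
    simp only at h
    nlinarith [h]
  have htend : Filter.Tendsto (fun r => f 1 + deriv f 1 * (r - 1)) Filter.atTop Filter.atTop := by
    apply Filter.tendsto_atTop_add_const_left
    apply Filter.Tendsto.const_mul_atTop hp1
    exact tendsto_atTop_add_const_right _ _ tendsto_id
  exact tendsto_atTop_mono'
    _ (by filter_upwards [Filter.eventually_ge_atTop (1:ℝ)] with r hr using hlin r hr) htend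
end Main
end

section
/- Let n ≥ 2, λ > 1/(n−1), μ < 0, and let f be the unique global solution on [0,∞) of f'' + ((n-1)/r)(1+f'²)f' = (1/λ)(1+f'²)²/(r f' − f) with f(0) = μ, f'(0) = 0 and r f'(r) > f(r) for all r ≥ 0. Then lim_{r→∞} f'(r) = ∞. -/
open Set Filter intervalIntegral Real

namespace IMCFAux

private lemma aux_cube {p M : ℝ} (h0 : 0 ≤ p) (h : p ≤ M) :
    (1 + p ^ 2) * p ≤ (1 + M ^ 2) * M := by
  nlinarith [sq_nonneg p, sq_nonneg M, sq_nonneg (M - p), sq_nonneg (M + p)]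

/-- If the derivative of `g` at `c` is positive, there are points slightly to the
left of `c` (above any `a < c`) where `g` is smaller. -/
lemma exists_lt_left_of_deriv_pos {g : ℝ → ℝ} {c a : ℝ} (ha : a < c)
    (hd : DifferentiableAt ℝ g c) (hpos : 0 < deriv g c) :
    ∃ s, a < s ∧ s < c ∧ g s < g c := by
  have h := hd.hasDerivAt
  rw [hasDerivAt_iff_tendsto_slope] at h
  have h2 : ∀ᶠ s in nhdsWithin c {c}ᶜ, 0 < slope g c s :=
    h.eventually (eventually_gt_nhds hpos)
  have h3 : nhdsWithin c (Set.Iio c) ≤ nhdsWithin c {c}ᶜ :=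
    nhdsWithin_mono c (fun x hx => ne_of_lt hx)
  have h4 : Set.Ioo a c ∈ nhdsWithin c (Set.Iio c) :=
    mem_nhdsLT_iff_exists_Ioo_subset.mpr ⟨a, ha, subset_rfl⟩
  have h5 : ∀ᶠ s in nhdsWithin c (Set.Iio c), 0 < slope g c s := h3 h2
  obtain ⟨s, hs1, hs2⟩ := (h5.and (eventually_of_mem h4 (fun x hx => hx))).exists
  refine ⟨s, hs2.1, hs2.2, ?_⟩
  rw [slope_def_field] at hs1
  rcases div_pos_iff.mp hs1 with ⟨_, hden⟩ | ⟨hnum, _⟩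
  · linarith [hs2.2]
  · linarith

section Main

variable {n : ℕ} {lam mu : ℝ} {f : ℝ → ℝ}

lemma nR_ge_one (hn : 2 ≤ n) : (1 : ℝ) ≤ (n : ℝ) - 1 := by
  have : (2 : ℝ) ≤ (n : ℝ) := by exact_mod_cast hn
  linarith

lemma lam_pos (hn : 2 ≤ n) (hlam : 1 / ((n : ℝ) - 1) < lam) : 0 < lam := by
  have h1 := nR_ge_one hn
  have : 0 < 1 / ((n : ℝ) - 1) := by positivity
  linarith

lemma h_pos (hf : IsIMCFSolGlobal n lam mu f) {r : ℝ} (hr : 0 ≤ r) :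
    0 < r * deriv f r - f r := hf.2.2.2.2.2.2.2.2 r hr

lemma deriv2_eq (hf : IsIMCFSolGlobal n lam mu f) {r : ℝ} (hr : 0 < r) :
    deriv (deriv f) r = 1 / lam * (1 + (deriv f r) ^ 2) ^ 2 / (r * deriv f r - f r)
      - ((n : ℝ) - 1) / r * (1 + (deriv f r) ^ 2) * deriv f r := by
  have := hf.2.2.2.2.2.1 r hr
  linarith

lemma deriv2_pos_of_nonpos (hn : 2 ≤ n) (hlam : 1 / ((n : ℝ) - 1) < lam)
    (hf : IsIMCFSolGlobal n lam mu f) {r : ℝ} (hr : 0 < r) (hp : deriv f r ≤ 0) :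
    0 < deriv (deriv f) r := by
  rw [deriv2_eq hf hr]
  have hA : 0 < 1 / lam * (1 + (deriv f r) ^ 2) ^ 2 / (r * deriv f r - f r) := by
    have h1 := lam_pos hn hlam
    have h2 := h_pos hf hr.le
    positivity
  have hB : ((n : ℝ) - 1) / r * (1 + (deriv f r) ^ 2) * deriv f r ≤ 0 := by
    have h1 := nR_ge_one hn
    have h3 : 0 ≤ ((n : ℝ) - 1) / r := by positivity
    have h4 : 0 < 1 + (deriv f r) ^ 2 := by positivity
    have : 0 ≤ ((n : ℝ) - 1) / r * (1 + (deriv f r) ^ 2) := by positivity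
    exact mul_nonpos_of_nonneg_of_nonpos this hp
  linarith

lemma deriv_nonneg (hn : 2 ≤ n) (hlam : 1 / ((n : ℝ) - 1) < lam)
    (hf : IsIMCFSolGlobal n lam mu f) {r : ℝ} (hr : 0 ≤ r) :
    0 ≤ deriv f r := by
  by_contra hneg
  push_neg at hneg
  have hr0 : r ≠ 0 := by
    intro h; rw [h] at hneg; rw [hf.2.2.2.2.2.2.2.1] at hneg; exact lt_irrefl _ hneg
  have hrpos : 0 < r := lt_of_le_of_ne hr (Ne.symm hr0)
  set B : Set ℝ := Icc 0 r ∩ (deriv f) ⁻¹' (Iic (deriv f r)) with hB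
  have hBclosed : IsClosed B :=
    (hf.2.1.mono Icc_subset_Ici_self).preimage_isClosed_of_isClosed isClosed_Icc isClosed_Iic
  have hBne : B.Nonempty := ⟨r, ⟨hr, le_refl r⟩, Set.mem_preimage.mpr (Set.mem_Iic.mpr le_rfl)⟩
  have hBbdd : BddBelow B := ⟨0, fun x hx => hx.1.1⟩
  set c := sInf B with hc
  have hcB : c ∈ B := hBclosed.csInf_mem hBne hBbdd
  have hcpos : 0 < c := by
    rcases lt_or_eq_of_le hcB.1.1 with h | h
    · exact h
    · exfalso
      have : deriv f c ≤ deriv f r := hcB.2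
      rw [← h, hf.2.2.2.2.2.2.2.1] at this
      linarith
  have hd2 : 0 < deriv (deriv f) c :=
    deriv2_pos_of_nonpos hn hlam hf hcpos (le_trans hcB.2 hneg.le)
  obtain ⟨s, hs0, hsc, hsv⟩ :=
    exists_lt_left_of_deriv_pos hcpos (hf.2.2.2.1 c hcpos) hd2
  have hsB : s ∈ B := ⟨⟨hs0.le, le_trans hsc.le hcB.1.2⟩, le_trans hsv.le hcB.2⟩
  exact absurd (csInf_le hBbdd hsB) (not_le.mpr hsc)

lemma deriv_pos (hn : 2 ≤ n) (hlam : 1 / ((n : ℝ) - 1) < lam)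
    (hf : IsIMCFSolGlobal n lam mu f) {r : ℝ} (hr : 0 < r) :
    0 < deriv f r := by
  rcases lt_or_eq_of_le (deriv_nonneg hn hlam hf hr.le) with h | h
  · exact h
  · exfalso
    have hd2 : 0 < deriv (deriv f) r :=
      deriv2_pos_of_nonpos hn hlam hf hr h.ge
    obtain ⟨s, hs0, hsr, hsv⟩ :=
      exists_lt_left_of_deriv_pos hr (hf.2.2.2.1 r hr) hd2
    have := deriv_nonneg hn hlam hf (le_of_lt hs0)
    rw [← h] at hsv
    linarith


lemma hasDerivAt_hfun (hf : IsIMCFSolGlobal n lam mu f) {r : ℝ} (hr : 0 < r) :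
    HasDerivAt (fun s => s * deriv f s - f s) (r * deriv (deriv f) r) r := by
  have h1 : HasDerivAt (fun s : ℝ => s) 1 r := hasDerivAt_id r
  have h2 : HasDerivAt (deriv f) (deriv (deriv f) r) r := (hf.2.2.2.1 r hr).hasDerivAt
  have h3 : HasDerivAt f (deriv f r) r := (hf.2.2.1 r hr).hasDerivAt
  have h4 := (h1.mul h2).sub h3
  exact h4.congr_deriv (by ring)

/-- An auxiliary form of the right-hand side of the ODE. -/
noncomputable def G (n : ℕ) (lam : ℝ) (f : ℝ → ℝ) : ℝ → ℝ :=
  fun s => 1 / lam * (1 + (deriv f s) ^ 2) ^ 2 * (s * deriv f s - f s)⁻¹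
    - ((n : ℝ) - 1) * (s⁻¹ * ((1 + (deriv f s) ^ 2) * deriv f s))

lemma deriv2_eq_G (hf : IsIMCFSolGlobal n lam mu f) {r : ℝ} (hr : 0 < r) :
    deriv (deriv f) r = G n lam f r := by
  rw [deriv2_eq hf hr, G]
  rw [div_eq_mul_inv, div_eq_mul_inv]
  ring

lemma hasDerivAt_G_at_crit (hf : IsIMCFSolGlobal n lam mu f) {c : ℝ} (hc : 0 < c)
    (hcrit : deriv (deriv f) c = 0) :
    HasDerivAt (G n lam f)
      (((n : ℝ) - 1) * (1 + (deriv f c) ^ 2) * deriv f c / c ^ 2) c := by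
  have hp : HasDerivAt (deriv f) 0 c := by
    have h := (hf.2.2.2.1 c hc).hasDerivAt; rwa [hcrit] at h
  have hfc : HasDerivAt f (deriv f c) c := (hf.2.2.1 c hc).hasDerivAt
  have hh : HasDerivAt (fun s => s * deriv f s - f s) 0 c := by
    have h := ((hasDerivAt_id c).mul hp).sub hfc
    exact h.congr_deriv (by ring)
  have hne : (c * deriv f c - f c) ≠ 0 := ne_of_gt (h_pos hf hc.le)
  have hq : HasDerivAt (fun s => 1 + (deriv f s) ^ 2) 0 c := by
    have h := (hp.pow 2).const_add 1
    exact h.congr_deriv (by simp)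
  have hq2 : HasDerivAt (fun s => (1 + (deriv f s) ^ 2) ^ 2) 0 c := by
    have h := hq.pow 2; exact h.congr_deriv (by simp)
  have hN : HasDerivAt (fun s => 1 / lam * (1 + (deriv f s) ^ 2) ^ 2) 0 c := by
    have h := hq2.const_mul (1 / lam); exact h.congr_deriv (by simp)
  have hHinv : HasDerivAt (fun s => (s * deriv f s - f s)⁻¹) 0 c := by
    have h := hh.inv hne; exact h.congr_deriv (by simp)
  have hA : HasDerivAt
      (fun s => 1 / lam * (1 + (deriv f s) ^ 2) ^ 2 * (s * deriv f s - f s)⁻¹) 0 c := by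
    have h := hN.mul hHinv; exact h.congr_deriv (by simp)
  have hI : HasDerivAt (fun s => (1 + (deriv f s) ^ 2) * deriv f s) 0 c := by
    have h := hq.mul hp; exact h.congr_deriv (by simp)
  have hinv : HasDerivAt (fun s : ℝ => s⁻¹) (-(c ^ 2)⁻¹) c := hasDerivAt_inv (ne_of_gt hc)
  have hB1 : HasDerivAt (fun s => s⁻¹ * ((1 + (deriv f s) ^ 2) * deriv f s))
      (-(c ^ 2)⁻¹ * ((1 + (deriv f c) ^ 2) * deriv f c)) c := by
    have h := hinv.mul hI; exact h.congr_deriv (by simp)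
  have hB : HasDerivAt
      (fun s => ((n : ℝ) - 1) * (s⁻¹ * ((1 + (deriv f s) ^ 2) * deriv f s)))
      (((n : ℝ) - 1) * (-(c ^ 2)⁻¹ * ((1 + (deriv f c) ^ 2) * deriv f c))) c :=
    hB1.const_mul _
  have h := hA.sub hB
  have hval : (0 : ℝ) - ((n : ℝ) - 1) * (-(c ^ 2)⁻¹ * ((1 + (deriv f c) ^ 2) * deriv f c))
      = ((n : ℝ) - 1) * (1 + (deriv f c) ^ 2) * deriv f c / c ^ 2 := by
    field_simp
    ring
  rw [hval] at h
  exact h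

lemma no_local_max (hn : 2 ≤ n) (hlam : 1 / ((n : ℝ) - 1) < lam)
    (hf : IsIMCFSolGlobal n lam mu f) {c : ℝ} (hc : 0 < c) :
    ¬ IsLocalMax (deriv f) c := by
  intro hmax
  have hdc : deriv (deriv f) c = 0 := hmax.deriv_eq_zero
  have hpc : 0 < deriv f c := deriv_pos hn hlam hf hc
  have hG : HasDerivAt (G n lam f)
      (((n : ℝ) - 1) * (1 + (deriv f c) ^ 2) * deriv f c / c ^ 2) c :=
    hasDerivAt_G_at_crit hf hc hdc
  have hGval : 0 < ((n : ℝ) - 1) * (1 + (deriv f c) ^ 2) * deriv f c / c ^ 2 := by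
    have h1 := nR_ge_one hn
    have h2 : (0:ℝ) < (n : ℝ) - 1 := by linarith
    positivity
  have hGc : G n lam f c = 0 := by rw [← deriv2_eq_G hf hc, hdc]
  -- G is negative on a left interval of c
  have hslope := hG
  rw [hasDerivAt_iff_tendsto_slope] at hslope
  have h2 : ∀ᶠ s in nhdsWithin c {c}ᶜ, 0 < slope (G n lam f) c s :=
    hslope.eventually (eventually_gt_nhds hGval)
  have h3 : ∀ᶠ s in nhdsWithin c (Set.Iio c), 0 < slope (G n lam f) c s :=
    nhdsWithin_mono c (fun x hx => ne_of_lt hx) h2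
  obtain ⟨l, hl, hsub⟩ := mem_nhdsLT_iff_exists_Ioo_subset.mp h3
  have hGneg : ∀ s ∈ Ioo l c, G n lam f s < 0 := by
    intro s hs
    have h4 := hsub hs
    rw [Set.mem_setOf_eq, slope_def_field, hGc] at h4
    rcases div_pos_iff.mp h4 with ⟨_, hden⟩ | ⟨hnum, _⟩
    · linarith [hs.2]
    · linarith
  -- local max gives ε
  obtain ⟨ε, hε0, hεball⟩ := Metric.eventually_nhds_iff.mp hmax
  -- choose the interval
  set a := max (max l (c - ε / 2)) (c / 2) with ha
  have hac : a < c := by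
    apply max_lt (max_lt hl (by linarith)) (by linarith)
  have ha0 : 0 < a := lt_of_lt_of_le (by linarith : (0:ℝ) < c / 2) (le_max_right _ _)
  have hanti : StrictAntiOn (deriv f) (Icc a c) := by
    apply strictAntiOn_of_deriv_neg (convex_Icc a c)
    · exact hf.2.1.mono (fun x hx => le_trans ha0.le hx.1)
    · intro x hx
      rw [interior_Icc] at hx
      have hx0 : 0 < x := lt_trans ha0 hx.1
      rw [deriv2_eq_G hf hx0]
      apply hGneg
      constructor
      · exact lt_of_le_of_lt (le_trans (le_max_left l _) (le_max_left _ _)) hx.1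
      · exact hx.2
  set m := (a + c) / 2 with hm
  have hm1 : a < m := by rw [hm]; linarith
  have hm2 : m < c := by rw [hm]; linarith
  have hgt : deriv f c < deriv f m :=
    hanti ⟨hm1.le, hm2.le⟩ ⟨hac.le, le_refl c⟩ hm2
  have hmball : dist m c < ε := by
    rw [Real.dist_eq, abs_of_nonpos (by linarith)]
    have : c - ε / 2 ≤ a := le_trans (le_max_right _ _) (le_max_left _ _)
    linarith
  have := hεball hmball
  linarith


lemma bounded_of_not_tendsto (hn : 2 ≤ n) (hlam : 1 / ((n : ℝ) - 1) < lam)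
    (hf : IsIMCFSolGlobal n lam mu f)
    (hT : ¬ Filter.Tendsto (deriv f) Filter.atTop Filter.atTop) :
    ∃ M : ℝ, 0 < M ∧ ∀ r, 0 ≤ r → deriv f r ≤ M := by
  rw [tendsto_atTop] at hT
  push_neg at hT
  obtain ⟨M, hM⟩ := hT
  have hM' : ∀ a : ℝ, ∃ b ≥ a, ¬ M ≤ deriv f b := fun a => by
    obtain ⟨b, hb, h⟩ := frequently_atTop.mp hM a
    exact ⟨b, hb, not_le.mpr h⟩
  obtain ⟨s₁, hs₁1, hs₁M⟩ := hM' 1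
  push_neg at hs₁M
  have hclaim : ∀ b, s₁ < b → deriv f b < M := by
    intro b hb
    by_contra hge
    push_neg at hge
    obtain ⟨s₂, hs₂b, hs₂M⟩ := hM' (b + 1)
    push_neg at hs₂M
    have hs12 : s₁ < s₂ := by linarith
    have hcont : ContinuousOn (deriv f) (Icc s₁ s₂) :=
      hf.2.1.mono (fun x hx => le_trans (by linarith : (0:ℝ) ≤ s₁) hx.1)
    obtain ⟨c, hcmem, hcmax⟩ :=
      (isCompact_Icc).exists_isMaxOn ⟨s₁, le_refl _, hs12.le⟩ hcont
    have hcb : deriv f b ≤ deriv f c := hcmax ⟨hb.le, by linarith⟩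
    have hc1 : s₁ < c := by
      rcases lt_or_eq_of_le hcmem.1 with h | h
      · exact h
      · exfalso; rw [← h] at hcb; linarith
    have hc2 : c < s₂ := by
      rcases lt_or_eq_of_le hcmem.2 with h | h
      · exact h
      · exfalso; rw [h] at hcb; linarith
    have hloc : IsLocalMax (deriv f) c := hcmax.isLocalMax (Icc_mem_nhds hc1 hc2)
    exact no_local_max hn hlam hf (by linarith : (0:ℝ) < c) hloc
  obtain ⟨c₀, hc₀mem, hc₀max⟩ := (isCompact_Icc).exists_isMaxOn
    (⟨0, le_refl _, by linarith⟩ : (Icc (0:ℝ) s₁).Nonempty)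
    (hf.2.1.mono (fun x hx => hx.1))
  refine ⟨max M (deriv f c₀) + 1, ?_, ?_⟩
  · have h0 : 0 ≤ deriv f c₀ := deriv_nonneg hn hlam hf hc₀mem.1
    have h1 : 0 ≤ max M (deriv f c₀) := le_trans h0 (le_max_right _ _)
    linarith
  · intro r hr
    rcases le_or_gt r s₁ with h | h
    · have h1 : deriv f r ≤ deriv f c₀ := hc₀max ⟨hr, h⟩
      have h2 := le_max_right M (deriv f c₀)
      linarith
    · have h1 := hclaim r h
      have h2 := le_max_left M (deriv f c₀)
      linarith

lemma F_strictMono (hf : IsIMCFSolGlobal n lam mu f) :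
    StrictMonoOn (fun r => f r / r) (Ioi 0) := by
  apply strictMonoOn_of_deriv_pos (convex_Ioi 0)
  · exact (hf.1.mono (fun x hx => le_of_lt hx)).div continuousOn_id
      (fun x hx => ne_of_gt hx)
  · intro x hx
    rw [interior_Ioi] at hx
    have hx0 : (0:ℝ) < x := hx
    have hd : HasDerivAt (fun r => f r / r) ((deriv f x * x - f x * 1) / x ^ 2) x :=
      (hf.2.2.1 x hx0).hasDerivAt.div (hasDerivAt_id x) (ne_of_gt hx0)
    rw [hd.deriv]
    have hh := h_pos hf hx0.le
    apply div_pos (by nlinarith) (by positivity)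

lemma barrier (hn : 2 ≤ n) (hlam : 1 / ((n : ℝ) - 1) < lam)
    (hf : IsIMCFSolGlobal n lam mu f) {M : ℝ} (hM : 0 < M)
    (hMb : ∀ r, 0 ≤ r → deriv f r ≤ M) :
    ∃ D K : ℝ, 1 ≤ D ∧ 0 ≤ K ∧ ∀ r, 1 ≤ r → r / D - K ≤ r * deriv f r - f r := by
  have hlam0 := lam_pos hn hlam
  have hn1 := nR_ge_one hn
  set C := ((n:ℝ) - 1) * (1 + M ^ 2) * M with hC
  have hC0 : 0 < C := by positivity
  set c₁ := max 1 (1 / lam) with hc₁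
  have hc₁1 : (1:ℝ) ≤ c₁ := le_max_left _ _
  set D := lam * (C + c₁) with hD
  have hD1 : 1 ≤ D := by
    have h1 : 1 / lam ≤ c₁ := le_max_right _ _
    have h2 : lam * (1 / lam) ≤ lam * c₁ := by nlinarith
    rw [mul_one_div, div_self (ne_of_gt hlam0)] at h2
    nlinarith
  have hD0 : 0 < D := by linarith
  set K := max 0 (1 / D - (1 * deriv f 1 - f 1)) with hK
  have hK0 : 0 ≤ K := le_max_left _ _
  refine ⟨D, K, hD1, hK0, ?_⟩
  intro b hb
  by_contra hlt
  push_neg at hlt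
  set ψ : ℝ → ℝ := fun r => (r * deriv f r - f r) - r / D + K with hψdef
  have hψ1 : 0 ≤ ψ 1 := by
    have h1 : 1 / D - (1 * deriv f 1 - f 1) ≤ K := le_max_right _ _
    simp only [hψdef]
    linarith
  have hψb : ψ b < 0 := by simp only [hψdef]; linarith
  have hb1 : 1 < b := by
    rcases lt_or_eq_of_le hb with h | h
    · exact h
    · exfalso; rw [← h] at hψb; linarith
  have hsubIcc : Icc (1:ℝ) b ⊆ Ici 0 := fun x hx => le_trans (by norm_num) hx.1
  have hψcont : ContinuousOn ψ (Icc 1 b) := by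
    have h1 : ContinuousOn (fun r : ℝ => r * deriv f r - f r) (Icc 1 b) :=
      (continuousOn_id.mul (hf.2.1.mono hsubIcc)).sub (hf.1.mono hsubIcc)
    exact (h1.sub (continuousOn_id.div_const D)).add continuousOn_const
  set S := Icc 1 b ∩ ψ ⁻¹' (Ici 0) with hS
  have hSclosed : IsClosed S :=
    hψcont.preimage_isClosed_of_isClosed isClosed_Icc isClosed_Ici
  have hSne : S.Nonempty := ⟨1, ⟨le_refl _, hb1.le⟩, hψ1⟩
  have hSbdd : BddAbove S := ⟨b, fun x hx => hx.1.2⟩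
  set c₀ := sSup S with hc₀
  have hc₀S : c₀ ∈ S := hSclosed.csSup_mem hSne hSbdd
  have hc₀1 : 1 ≤ c₀ := hc₀S.1.1
  have hc₀b : c₀ < b := by
    rcases lt_or_eq_of_le hc₀S.1.2 with h | h
    · exact h
    · exfalso
      have h2 : 0 ≤ ψ c₀ := hc₀S.2
      rw [h] at h2
      linarith
  have hder : ∀ x ∈ Ioo c₀ b, 0 < deriv ψ x := by
    intro x hx
    have hx1 : 1 ≤ x := le_trans hc₀1 hx.1.le
    have hx0 : 0 < x := by linarith
    have hψx : ψ x < 0 := by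
      by_contra hge
      push_neg at hge
      have hxS : x ∈ S := ⟨⟨hx1, hx.2.le⟩, hge⟩
      exact absurd (le_csSup hSbdd hxS) (not_le.mpr hx.1)
    have hdψ : HasDerivAt ψ (x * deriv (deriv f) x - 1 / D) x := by
      have h1 := hasDerivAt_hfun hf hx0
      have h2 : HasDerivAt (fun r : ℝ => r / D) (1 / D) x := by
        have h3 := (hasDerivAt_id x).div_const D
        exact h3
      exact (h1.sub h2).add_const K
    rw [hdψ.deriv]
    have hp0 : 0 < deriv f x := deriv_pos hn hlam hf hx0
    have hpM : deriv f x ≤ M := hMb x hx0.le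
    have hh0 : 0 < x * deriv f x - f x := h_pos hf hx0.le
    have hhsmall : x * deriv f x - f x < x / D := by
      simp only [hψdef] at hψx
      linarith
    have hDh : D * (x * deriv f x - f x) < x := by
      rw [lt_div_iff₀ hD0] at hhsmall
      nlinarith
    have h1p : (1:ℝ) ≤ (1 + (deriv f x) ^ 2) ^ 2 := by nlinarith
    have hAineq : C + c₁ <
        x * (1 / lam * (1 + (deriv f x) ^ 2) ^ 2 / (x * deriv f x - f x)) := by
      rw [mul_div_assoc', lt_div_iff₀ hh0]
      have he : x * (1 / lam * (1 + (deriv f x) ^ 2) ^ 2)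
          = x * (1 + (deriv f x) ^ 2) ^ 2 / lam := by ring
      rw [he, lt_div_iff₀ hlam0]
      have hx1' : x * 1 ≤ x * (1 + (deriv f x) ^ 2) ^ 2 :=
        mul_le_mul_of_nonneg_left h1p hx0.le
      calc (C + c₁) * (x * deriv f x - f x) * lam
          = D * (x * deriv f x - f x) := by rw [hD]; ring
        _ < x := hDh
        _ = x * 1 := (mul_one x).symm
        _ ≤ x * (1 + (deriv f x) ^ 2) ^ 2 := hx1'
    have hBineq : x * (((n:ℝ) - 1) / x * (1 + (deriv f x) ^ 2) * deriv f x) ≤ C := by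
      have hxne : x ≠ 0 := ne_of_gt hx0
      have he : x * (((n:ℝ) - 1) / x * (1 + (deriv f x) ^ 2) * deriv f x)
          = ((n:ℝ) - 1) * ((1 + (deriv f x) ^ 2) * deriv f x) := by
        field_simp
      rw [he, hC]
      have h2 : (1 + (deriv f x) ^ 2) * deriv f x ≤ (1 + M ^ 2) * M :=
        aux_cube hp0.le hpM
      have h3 : (0:ℝ) < (n:ℝ) - 1 := by linarith
      have h4 := mul_le_mul_of_nonneg_left h2 h3.le
      linarith [h4]
    rw [deriv2_eq hf hx0]
    have hexp : x * (1 / lam * (1 + (deriv f x) ^ 2) ^ 2 / (x * deriv f x - f x)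
        - ((n:ℝ) - 1) / x * (1 + (deriv f x) ^ 2) * deriv f x)
        = x * (1 / lam * (1 + (deriv f x) ^ 2) ^ 2 / (x * deriv f x - f x))
          - x * (((n:ℝ) - 1) / x * (1 + (deriv f x) ^ 2) * deriv f x) := by ring
    rw [hexp]
    have hDinv : 1 / D ≤ 1 := by rw [div_le_one hD0]; exact hD1
    linarith
  have hmono : StrictMonoOn ψ (Icc c₀ b) := by
    apply strictMonoOn_of_deriv_pos (convex_Icc _ _)
    · exact hψcont.mono (Icc_subset_Icc hc₀1 le_rfl)
    · rw [interior_Icc]; exact hder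
  have hfin : ψ c₀ < ψ b :=
    hmono (left_mem_Icc.mpr hc₀b.le) (right_mem_Icc.mpr hc₀b.le) hc₀b
  have h0 : 0 ≤ ψ c₀ := hc₀S.2
  linarith

end Main
end IMCFAux

/-- `lim_{r→∞} f'(r) = ∞`. -/
theorem imcf_deriv_tendsto_atTop (n : ℕ) (hn : 2 ≤ n)
    (lam mu : ℝ) (hlam : 1 / ((n : ℝ) - 1) < lam) (hmu : mu < 0)
    (f : ℝ → ℝ) (hf : IsIMCFSolGlobal n lam mu f) :
    Filter.Tendsto (deriv f) Filter.atTop Filter.atTop := by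
  by_contra hT
  obtain ⟨M, hM0, hMb⟩ := IMCFAux.bounded_of_not_tendsto hn hlam hf hT
  obtain ⟨D, K, hD1, hK0, hbar⟩ := IMCFAux.barrier hn hlam hf hM0 hMb
  have hD0 : (0:ℝ) < D := by linarith
  set ε := 1 / (2 * D) with hε
  have hε0 : 0 < ε := by positivity
  set R₂ := max 1 (2 * K * D) + 1 with hR₂
  have hR₂1 : 1 ≤ R₂ := by
    have h := le_max_left 1 (2 * K * D); simp only [hR₂]; linarith
  have hR₂0 : 0 < R₂ := by linarith
  have hR₂K : 2 * K * D < R₂ := by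
    have h := le_max_right 1 (2 * K * D); simp only [hR₂]; linarith
  -- On [R₂, ∞) the slope exceeds f r / r by ε.
  have hstep0 : ∀ r, R₂ ≤ r → f r / r + ε ≤ deriv f r := by
    intro r hr
    have hr1 : 1 ≤ r := le_trans hR₂1 hr
    have hr0 : (0:ℝ) < r := by linarith
    have hbarr := hbar r hr1
    have hKr : K * (2 * D) ≤ r := by nlinarith [hR₂K, hr]
    have hεr : ε * r ≤ r * deriv f r - f r := by
      have h2 : K ≤ r / (2 * D) := by
        rw [le_div_iff₀ (by positivity)]
        linarith [hKr]
      have h3 : ε * r = r / (2 * D) := by rw [hε]; field_simp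
      have h4 : r / D - r / (2 * D) = r / (2 * D) := by ring
      linarith [hbarr, h2, h3, h4]
    rw [← sub_nonneg]
    have h5 : deriv f r - (f r / r + ε) = (r * deriv f r - f r - ε * r) / r := by
      field_simp
      ring
    rw [h5]
    apply div_nonneg _ hr0.le
    linarith
  -- Iteration step: the average slope increases by ε/2.
  have hstep : ∀ r₀, R₂ ≤ r₀ → ∃ r₁, R₂ ≤ r₁ ∧ f r₀ / r₀ + ε / 2 ≤ f r₁ / r₁ := by
    intro r₀ hr₀
    have hr₀0 : (0:ℝ) < r₀ := lt_of_lt_of_le hR₂0 hr₀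
    set a := f r₀ / r₀ + ε with ha
    clear_value a
    have hmono : MonotoneOn (fun r => f r - a * r) (Ici r₀) := by
      apply monotoneOn_of_deriv_nonneg (convex_Ici r₀)
      · apply ContinuousOn.sub
        · exact hf.1.mono (fun x hx => le_trans hr₀0.le hx)
        · exact continuousOn_const.mul continuousOn_id
      · intro x hx
        rw [interior_Ici] at hx
        have hx0 : (0:ℝ) < x := lt_trans hr₀0 hx
        exact ((hf.2.2.1 x hx0).sub ((differentiableAt_const a).mul
          differentiableAt_id)).differentiableWithinAt
      · intro x hx
        rw [interior_Ici] at hx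
        have hx0 : (0:ℝ) < x := lt_trans hr₀0 hx
        have hd : HasDerivAt (fun r => f r - a * r) (deriv f x - a * 1) x :=
          (hf.2.2.1 x hx0).hasDerivAt.sub ((hasDerivAt_id x).const_mul a)
        rw [hd.deriv]
        have hxR₂ : R₂ ≤ x := le_trans hr₀ hx.le
        have h1 : f x / x + ε ≤ deriv f x := hstep0 x hxR₂
        have h2 : f r₀ / r₀ ≤ f x / x :=
          ((IMCFAux.F_strictMono hf).monotoneOn) (Set.mem_Ioi.mpr hr₀0)
            (Set.mem_Ioi.mpr hx0) hx.le
        simp only [ha]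
        linarith
    have key : f r₀ - a * r₀ ≤ f (2 * r₀) - a * (2 * r₀) :=
      hmono (Set.self_mem_Ici) (Set.mem_Ici.mpr (by linarith)) (by linarith)
    refine ⟨2 * r₀, by linarith, ?_⟩
    have hfr0 : f r₀ - a * r₀ = -(ε * r₀) := by
      simp only [ha]
      field_simp
      ring
    have h3 : (a - ε / 2) * (2 * r₀) ≤ f (2 * r₀) := by
      rw [hfr0] at key
      have hexp : (a - ε / 2) * (2 * r₀) = a * (2 * r₀) - ε * r₀ := by ring
      linarith [hexp, key]
    have h4 : f r₀ / r₀ + ε / 2 = a - ε / 2 := by simp only [ha]; ring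
    rw [h4, le_div_iff₀ (by positivity : (0:ℝ) < 2 * r₀)]
    linarith
  -- Iterate to get unbounded averages
  have hind : ∀ k : ℕ, ∃ r, R₂ ≤ r ∧ f R₂ / R₂ + k * (ε / 2) ≤ f r / r := by
    intro k
    induction k with
    | zero => exact ⟨R₂, le_rfl, by simp⟩
    | succ k ih =>
      obtain ⟨r, hr, hv⟩ := ih
      obtain ⟨r₁, hr₁, hv₁⟩ := hstep r hr
      refine ⟨r₁, hr₁, ?_⟩
      push_cast
      linarith
  obtain ⟨k, hk⟩ := exists_nat_gt ((M - f R₂ / R₂) / (ε / 2))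
  obtain ⟨r, hr, hv⟩ := hind k
  have hr0 : (0:ℝ) < r := lt_of_lt_of_le hR₂0 hr
  have hfr : f r / r < deriv f r := by
    have hh := IMCFAux.h_pos hf hr0.le
    rw [div_lt_iff₀ hr0]
    nlinarith
  have hpM : deriv f r ≤ M := hMb r hr0.le
  rw [div_lt_iff₀ (by positivity : (0:ℝ) < ε / 2)] at hk
  linarith
end

section
/- Let n ≥ 2, λ > 1/(n−1), μ < 0, and let f be the unique global solution on [0,∞) of f'' + ((n-1)/r)(1+f'²)f' = (1/λ)(1+f'²)²/(r f' − f) with f(0) = μ, f'(0) = 0 and r f'(r) > f(r) for all r ≥ 0. Then lim_{r→∞} r f'(r)/f(r) = λ(n−1)/(λ(n−1) − 1). -/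
set_option maxHeartbeats 1000000


open Set Filter intervalIntegral Real

/-- If every zero of `g` in `[s,t]` has positive derivative, and `g s > 0`,
then `g > 0` on all of `[s,t]`. -/
lemma no_downcross {g : ℝ → ℝ} {s t : ℝ}
    (hdiff : ∀ x ∈ Icc s t, DifferentiableAt ℝ g x)
    (hz : ∀ x ∈ Icc s t, g x = 0 → 0 < deriv g x)
    (h0 : 0 < g s) : ∀ x ∈ Icc s t, 0 < g x := by
  by_contra hcon
  push_neg at hcon
  obtain ⟨x₀, hx₀, hx₀le⟩ := hcon
  have hcont : ContinuousOn g (Icc s t) := fun x hx => (hdiff x hx).continuousAt.continuousWithinAt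
  set A : Set ℝ := {x ∈ Icc s t | g x ≤ 0} with hA
  have hAne : A.Nonempty := ⟨x₀, hx₀, hx₀le⟩
  have hAclosed : IsClosed A := by
    have h1 : A = Icc s t ∩ g ⁻¹' (Iic 0) := by ext x; simp only [hA, mem_setOf_eq, mem_inter_iff, mem_preimage, mem_Iic]
    rw [h1]
    exact ContinuousOn.preimage_isClosed_of_isClosed hcont isClosed_Icc isClosed_Iic
  have hAbdd : BddBelow A := ⟨s, fun x hx => hx.1.1⟩
  set c := sInf A with hc
  have hcA : c ∈ A := hAclosed.csInf_mem hAne hAbdd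
  have hcs : s < c := by
    rcases lt_or_eq_of_le (hcA.1.1) with h | h
    · exact h
    · exfalso; rw [← h] at hcA; linarith [hcA.2]
  have hpos : ∀ x ∈ Icc s t, x < c → 0 < g x := by
    intro x hx hxc
    by_contra hgx
    exact absurd (csInf_le hAbdd ⟨hx, le_of_not_gt hgx⟩) (not_le.2 hxc)
  have hgc0 : g c = 0 := by
    refine le_antisymm hcA.2 ?_
    have htend : Tendsto g (nhdsWithin c (Iio c)) (nhds (g c)) :=
      ((hdiff c hcA.1).continuousAt.tendsto).mono_left nhdsWithin_le_nhds
    have hev : ∀ᶠ x in nhdsWithin c (Iio c), 0 ≤ g x := by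
      filter_upwards [Ioo_mem_nhdsLT hcs] with x hx
      exact le_of_lt (hpos x ⟨le_of_lt hx.1, le_trans (le_of_lt hx.2) hcA.1.2⟩ hx.2)
    exact ge_of_tendsto htend hev
  have hd := hz c hcA.1 hgc0
  have hslope : Tendsto (slope g c) (nhdsWithin c (Iio c)) (nhds (deriv g c)) :=
    (hasDerivAt_iff_tendsto_slope.1 (hdiff c hcA.1).hasDerivAt).mono_left
      (nhdsWithin_mono c (fun x (hx : x < c) => ne_of_lt hx))
  have hev : ∀ᶠ x in nhdsWithin c (Iio c), 0 < slope g c x := hslope (Ioi_mem_nhds hd)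
  have hIoo : Ioo s c ∈ nhdsWithin c (Iio c) := Ioo_mem_nhdsLT hcs
  obtain ⟨y, hy1, hy2⟩ := (hev.and (eventually_mem_set.2 hIoo)).exists
  have hgy : 0 < g y := hpos y ⟨le_of_lt hy2.1, le_trans (le_of_lt hy2.2) hcA.1.2⟩ hy2.2
  have : slope g c y = g y / (y - c) := by
    rw [slope_def_field, hgc0]; ring_nf
  rw [this] at hy1
  have hyc : y - c < 0 := by linarith [hy2.2]
  rcases div_pos_iff.1 hy1 with ⟨_, h⟩ | ⟨h, _⟩
  · linarith
  · linarith


section Basics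
variable {n : ℕ} {lam mu : ℝ} {f : ℝ → ℝ}

lemma lam_pos (hn : 2 ≤ n) (hlam : 1 / ((n : ℝ) - 1) < lam) : 0 < lam := by
  have h1 : (1:ℝ) ≤ (n:ℝ) - 1 := by
    have : (2:ℝ) ≤ (n:ℝ) := by exact_mod_cast hn
    linarith
  have : 0 < 1 / ((n:ℝ) - 1) := by positivity
  linarith

lemma c_gt_one (hn : 2 ≤ n) (hlam : 1 / ((n : ℝ) - 1) < lam) : 1 < lam * ((n:ℝ) - 1) := by
  have h1 : (1:ℝ) ≤ (n:ℝ) - 1 := by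
    have : (2:ℝ) ≤ (n:ℝ) := by exact_mod_cast hn
    linarith
  have h0 : (0:ℝ) < (n:ℝ) - 1 := by linarith
  rw [div_lt_iff₀ h0] at hlam
  linarith

lemma w_pos (hf : IsIMCFSolGlobal n lam mu f) {r : ℝ} (hr : 0 ≤ r) :
    0 < r * deriv f r - f r := hf.2.2.2.2.2.2.2.2 r hr

lemma f_hasDeriv (hf : IsIMCFSolGlobal n lam mu f) {r : ℝ} (hr : 0 < r) :
    HasDerivAt f (deriv f r) r := (hf.2.2.1 r hr).hasDerivAt

lemma v_hasDeriv (hf : IsIMCFSolGlobal n lam mu f) {r : ℝ} (hr : 0 < r) :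
    HasDerivAt (deriv f) (deriv (deriv f) r) r := (hf.2.2.2.1 r hr).hasDerivAt

lemma ode' (hn : 2 ≤ n) (hlam : 1 / ((n : ℝ) - 1) < lam)
    (hf : IsIMCFSolGlobal n lam mu f) {r : ℝ} (hr : 0 < r) :
    deriv (deriv f) r = (1 + deriv f r ^ 2) ^ 2 / (lam * (r * deriv f r - f r))
      - ((n : ℝ) - 1) / r * (1 + deriv f r ^ 2) * deriv f r := by
  have h := hf.2.2.2.2.2.1 r hr
  have hw := w_pos hf (le_of_lt hr)
  have hl := lam_pos hn hlam
  field_simp at h ⊢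
  linarith [h]

/-- `f'' = (1+v²)·D/(λ r w)` where `D = r(1+v²) − λ(n−1) v w`. -/
lemma deriv2_eq (hn : 2 ≤ n) (hlam : 1 / ((n : ℝ) - 1) < lam)
    (hf : IsIMCFSolGlobal n lam mu f) {r : ℝ} (hr : 0 < r) :
    deriv (deriv f) r = (1 + deriv f r ^ 2) *
        (r * (1 + deriv f r ^ 2) - lam * ((n:ℝ) - 1) * deriv f r * (r * deriv f r - f r)) /
      (lam * r * (r * deriv f r - f r)) := by
  rw [ode' hn hlam hf hr]
  have hw := w_pos hf (le_of_lt hr)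
  have hl := lam_pos hn hlam
  generalize r * deriv f r - f r = W at hw ⊢
  field_simp


lemma deriv2_pos_of_nonpos (hn : 2 ≤ n) (hlam : 1 / ((n : ℝ) - 1) < lam)
    (hf : IsIMCFSolGlobal n lam mu f) {r : ℝ} (hr : 0 < r) (hv : deriv f r ≤ 0) :
    0 < deriv (deriv f) r := by
  rw [ode' hn hlam hf hr]
  have hw := w_pos hf (le_of_lt hr)
  have hl := lam_pos hn hlam
  have hn1 : (0:ℝ) < (n:ℝ) - 1 := by
    have : (2:ℝ) ≤ (n:ℝ) := by exact_mod_cast hn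
    linarith
  have h1 : 0 < (1 + deriv f r ^ 2) ^ 2 / (lam * (r * deriv f r - f r)) := by positivity
  have h2 : 0 ≤ -(((n : ℝ) - 1) / r * (1 + deriv f r ^ 2) * deriv f r) := by
    have : 0 ≤ ((n : ℝ) - 1) / r * (1 + deriv f r ^ 2) := by positivity
    nlinarith
  linarith

/-- L1: the first derivative is positive on `(0,∞)`. -/
lemma v_pos (hn : 2 ≤ n) (hlam : 1 / ((n : ℝ) - 1) < lam)
    (hf : IsIMCFSolGlobal n lam mu f) {r : ℝ} (hr : 0 < r) :
    0 < deriv f r := by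
  by_contra hcon
  push_neg at hcon
  -- v ≤ 0 on (0, r]
  have hle : ∀ x ∈ Ioc (0:ℝ) r, deriv f x ≤ 0 := by
    intro x hx
    by_contra hgx
    push_neg at hgx
    have := no_downcross (g := deriv f) (s := x) (t := r)
      (fun y hy => hf.2.2.2.1 y (lt_of_lt_of_le hx.1 hy.1))
      (fun y hy hy0 => deriv2_pos_of_nonpos hn hlam hf (lt_of_lt_of_le hx.1 hy.1) (le_of_eq hy0))
      hgx r ⟨hx.2, le_refl r⟩
    linarith
  -- then v is strictly increasing on [0, r], contradiction with v 0 = 0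
  have hmono : StrictMonoOn (deriv f) (Icc 0 r) := by
    apply strictMonoOn_of_deriv_pos (convex_Icc 0 r)
    · exact hf.2.1.mono (fun x hx => hx.1)
    · intro x hx
      rw [interior_Icc] at hx
      exact deriv2_pos_of_nonpos hn hlam hf hx.1 (hle x ⟨hx.1, le_of_lt hx.2⟩)
  have := hmono (left_mem_Icc.2 (le_of_lt hr)) (right_mem_Icc.2 (le_of_lt hr)) hr
  rw [hf.2.2.2.2.2.2.2.1] at this
  linarith

/-- L2: `D = r(1+v²) − λ(n−1) v w > 0` on `(0,∞)`. -/
lemma D_pos (hn : 2 ≤ n) (hlam : 1 / ((n : ℝ) - 1) < lam)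
    (hf : IsIMCFSolGlobal n lam mu f) {r : ℝ} (hr : 0 < r) :
    0 < r * (1 + deriv f r ^ 2)
      - lam * ((n:ℝ) - 1) * deriv f r * (r * deriv f r - f r) := by
  set c := lam * ((n:ℝ) - 1) with hc
  set D : ℝ → ℝ := fun x => x * (1 + deriv f x ^ 2) - c * deriv f x * (x * deriv f x - f x)
    with hD
  have hDderiv : ∀ x : ℝ, 0 < x → HasDerivAt D
      (1 * (1 + deriv f x ^ 2) + x * ((2:ℕ) * deriv f x ^ 1 * deriv (deriv f) x)
        - ((c * deriv (deriv f) x) * (x * deriv f x - f x)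
          + (c * deriv f x) * (1 * deriv f x + x * deriv (deriv f) x - deriv f x))) x := by
    intro x hx
    have hv := v_hasDeriv hf hx
    have hfx := f_hasDeriv hf hx
    exact ((hasDerivAt_id x).mul ((hv.pow 2).const_add 1)).sub
      ((hv.const_mul c).mul (((hasDerivAt_id x).mul hv).sub hfx))
  by_contra hcon
  push_neg at hcon
  have hle : ∀ x ∈ Ioo (0:ℝ) r, D x ≤ 0 := by
    intro x hx
    by_contra hgx
    push_neg at hgx
    have hcl := no_downcross (g := D) (s := x) (t := r)
      (fun y hy => ((hDderiv y (lt_of_lt_of_le hx.1 hy.1)).differentiableAt))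
      (fun y hy hy0 => by
        have hy0' : 0 < y := lt_of_lt_of_le hx.1 hy.1
        have hv'0 : deriv (deriv f) y = 0 := by
          rw [deriv2_eq hn hlam hf hy0']
          have : y * (1 + deriv f y ^ 2) - lam * ((n:ℝ)-1) * deriv f y * (y * deriv f y - f y)
              = 0 := by rw [← hc]; simpa [hD] using hy0
          rw [this, mul_zero, zero_div]
        have := (hDderiv y hy0').deriv
        rw [this, hv'0]
        have : (1:ℝ) * (1 + deriv f y ^ 2) + y * ((2:ℕ) * deriv f y ^ 1 * 0)
            - ((c * 0) * (y * deriv f y - f y)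
              + (c * deriv f y) * (1 * deriv f y + y * 0 - deriv f y))
            = 1 + deriv f y ^ 2 := by push_cast; ring
        rw [this]
        positivity) hgx r ⟨le_of_lt hx.2, le_refl r⟩
    simp only [hD] at hcl
    linarith
  have hv'le : ∀ x ∈ Ioo (0:ℝ) r, deriv (deriv f) x ≤ 0 := by
    intro x hx
    rw [deriv2_eq hn hlam hf hx.1]
    apply div_nonpos_of_nonpos_of_nonneg
    · have hDx := hle x hx
      simp only [hD, ← hc] at hDx ⊢
      nlinarith [sq_nonneg (deriv f x)]
    · have hw := w_pos hf (le_of_lt hx.1)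
      have hl := lam_pos hn hlam
      nlinarith [mul_pos (mul_pos hl hx.1) hw]
  have hanti : AntitoneOn (deriv f) (Icc 0 r) := by
    apply antitoneOn_of_deriv_nonpos (convex_Icc 0 r)
    · exact hf.2.1.mono (fun x hx => hx.1)
    · intro x hx
      rw [interior_Icc] at hx
      exact (hf.2.2.2.1 x hx.1).differentiableWithinAt
    · intro x hx
      rw [interior_Icc] at hx
      exact hv'le x hx
  have h1 := hanti (left_mem_Icc.2 (le_of_lt hr)) (right_mem_Icc.2 (le_of_lt hr)) (le_of_lt hr)
  rw [hf.2.2.2.2.2.2.2.1] at h1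
  have := v_pos hn hlam hf hr
  linarith

/-- `f'' > 0` on `(0,∞)`. -/
lemma deriv2_pos (hn : 2 ≤ n) (hlam : 1 / ((n : ℝ) - 1) < lam)
    (hf : IsIMCFSolGlobal n lam mu f) {r : ℝ} (hr : 0 < r) :
    0 < deriv (deriv f) r := by
  rw [deriv2_eq hn hlam hf hr]
  have hw := w_pos hf (le_of_lt hr)
  have hl := lam_pos hn hlam
  have hDp := D_pos hn hlam hf hr
  apply div_pos
  · nlinarith [sq_nonneg (deriv f r)]
  · positivity


lemma v_strictMono (hn : 2 ≤ n) (hlam : 1 / ((n : ℝ) - 1) < lam)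
    (hf : IsIMCFSolGlobal n lam mu f) : StrictMonoOn (deriv f) (Ici 0) := by
  apply strictMonoOn_of_deriv_pos (convex_Ici 0) hf.2.1
  intro x hx
  rw [interior_Ici] at hx
  exact deriv2_pos hn hlam hf hx

lemma slope_ge (hn : 2 ≤ n) (hlam : 1 / ((n : ℝ) - 1) < lam)
    (hf : IsIMCFSolGlobal n lam mu f) {s r : ℝ} (hs : 0 ≤ s) (hsr : s < r) :
    f s + deriv f s * (r - s) ≤ f r := by
  obtain ⟨x, hx, hsl⟩ := exists_hasDerivAt_eq_slope f (deriv f) hsr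
    (hf.1.mono (fun y hy => le_trans hs hy.1))
    (fun y hy => f_hasDeriv hf (lt_of_le_of_lt hs hy.1))
  have hvx : deriv f s ≤ deriv f x :=
    le_of_lt ((v_strictMono hn hlam hf) hs
      (le_trans hs (le_of_lt hx.1)) hx.1)
  rw [hsl] at hvx
  have h1 : 0 < r - s := by linarith
  rw [le_div_iff₀ h1] at hvx
  linarith

lemma f_tendsto (hn : 2 ≤ n) (hlam : 1 / ((n : ℝ) - 1) < lam)
    (hf : IsIMCFSolGlobal n lam mu f) : Tendsto f atTop atTop := by
  have h1 : 0 < deriv f 1 := v_pos hn hlam hf one_pos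
  have hlin : Tendsto (fun r : ℝ => f 1 + deriv f 1 * (r - 1)) atTop atTop := by
    apply tendsto_atTop_add_const_left
    exact (tendsto_atTop_add_const_right atTop (-1) tendsto_id).const_mul_atTop h1
  apply tendsto_atTop_mono' atTop ?_ hlin
  filter_upwards [eventually_ge_atTop (1:ℝ)] with r hr
  rcases eq_or_lt_of_le hr with h | h
  · rw [← h]; simp
  · exact slope_ge hn hlam hf (by norm_num) h

lemma v_nonneg (hn : 2 ≤ n) (hlam : 1 / ((n : ℝ) - 1) < lam)
    (hf : IsIMCFSolGlobal n lam mu f) {r : ℝ} (hr : 0 ≤ r) : 0 ≤ deriv f r := by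
  rcases eq_or_lt_of_le hr with h | h
  · rw [← h, hf.2.2.2.2.2.2.2.1]
  · exact le_of_lt (v_pos hn hlam hf h)

lemma v_tendsto (hn : 2 ≤ n) (hlam : 1 / ((n : ℝ) - 1) < lam)
    (hf : IsIMCFSolGlobal n lam mu f) : Tendsto (deriv f) atTop atTop := by
  have hmono := (v_strictMono hn hlam hf).monotoneOn
  by_cases hb : ∀ M : ℝ, ∃ r, 0 ≤ r ∧ M < deriv f r
  · rw [tendsto_atTop]
    intro M
    obtain ⟨r₀, hr₀, hM⟩ := hb M
    filter_upwards [eventually_ge_atTop r₀, eventually_ge_atTop (0:ℝ)] with r hr hr0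
    exact le_of_lt (lt_of_lt_of_le hM (hmono hr₀ hr0 hr))
  · exfalso
    push_neg at hb
    obtain ⟨M, hM⟩ := hb
    set S := sSup (deriv f '' Ici 0) with hS
    have hne : (deriv f '' Ici 0).Nonempty := ⟨deriv f 0, 0, mem_Ici.2 (le_refl 0), rfl⟩
    have hbdd : BddAbove (deriv f '' Ici 0) := by
      refine ⟨M, ?_⟩
      rintro y ⟨x, hx, rfl⟩
      exact hM x hx
    have hvleS : ∀ r : ℝ, 0 ≤ r → deriv f r ≤ S := fun r hr => le_csSup hbdd ⟨r, hr, rfl⟩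
    have hSpos : 0 < S := lt_of_lt_of_le (v_pos hn hlam hf one_pos) (hvleS 1 zero_le_one)
    have hl := lam_pos hn hlam
    have hn1 : (1:ℝ) ≤ (n:ℝ) - 1 := by
      have : (2:ℝ) ≤ (n:ℝ) := by exact_mod_cast hn
      linarith
    set K := ((n:ℝ) - 1) * (1 + S^2) * S with hK
    have hKpos : 0 < K := by positivity
    set eps := 1 / (lam * (K + 1)) with heps
    have hepspos : 0 < eps := by positivity
    -- pick s with deriv f s close to S
    obtain ⟨y, ⟨s, hs0, rfl⟩, hvs⟩ := exists_lt_of_lt_csSup hne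
      (show S - eps/2 < S by linarith)
    set B := s * deriv f s - f s with hB
    set Rb := max (s+1) (max 1 (2*(|B|+1)/eps)) with hRb
    have hRb1 : (1:ℝ) ≤ Rb := le_trans (le_max_left 1 _) (le_max_right _ _)
    have hRbs : s + 1 ≤ Rb := le_max_left _ _
    have hRbB : 2*(|B|+1)/eps ≤ Rb := le_trans (le_max_right _ _) (le_max_right _ _)
    have hRbpos : (0:ℝ) < Rb := lt_of_lt_of_le one_pos hRb1
    -- w is eventually small compared to r
    have hwsmall : ∀ r : ℝ, Rb ≤ r → r * deriv f r - f r ≤ eps * r := by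
      intro r hr
      have hrpos : 0 < r := lt_of_lt_of_le hRbpos hr
      have hsr : s < r := by linarith [le_trans hRbs hr]
      have hslope := slope_ge hn hlam hf hs0 hsr
      have hvr : deriv f r ≤ S := hvleS r (le_of_lt hrpos)
      have hvs' : S - eps/2 ≤ deriv f s := le_of_lt hvs
      have h1 : r * deriv f r - f r ≤ r * S - (f s + deriv f s * (r - s)) := by nlinarith
      have h2 : r * S - (f s + deriv f s * (r - s)) = r * (S - deriv f s) + B := by
        rw [hB]; ring
      have h3 : r * (S - deriv f s) ≤ r * (eps/2) := by nlinarith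
      have h4 : B ≤ r * (eps/2) := by
        have : 2*(|B|+1)/eps ≤ r := le_trans hRbB hr
        rw [div_le_iff₀ hepspos] at this
        have hBabs : B ≤ |B| := le_abs_self B
        nlinarith
      nlinarith
    -- then v'' ≥ 1/r for r ≥ Rb
    have hv'big : ∀ r : ℝ, Rb ≤ r → 1/r ≤ deriv (deriv f) r := by
      intro r hr
      have hrpos : 0 < r := lt_of_lt_of_le hRbpos hr
      have hw := w_pos hf (le_of_lt hrpos)
      have hwe := hwsmall r hr
      have hvr : deriv f r ≤ S := hvleS r (le_of_lt hrpos)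
      have hvr0 : 0 ≤ deriv f r := v_nonneg hn hlam hf (le_of_lt hrpos)
      rw [ode' hn hlam hf hrpos]
      have hterm2 : ((n:ℝ) - 1) / r * (1 + deriv f r ^ 2) * deriv f r ≤ K / r := by
        have e0 : ((n:ℝ) - 1) / r * (1 + deriv f r ^ 2) * deriv f r
            = ((n:ℝ) - 1) * ((1 + deriv f r ^ 2) * deriv f r) / r := by ring
        rw [e0, hK, div_le_div_iff₀ hrpos hrpos]
        have e1 : deriv f r ^ 2 ≤ S ^ 2 := by nlinarith
        have e2 : (1 + deriv f r ^ 2) * deriv f r ≤ (1 + S ^ 2) * S := by nlinarith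
        have e3 : ((n:ℝ) - 1) * ((1 + deriv f r ^ 2) * deriv f r)
            ≤ ((n:ℝ) - 1) * ((1 + S ^ 2) * S) := by
          apply mul_le_mul_of_nonneg_left e2 (by linarith)
        have e4 : 0 < r := hrpos
        nlinarith
      have hterm1 : (K + 1) / r ≤ (1 + deriv f r ^ 2) ^ 2 / (lam * (r * deriv f r - f r)) := by
        have hld : 0 < lam * (r * deriv f r - f r) := by positivity
        rw [div_le_div_iff₀ hrpos hld]
        have h5 : lam * (r * deriv f r - f r) ≤ lam * (eps * r) := by nlinarith
        have h6 : lam * (eps * r) * (K+1) = r := by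
          rw [heps]; field_simp
        have h8 := mul_le_mul_of_nonneg_left h5 (show (0:ℝ) ≤ K + 1 by positivity)
        have h9 : 1 ≤ (1 + deriv f r ^ 2) ^ 2 := by nlinarith [sq_nonneg (deriv f r)]
        have h10 : r ≤ (1 + deriv f r ^ 2) ^ 2 * r := by nlinarith
        nlinarith
      have : (K+1)/r - K/r = 1/r := by rw [div_sub_div_same]; ring_nf
      linarith
    -- v r - log r is monotone on [Rb, ∞)
    have hmono2 : MonotoneOn (fun x => deriv f x - Real.log x) (Ici Rb) := by
      apply monotoneOn_of_deriv_nonneg (convex_Ici Rb)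
      · intro x hx
        have hxpos : 0 < x := lt_of_lt_of_le hRbpos hx
        exact ((v_hasDeriv hf hxpos).sub (Real.hasDerivAt_log (ne_of_gt hxpos))).continuousAt.continuousWithinAt
      · intro x hx
        rw [interior_Ici] at hx
        have hxpos : 0 < x := lt_trans hRbpos hx
        exact ((v_hasDeriv hf hxpos).sub (Real.hasDerivAt_log (ne_of_gt hxpos))).differentiableAt.differentiableWithinAt
      · intro x hx
        rw [interior_Ici] at hx
        have hxpos : 0 < x := lt_trans hRbpos hx
        rw [show deriv (fun x => deriv f x - Real.log x) x = _ from ((v_hasDeriv hf hxpos).sub (Real.hasDerivAt_log (ne_of_gt hxpos))).deriv]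
        have := hv'big x (le_of_lt hx)
        rw [one_div] at this
        linarith
    -- contradiction: evaluate at Rb * exp (S+1)
    set r₁ := Rb * Real.exp (S + 1) with hr₁
    have hr₁big : Rb ≤ r₁ := by
      rw [hr₁]
      nlinarith [Real.one_le_exp (by positivity : (0:ℝ) ≤ S + 1)]
    have := hmono2 (mem_Ici.2 (le_refl Rb)) (mem_Ici.2 hr₁big) hr₁big
    have hlog : Real.log r₁ = Real.log Rb + (S + 1) := by
      rw [hr₁, Real.log_mul (ne_of_gt hRbpos) (Real.exp_ne_zero _), Real.log_exp]
    have hvRb : 0 ≤ deriv f Rb := v_nonneg hn hlam hf (le_of_lt hRbpos)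
    have hvr₁ : deriv f r₁ ≤ S := hvleS r₁ (le_trans (le_of_lt hRbpos) hr₁big)
    simp only at this
    rw [hlog] at this
    linarith


lemma key_upper {c lam eps Q V : ℝ} (hc : 1 < c) (hl : 0 < lam) (he : 0 < eps)
    (hQ : c/(c-1) + eps ≤ Q)
    (hV : (1 + lam) + (c/(c-1) + lam*(c/(c-1) - 1))/eps ≤ (c-1) * V^2) :
    Q*(1+V^2)^2 ≤ lam*(Q-1)*V^2*(Q-2) + c*(Q-1)*V^2*(1+V^2) := by
  set a := c/(c-1) with ha
  have hc1 : 0 < c - 1 := by linarith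
  have ha1 : 1 < a := by rw [ha, lt_div_iff₀ hc1]; linarith
  have hca : c*(a-1) = a := by rw [ha]; field_simp; ring
  have hQa : eps ≤ Q - a := by linarith
  have hQ1 : 1 < Q := by linarith
  have hV0 : (0:ℝ) ≤ V^2 := sq_nonneg V
  have hK1 : 0 ≤ a + lam*(a-1) := by nlinarith
  have h5 : Q + lam*(Q-1) ≤ (c-1)*V^2*(Q-a) := by
    have e1 : Q + lam*(Q-1) = (a + lam*(a-1)) + (1+lam)*(Q-a) := by ring
    have e2 : a + lam*(a-1) ≤ (a + lam*(a-1))/eps * (Q-a) := by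
      rw [div_mul_eq_mul_div, le_div_iff₀ he]
      nlinarith
    have e3 : ((1+lam) + (a + lam*(a-1))/eps) * (Q-a) ≤ (c-1)*V^2*(Q-a) := by
      apply mul_le_mul_of_nonneg_right _ (by linarith)
      exact hV
    nlinarith
  -- RHS - LHS ≥ lam*(Q-1) > 0
  have h6 : c*(Q-1)*V^2*(1+V^2) - Q*(1+V^2)^2
      = (1+V^2) * (V^2*((c-1)*(Q-a)) - Q) := by
    have : c*(Q-1) - Q = (c-1)*(Q-a) := by
      have : (c-1)*a = c := by rw [ha]; field_simp
      nlinarith [this]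
    nlinarith [this]
  have h7 : lam*(Q-1) ≤ V^2*((c-1)*(Q-a)) - Q := by nlinarith
  have h8 : (1+V^2) * (lam*(Q-1)) ≤ (1+V^2) * (V^2*((c-1)*(Q-a)) - Q) := by
    apply mul_le_mul_of_nonneg_left h7 (by positivity)
  have h9 : lam*(Q-1)*V^2*(Q-2) ≥ -(lam*(Q-1)*V^2) := by
    have hx : 0 ≤ lam*(Q-1)*V^2 :=
      mul_nonneg (mul_nonneg (le_of_lt hl) (by linarith)) hV0
    nlinarith [mul_le_mul_of_nonneg_left (show (-1:ℝ) ≤ Q-2 by linarith) hx]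
  nlinarith [h6, h8, h9]

lemma key_lower {c lam eps Q V : ℝ} (hc : 1 < c) (hl : 0 < lam) (he : 0 < eps)
    (hQ1 : 1 < Q) (hQ : Q ≤ c/(c-1) - eps)
    (hV : lam * (c/(c-1) - 1) * ((c/(c-1))^2 - c/(c-1) + 1) ≤ (c-1) * eps * V^2) :
    lam*V^2*(Q-1)*(1 + Q^2 - Q) + c*V^2*(Q-1)*Q*(1+V^2) ≤ Q^2*(1+V^2)^2 := by
  set a := c/(c-1) with ha
  have hc1 : 0 < c - 1 := by linarith
  have ha1 : 1 < a := by rw [ha, lt_div_iff₀ hc1]; linarith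
  have hQa : eps ≤ a - Q := by linarith
  have hV0 : (0:ℝ) ≤ V^2 := sq_nonneg V
  have hca : (c-1)*a = c := by rw [ha]; field_simp
  -- LHS part 1 bound
  have h9 : lam*V^2*(Q-1)*(1 + Q^2 - Q) ≤ lam*V^2*(a-1)*(1 + a^2 - a) := by
    have e1 : (Q-1)*(1+Q^2-Q) ≤ (a-1)*(1+a^2-a) := by
      have f1 : Q - 1 ≤ a - 1 := by linarith
      have f2 : 1 + Q^2 - Q ≤ 1 + a^2 - a := by
        nlinarith [mul_nonneg (by linarith : (0:ℝ) ≤ a - Q) (by linarith : (0:ℝ) ≤ a + Q - 1)]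
      have f4 : 0 ≤ 1 + Q^2 - Q := by nlinarith [sq_nonneg (Q-1)]
      exact mul_le_mul f1 f2 f4 (by linarith)
    have := mul_le_mul_of_nonneg_left e1 (show (0:ℝ) ≤ lam*V^2 by positivity)
    nlinarith [this]
  have h10 : Q^2*(1+V^2)^2 - c*V^2*(Q-1)*Q*(1+V^2)
      = Q*(1+V^2)*(Q + V^2*((c-1)*(a-Q))) := by
    linear_combination (-(Q*(1+V^2)*V^2)) * hca
  have h11 : (c-1)*eps*V^2*V^2 ≤ Q*(1+V^2)*(Q + V^2*((c-1)*(a-Q))) := by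
    have e2 : (c-1)*eps*V^2 ≤ Q + V^2*((c-1)*(a-Q)) := by
      have := mul_le_mul_of_nonneg_left hQa (show (0:ℝ) ≤ (c-1)*V^2 by positivity)
      nlinarith [this]
    have e3 : V^2 ≤ Q*(1+V^2) := by nlinarith
    nlinarith [mul_le_mul e3 e2 (by positivity) (by nlinarith)]
  have h12 : lam*V^2*(a-1)*(1+a^2-a) ≤ (c-1)*eps*V^2*V^2 := by
    have : lam * (a-1) * (a^2 - a + 1) ≤ (c-1)*eps*V^2 := by rw [ha] at *; exact hV
    nlinarith [this]
  linarith [h9, h10, h11, h12]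

lemma q_hasDeriv (hf : IsIMCFSolGlobal n lam mu f) {r : ℝ} (hr : 0 < r) (hFne : f r ≠ 0) :
    HasDerivAt (fun x => x * deriv f x / f x)
      (((1 * deriv f r + r * deriv (deriv f) r) * f r - r * deriv f r * deriv f r) / f r ^ 2)
      r :=
  ((hasDerivAt_id r).mul (v_hasDeriv hf hr)).div (f_hasDeriv hf hr) hFne

lemma barU_hasDeriv (hf : IsIMCFSolGlobal n lam mu f) (A : ℝ) {x : ℝ} (hx : 0 < x) :
    HasDerivAt (fun y => A * f y - y * deriv f y)
      (A * deriv f x - (1 * deriv f x + x * deriv (deriv f) x)) x :=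
  ((f_hasDeriv hf hx).const_mul A).sub ((hasDerivAt_id x).mul (v_hasDeriv hf hx))

lemma barL_hasDeriv (hf : IsIMCFSolGlobal n lam mu f) (A : ℝ) {x : ℝ} (hx : 0 < x) :
    HasDerivAt (fun y => y * deriv f y - A * f y)
      ((1 * deriv f x + x * deriv (deriv f) x) - A * deriv f x) x :=
  ((hasDerivAt_id x).mul (v_hasDeriv hf hx)).sub ((f_hasDeriv hf hx).const_mul A)

lemma hv'eq (hn : 2 ≤ n) (hlam : 1 / ((n : ℝ) - 1) < lam)
    (hf : IsIMCFSolGlobal n lam mu f) {r : ℝ} (hr : 0 < r) :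
    r * deriv (deriv f) r * (lam * (r * deriv f r - f r))
      = r * (1 + deriv f r ^ 2) ^ 2
        - lam * ((n:ℝ) - 1) * (1 + deriv f r ^ 2) * deriv f r * (r * deriv f r - f r) := by
  rw [ode' hn hlam hf hr]
  have hW := w_pos hf (le_of_lt hr)
  have hl := lam_pos hn hlam
  field_simp

/-- In the region `q ≥ α₀ + ε` (with `v` large), `q' ≤ -v/f < 0`. -/
lemma q_deriv_upper (hn : 2 ≤ n) (hlam : 1 / ((n : ℝ) - 1) < lam)
    (hf : IsIMCFSolGlobal n lam mu f) {r eps : ℝ} (hr : 0 < r) (heps : 0 < eps)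
    (hF : 0 < f r)
    (hq : (lam * ((n:ℝ)-1) / (lam * ((n:ℝ)-1) - 1) + eps) * f r ≤ r * deriv f r)
    (hVbig : (1 + lam) + (lam * ((n:ℝ)-1) / (lam * ((n:ℝ)-1) - 1)
        + lam * (lam * ((n:ℝ)-1) / (lam * ((n:ℝ)-1) - 1) - 1)) / eps
        ≤ (lam * ((n:ℝ)-1) - 1) * (deriv f r) ^ 2) :
    deriv (fun x => x * deriv f x / f x) r ≤ -(deriv f r / f r) := by
  have hc := c_gt_one hn hlam
  have hl := lam_pos hn hlam
  have hV0 : 0 < deriv f r := v_pos hn hlam hf hr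
  have hW : 0 < r * deriv f r - f r := w_pos hf (le_of_lt hr)
  rw [(q_hasDeriv hf hr (ne_of_gt hF)).deriv]
  rw [div_le_iff₀ (by positivity : (0:ℝ) < f r ^ 2)]
  have hrhs : -(deriv f r / f r) * f r ^ 2 = -(deriv f r) * f r := by
    field_simp
  rw [hrhs]
  set V := deriv f r with hVdef
  set F := f r with hFdef
  set c := lam * ((n:ℝ)-1) with hcdef
  set Q := r * V / F with hQdef
  have hQF : Q * F = r * V := by rw [hQdef]; field_simp
  have hQge : c/(c-1) + eps ≤ Q := by
    rw [hQdef, le_div_iff₀ hF]; exact hq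
  have hkey := key_upper hc hl heps hQge hVbig
  suffices hX : ((1 * V + r * deriv (deriv f) r) * F - r * V * V + V * F)
      * (lam * (r * V - F)) * V ≤ 0 by
    nlinarith [hX, mul_pos (mul_pos hl hW) hV0]
  have hid : ((1 * V + r * deriv (deriv f) r) * F - r * V * V + V * F)
      * (lam * (r * V - F)) * V
      = F ^ 2 * (Q*(1+V^2)^2 - (lam*(Q-1)*V^2*(Q-2) + c*(Q-1)*V^2*(1+V^2))) := by
    linear_combination (F*V) * (hv'eq hn hlam hf hr)
      + (F*(-1 - 2*V^2 - 3*V^2*lam + V^2*lam*Q + V^2*c - V^4 + V^4*c) + r*V^3*lam) * hQF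
  rw [hid]
  nlinarith [mul_nonneg (sq_nonneg F) (sub_nonneg.2 hkey)]

/-- In the region `1 < q ≤ α₀ - ε` (with `v` large), `q' ≥ 1/r > 0`. -/
lemma q_deriv_lower (hn : 2 ≤ n) (hlam : 1 / ((n : ℝ) - 1) < lam)
    (hf : IsIMCFSolGlobal n lam mu f) {r eps : ℝ} (hr : 0 < r) (heps : 0 < eps)
    (hF : 0 < f r)
    (hq : r * deriv f r ≤ (lam * ((n:ℝ)-1) / (lam * ((n:ℝ)-1) - 1) - eps) * f r)
    (hVbig : lam * (lam * ((n:ℝ)-1) / (lam * ((n:ℝ)-1) - 1) - 1)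
        * ((lam * ((n:ℝ)-1) / (lam * ((n:ℝ)-1) - 1))^2 - lam * ((n:ℝ)-1) / (lam * ((n:ℝ)-1) - 1) + 1)
        ≤ (lam * ((n:ℝ)-1) - 1) * eps * (deriv f r) ^ 2) :
    1 / r ≤ deriv (fun x => x * deriv f x / f x) r := by
  have hc := c_gt_one hn hlam
  have hl := lam_pos hn hlam
  have hV0 : 0 < deriv f r := v_pos hn hlam hf hr
  have hW : 0 < r * deriv f r - f r := w_pos hf (le_of_lt hr)
  rw [(q_hasDeriv hf hr (ne_of_gt hF)).deriv]
  rw [div_le_div_iff₀ hr (by positivity : (0:ℝ) < f r ^ 2)]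
  set V := deriv f r with hVdef
  set F := f r with hFdef
  set c := lam * ((n:ℝ)-1) with hcdef
  set Q := r * V / F with hQdef
  have hQF : Q * F = r * V := by rw [hQdef]; field_simp
  have hQ1 : 1 < Q := by
    rw [hQdef, lt_div_iff₀ hF]; linarith
  have hQle : Q ≤ c/(c-1) - eps := by
    rw [hQdef, div_le_iff₀ hF]; exact hq
  have hkey := key_lower hc hl heps hQ1 hQle hVbig
  suffices hX : 0 ≤ (((1 * V + r * deriv (deriv f) r) * F - r * V * V) * r - F ^ 2)
      * (lam * (r * V - F)) * V ^ 2 by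
    nlinarith [hX, mul_pos (mul_pos hl hW) (mul_pos hV0 hV0)]
  have hid : (((1 * V + r * deriv (deriv f) r) * F - r * V * V) * r - F ^ 2)
      * (lam * (r * V - F)) * V ^ 2
      = F ^ 3 * (Q^2*(1+V^2)^2 - (lam*V^2*(Q-1)*(1 + Q^2 - Q) + c*V^2*(Q-1)*Q*(1+V^2))) := by
    linear_combination (F*r*V^2) * (hv'eq hn hlam hf hr)
      + (F^2*(-Q - 2*V^2*Q + 2*V^2*lam - 2*V^2*lam*Q + V^2*lam*Q^2 - V^2*c + V^2*c*Q - V^4*Q - V^4*c + V^4*c*Q)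
         + r*(-V*F - 2*V^3*F - 2*V^3*F*lam + V^3*F*lam*Q + V^3*F*c - V^5*F + V^5*F*c) + r^2*V^4*lam) * hQF
  rw [hid]
  nlinarith [mul_nonneg (mul_nonneg (le_of_lt hF) (sq_nonneg F)) (sub_nonneg.2 hkey)]


theorem imcf_growth_rate' (hn : 2 ≤ n)
    (hlam : 1 / ((n : ℝ) - 1) < lam) (hmu : mu < 0)
    (hf : IsIMCFSolGlobal n lam mu f) :
    Filter.Tendsto (fun r => r * deriv f r / f r) Filter.atTop
      (nhds (lam * ((n : ℝ) - 1) / (lam * ((n : ℝ) - 1) - 1))) := by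
  have hc := c_gt_one hn hlam
  have hl := lam_pos hn hlam
  have hc1 : (0:ℝ) < lam * ((n:ℝ)-1) - 1 := by linarith
  set α := lam * ((n:ℝ)-1) / (lam * ((n:ℝ)-1) - 1) with hα
  have ha1 : 1 < α := by rw [hα, lt_div_iff₀ hc1]; linarith
  rw [Metric.tendsto_atTop]
  intro ε hε
  set ε' := min (ε/2) ((α-1)/2) with hε'def
  have hε'pos : 0 < ε' := lt_min (by linarith) (by linarith)
  have hε'lt : ε' < ε := lt_of_le_of_lt (min_le_left _ _) (by linarith)
  have hε'a : ε' ≤ (α-1)/2 := min_le_right _ _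
  -- thresholds for V
  set T₁ := ((1 + lam) + (α + lam*(α-1))/ε') / (lam * ((n:ℝ)-1) - 1) with hT₁
  set T₂ := lam*(α-1)*(α^2 - α + 1) / ((lam * ((n:ℝ)-1) - 1) * ε') with hT₂
  have hnum1 : 0 ≤ (1 + lam) + (α + lam*(α-1))/ε' := by
    have h1 : 0 ≤ α + lam*(α-1) := by nlinarith
    have h2 : 0 ≤ (α + lam*(α-1))/ε' := div_nonneg h1 (le_of_lt hε'pos)
    linarith
  have hnum2 : 0 ≤ lam*(α-1)*(α^2 - α + 1) := by
    have g1 : (0:ℝ) < α - 1 := by linarith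
    have g2 : (0:ℝ) < α^2 - α + 1 := by nlinarith
    positivity
  have hT₁0 : 0 ≤ T₁ := div_nonneg hnum1 (le_of_lt hc1)
  have hT₂0 : 0 ≤ T₂ := div_nonneg hnum2 (by positivity)
  set Vb := max 1 (T₁ + T₂) with hVb
  have hVb1 : (1:ℝ) ≤ Vb := le_max_left _ _
  have hVcond1 : ∀ x : ℝ, Vb ≤ x →
      (1 + lam) + (α + lam*(α-1))/ε' ≤ (lam * ((n:ℝ)-1) - 1) * x^2 := by
    intro x hx
    have hx1 : 1 ≤ x := le_trans hVb1 hx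
    have hxT : T₁ ≤ x^2 := by nlinarith [le_trans (le_max_right 1 (T₁+T₂)) hx]
    have : (lam * ((n:ℝ)-1) - 1) * T₁ = (1 + lam) + (α + lam*(α-1))/ε' := by
      rw [hT₁]; field_simp
    nlinarith [mul_le_mul_of_nonneg_left hxT (le_of_lt hc1)]
  have hVcond2 : ∀ x : ℝ, Vb ≤ x →
      lam*(α-1)*(α^2 - α + 1) ≤ (lam * ((n:ℝ)-1) - 1) * ε' * x^2 := by
    intro x hx
    have hx1 : 1 ≤ x := le_trans hVb1 hx
    have hxT : T₂ ≤ x^2 := by nlinarith [le_trans (le_max_right 1 (T₁+T₂)) hx]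
    have : (lam * ((n:ℝ)-1) - 1) * ε' * T₂ = lam*(α-1)*(α^2 - α + 1) := by
      rw [hT₂]; field_simp
    nlinarith [mul_le_mul_of_nonneg_left hxT (by positivity : (0:ℝ) ≤ (lam * ((n:ℝ)-1) - 1) * ε')]
  -- the eventual region
  obtain ⟨R₀, hR₀⟩ := eventually_atTop.1
    (((eventually_ge_atTop (1:ℝ)).and ((f_tendsto hn hlam hf).eventually_gt_atTop 0)).and
      ((v_tendsto hn hlam hf).eventually_ge_atTop Vb))
  set R₁ := max R₀ 1 with hR₁
  have hreg : ∀ r : ℝ, R₁ ≤ r → (1 ≤ r ∧ 0 < f r) ∧ Vb ≤ deriv f r := by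
    intro r hr
    exact hR₀ r (le_trans (le_max_left _ _) hr)
  have hR₁pos : (0:ℝ) < R₁ := lt_of_lt_of_le one_pos (le_max_right _ _)
  -- Step 1: q cannot stay above α + ε'
  have step1 : ∃ r₁, R₁ ≤ r₁ ∧ r₁ * deriv f r₁ < (α + ε') * f r₁ := by
    by_contra hcon
    push_neg at hcon
    -- q + log is antitone on [R₁, ∞)
    have hanti : AntitoneOn (fun x => x * deriv f x / f x + Real.log x) (Ici R₁) := by
      apply antitoneOn_of_deriv_nonpos (convex_Ici R₁)
      · intro x hx
        have hxpos : 0 < x := lt_of_lt_of_le hR₁pos hx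
        have hfx : 0 < f x := (hreg x hx).1.2
        exact ((q_hasDeriv hf hxpos (ne_of_gt hfx)).add
          (Real.hasDerivAt_log (ne_of_gt hxpos))).continuousAt.continuousWithinAt
      · intro x hx
        rw [interior_Ici] at hx
        have hxpos : 0 < x := lt_trans hR₁pos hx
        have hfx : 0 < f x := (hreg x (le_of_lt hx)).1.2
        exact ((q_hasDeriv hf hxpos (ne_of_gt hfx)).add
          (Real.hasDerivAt_log (ne_of_gt hxpos))).differentiableAt.differentiableWithinAt
      · intro x hx
        rw [interior_Ici] at hx
        have hxpos : 0 < x := lt_trans hR₁pos hx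
        have hfx : 0 < f x := (hreg x (le_of_lt hx)).1.2
        have hVx : Vb ≤ deriv f x := (hreg x (le_of_lt hx)).2
        have hVpos : 0 < deriv f x := v_pos hn hlam hf hxpos
        rw [show deriv (fun x => x * deriv f x / f x + Real.log x) x = _ from ((q_hasDeriv hf hxpos (ne_of_gt hfx)).add
          (Real.hasDerivAt_log (ne_of_gt hxpos))).deriv]
        have hup := q_deriv_upper hn hlam hf hxpos hε'pos hfx (hcon x (le_of_lt hx))
          (hVcond1 (deriv f x) hVx)
        rw [(q_hasDeriv hf hxpos (ne_of_gt hfx)).deriv] at hup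
        -- -(v/f) + 1/x ≤ 0 since v/f ≥ (α+ε')/x ≥ 1/x
        have h2 : (α + ε') * f x ≤ x * deriv f x := hcon x (le_of_lt hx)
        have h3 : 1 / x ≤ deriv f x / f x := by
          rw [div_le_div_iff₀ hxpos hfx]
          nlinarith
        have h4 : (0:ℝ) < x⁻¹ := by positivity
        rw [← one_div]
        linarith
    -- evaluate far out to get a contradiction
    set q₁ := R₁ * deriv f R₁ / f R₁ with hq₁
    have hq₁pos : 0 < q₁ := by
      have hfx : 0 < f R₁ := (hreg R₁ (le_refl R₁)).1.2
      have hVpos : 0 < deriv f R₁ := v_pos hn hlam hf hR₁pos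
      positivity
    set r₂ := R₁ * Real.exp (q₁ + 1) with hr₂
    have hr₂ge : R₁ ≤ r₂ := by
      rw [hr₂]
      nlinarith [Real.one_le_exp (by positivity : (0:ℝ) ≤ q₁ + 1)]
    have hmono := hanti (mem_Ici.2 (le_refl R₁)) (mem_Ici.2 hr₂ge) hr₂ge
    simp only at hmono
    have hlog : Real.log r₂ = Real.log R₁ + (q₁ + 1) := by
      rw [hr₂, Real.log_mul (ne_of_gt hR₁pos) (Real.exp_ne_zero _), Real.log_exp]
    rw [hlog] at hmono
    -- so q r₂ ≤ -1 but q r₂ ≥ α + ε' > 0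
    have hfr₂ : 0 < f r₂ := (hreg r₂ hr₂ge).1.2
    have h5 : (α + ε') * f r₂ ≤ r₂ * deriv f r₂ := hcon r₂ hr₂ge
    have h6 : α + ε' ≤ r₂ * deriv f r₂ / f r₂ := by
      rw [le_div_iff₀ hfr₂]; exact h5
    linarith
  obtain ⟨r₁, hr₁ge, hr₁lt⟩ := step1
  have hr₁pos : 0 < r₁ := lt_of_lt_of_le hR₁pos hr₁ge
  -- Step 2: once below α + ε', stay below (upper barrier)
  have hbar1 : ∀ t, r₁ ≤ t → t * deriv f t < (α + ε') * f t := by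
    intro t ht
    have h := no_downcross (g := fun x => (α + ε') * f x - x * deriv f x) (s := r₁) (t := t)
      (fun x hx => by
        have hxpos : 0 < x := lt_of_lt_of_le hr₁pos hx.1
        exact (barU_hasDeriv hf (α + ε') hxpos).differentiableAt)
      (fun x hx hx0 => by
        have hxpos : 0 < x := lt_of_lt_of_le hr₁pos hx.1
        have hxR : R₁ ≤ x := le_trans hr₁ge hx.1
        have hfx : 0 < f x := (hreg x hxR).1.2
        have hVx : Vb ≤ deriv f x := (hreg x hxR).2
        have hVpos : 0 < deriv f x := v_pos hn hlam hf hxpos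
        have hzero : (α + ε') * f x = x * deriv f x := by linarith [sub_eq_zero.1 hx0]
        have hup := q_deriv_upper hn hlam hf hxpos hε'pos hfx (le_of_eq hzero)
          (hVcond1 (deriv f x) hVx)
        rw [(q_hasDeriv hf hxpos (ne_of_gt hfx)).deriv] at hup
        rw [(barU_hasDeriv hf (α + ε') hxpos).deriv]
        -- from hup : num/F² ≤ -(V/F), deduce the numerator inequality
        have h2 : (1 * deriv f x + x * deriv (deriv f) x) * f x - x * deriv f x * deriv f x
            ≤ -(deriv f x / f x) * f x ^ 2 := by
          rw [← div_le_iff₀ (by positivity : (0:ℝ) < f x ^ 2)]; exact hup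
        have h3 : -(deriv f x / f x) * f x ^ 2 = -(deriv f x) * f x := by field_simp
        rw [h3] at h2
        -- goal : 0 < (α+ε')·v - (1·v + x·v'')
        nlinarith [mul_pos hVpos hfx])
      (by simpa using sub_pos.2 hr₁lt) t ⟨ht, le_refl t⟩
    linarith
  -- Step 3: q cannot stay below α - ε'
  have hαε : 1 < α - ε' := by linarith
  have step3 : ∃ r₂, r₁ ≤ r₂ ∧ (α - ε') * f r₂ < r₂ * deriv f r₂ := by
    by_contra hcon
    push_neg at hcon
    have hmono : MonotoneOn (fun x => x * deriv f x / f x - Real.log x) (Ici r₁) := by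
      apply monotoneOn_of_deriv_nonneg (convex_Ici r₁)
      · intro x hx
        have hxpos : 0 < x := lt_of_lt_of_le hr₁pos hx
        have hfx : 0 < f x := (hreg x (le_trans hr₁ge hx)).1.2
        exact ((q_hasDeriv hf hxpos (ne_of_gt hfx)).sub
          (Real.hasDerivAt_log (ne_of_gt hxpos))).continuousAt.continuousWithinAt
      · intro x hx
        rw [interior_Ici] at hx
        have hxpos : 0 < x := lt_trans hr₁pos hx
        have hfx : 0 < f x := (hreg x (le_trans hr₁ge (le_of_lt hx))).1.2
        exact ((q_hasDeriv hf hxpos (ne_of_gt hfx)).sub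
          (Real.hasDerivAt_log (ne_of_gt hxpos))).differentiableAt.differentiableWithinAt
      · intro x hx
        rw [interior_Ici] at hx
        have hxpos : 0 < x := lt_trans hr₁pos hx
        have hxR : R₁ ≤ x := le_trans hr₁ge (le_of_lt hx)
        have hfx : 0 < f x := (hreg x hxR).1.2
        rw [show deriv (fun x => x * deriv f x / f x - Real.log x) x = _ from ((q_hasDeriv hf hxpos (ne_of_gt hfx)).sub
          (Real.hasDerivAt_log (ne_of_gt hxpos))).deriv]
        have hlow := q_deriv_lower hn hlam hf hxpos hε'pos hfx (hcon x (le_of_lt hx))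
          (hVcond2 (deriv f x) (hreg x hxR).2)
        rw [(q_hasDeriv hf hxpos (ne_of_gt hfx)).deriv] at hlow
        rw [← one_div]
        linarith
    set q₁ := r₁ * deriv f r₁ / f r₁ with hq₁
    have hq₁pos : 0 < q₁ := by
      have hfx : 0 < f r₁ := (hreg r₁ hr₁ge).1.2
      have hVpos : 0 < deriv f r₁ := v_pos hn hlam hf hr₁pos
      positivity
    set t := r₁ * Real.exp α with htdef
    have htge : r₁ ≤ t := by
      rw [htdef]
      nlinarith [Real.one_le_exp (by positivity : (0:ℝ) ≤ α)]
    have hm := hmono (mem_Ici.2 (le_refl r₁)) (mem_Ici.2 htge) htge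
    simp only at hm
    have hlog : Real.log t = Real.log r₁ + α := by
      rw [htdef, Real.log_mul (ne_of_gt hr₁pos) (Real.exp_ne_zero _), Real.log_exp]
    rw [hlog] at hm
    have hft : 0 < f t := (hreg t (le_trans hr₁ge htge)).1.2
    have h6 : t * deriv f t / f t ≤ α - ε' := by
      rw [div_le_iff₀ hft]; exact hcon t htge
    linarith
  obtain ⟨r₂, hr₂ge, hr₂lt⟩ := step3
  have hr₂pos : 0 < r₂ := lt_of_lt_of_le hr₁pos hr₂ge
  -- Step 4: once above α - ε', stay above (lower barrier)
  have hbar2 : ∀ t, r₂ ≤ t → (α - ε') * f t < t * deriv f t := by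
    intro t ht
    have h := no_downcross (g := fun x => x * deriv f x - (α - ε') * f x) (s := r₂) (t := t)
      (fun x hx => by
        have hxpos : 0 < x := lt_of_lt_of_le hr₂pos hx.1
        exact (barL_hasDeriv hf (α - ε') hxpos).differentiableAt)
      (fun x hx hx0 => by
        have hxpos : 0 < x := lt_of_lt_of_le hr₂pos hx.1
        have hxR : R₁ ≤ x := le_trans hr₁ge (le_trans hr₂ge hx.1)
        have hfx : 0 < f x := (hreg x hxR).1.2
        have hVpos : 0 < deriv f x := v_pos hn hlam hf hxpos
        have hzero : x * deriv f x = (α - ε') * f x := by linarith [sub_eq_zero.1 hx0]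
        have hlow := q_deriv_lower hn hlam hf hxpos hε'pos hfx (le_of_eq hzero)
          (hVcond2 (deriv f x) (hreg x hxR).2)
        rw [(q_hasDeriv hf hxpos (ne_of_gt hfx)).deriv] at hlow
        rw [(barL_hasDeriv hf (α - ε') hxpos).deriv]
        have h2 : 1 * f x ^ 2 ≤ ((1 * deriv f x + x * deriv (deriv f) x) * f x
            - x * deriv f x * deriv f x) * x := (div_le_div_iff₀ hxpos (by positivity)).1 hlow
        have key : (1 * deriv f x + x * deriv (deriv f) x - (α - ε') * deriv f x) * (x * f x)
            = ((1 * deriv f x + x * deriv (deriv f) x) * f x - x * deriv f x * deriv f x) * x := by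
          linear_combination (deriv f x * x) * hzero
        have h3 : 0 < (1 * deriv f x + x * deriv (deriv f) x - (α - ε') * deriv f x) * (x * f x) := by
          rw [key]; nlinarith [sq_nonneg (f x)]
        nlinarith [h3, mul_pos hxpos hfx])
      (by simpa using sub_pos.2 hr₂lt) t ⟨ht, le_refl t⟩
    linarith
  -- Conclusion
  refine ⟨r₂, fun t ht => ?_⟩
  have hfx : 0 < f t := (hreg t (le_trans hr₁ge (le_trans hr₂ge ht))).1.2
  have hup : t * deriv f t / f t < α + ε' := by
    rw [div_lt_iff₀ hfx]
    exact lt_of_lt_of_le (hbar1 t (le_trans hr₂ge ht)) (le_of_eq (by ring))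
  have hdown : α - ε' < t * deriv f t / f t := by
    rw [lt_div_iff₀ hfx]
    exact lt_of_le_of_lt (le_of_eq (by ring)) (hbar2 t ht)
  rw [Real.dist_eq, abs_lt]
  constructor <;> linarith

end Basics

/-- Theorem 1.2: `lim_{r→∞} r f'(r)/f(r) = λ(n−1)/(λ(n−1)−1)`. -/
theorem imcf_growth_rate (n : ℕ) (hn : 2 ≤ n)
    (lam mu : ℝ) (hlam : 1 / ((n : ℝ) - 1) < lam) (hmu : mu < 0)
    (f : ℝ → ℝ) (hf : IsIMCFSolGlobal n lam mu f) :
    Filter.Tendsto (fun r => r * deriv f r / f r) Filter.atTop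
      (nhds (lam * ((n : ℝ) - 1) / (lam * ((n : ℝ) - 1) - 1))) :=
  imcf_growth_rate' hn hlam hmu hf
end
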